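/- arXiv:2509.18012 — 9 statements merged into one kernel-verified Lean document; each statement's English description precedes it below -/
import Mathlib

section
/- Let G be an n-vertex graph whose edges are coloured with r colours, and suppose the minimum degree δ(G) satisfies δ(G) ≤ rn/(r+1). Then G contains a monochromatic matching with at least δ(G)/r edges. -/
open SimpleGraph

set_option linter.unusedSectionVars false
set_option maxHeartbeats 1000000

open Finset

namespace StmtAux

variable {V : Type*} [Fintype V] [DecidableEq V]


variable {V : Type*} [Fintype V] [DecidableEq V]

/-- vertices of an edge, as a Finset -/
def everts (e : Sym2 V) : Finset V := univ.filter (· ∈ e)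

@[simp] lemma mem_everts {e : Sym2 V} {x : V} : x ∈ everts e ↔ x ∈ e := by
  simp [everts]

lemma everts_mk (a b : V) : everts (s(a, b)) = {a, b} := by
  ext x; simp [Sym2.mem_iff]

lemma card_everts_le (e : Sym2 V) : (everts e).card ≤ 2 := by
  induction e with
  | _ a b =>
    rw [everts_mk]
    exact (card_insert_le _ _).trans (by simp)

/-- covered vertices of a set of edges -/
def cov (M : Finset (Sym2 V)) : Finset V := univ.filter (fun v => ∃ e ∈ M, v ∈ e)

@[simp] lemma mem_cov {M : Finset (Sym2 V)} {x : V} : x ∈ cov M ↔ ∃ e ∈ M, x ∈ e := by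
  simp [cov]

lemma cov_mono {M N : Finset (Sym2 V)} (h : M ⊆ N) : cov M ⊆ cov N := by
  intro x hx; rw [mem_cov] at *; obtain ⟨e, he, hxe⟩ := hx; exact ⟨e, h he, hxe⟩

@[simp] lemma cov_empty : cov (∅ : Finset (Sym2 V)) = ∅ := by ext x; simp

lemma cov_union (M N : Finset (Sym2 V)) : cov (M ∪ N) = cov M ∪ cov N := by
  ext x; simp [mem_cov, or_and_right, exists_or]

lemma cov_insert (e : Sym2 V) (M : Finset (Sym2 V)) :
    cov (insert e M) = everts e ∪ cov M := by
  ext x; simp [mem_cov, or_and_right, exists_or]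

lemma cov_eq_biUnion (M : Finset (Sym2 V)) : cov M = M.biUnion everts := by
  ext x; simp [mem_cov]

lemma card_cov_le (M : Finset (Sym2 V)) : (cov M).card ≤ 2 * M.card := by
  rw [cov_eq_biUnion]
  calc (M.biUnion everts).card ≤ ∑ e ∈ M, (everts e).card := card_biUnion_le
    _ ≤ ∑ _e ∈ M, 2 := sum_le_sum (fun e _ => card_everts_le e)
    _ = 2 * M.card := by rw [sum_const, smul_eq_mul, mul_comm]

/-- a matching: set of non-loop edges, pairwise vertex-disjoint -/
def IsM (M : Finset (Sym2 V)) : Prop :=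
  (∀ e ∈ M, ¬ e.IsDiag) ∧ ∀ e ∈ M, ∀ f ∈ M, ∀ v : V, v ∈ e → v ∈ f → e = f

lemma IsM.subset {M N : Finset (Sym2 V)} (h : N ⊆ M) (hM : IsM M) : IsM N :=
  ⟨fun e he => hM.1 e (h he), fun e he f hf v hv hv' => hM.2 e (h he) f (h hf) v hv hv'⟩

lemma IsM.empty : IsM (∅ : Finset (Sym2 V)) := ⟨by simp, by simp⟩

/-- inserting an edge whose vertices are uncovered -/
lemma IsM.insert {M : Finset (Sym2 V)} (hM : IsM M) {e : Sym2 V} (hd : ¬ e.IsDiag)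
    (hfree : ∀ v ∈ e, v ∉ cov M) : IsM (insert e M) := by
  constructor
  · intro f hf
    rcases mem_insert.mp hf with rfl | hf
    · exact hd
    · exact hM.1 f hf
  · intro f hf g hg v hvf hvg
    rcases mem_insert.mp hf with hf1 | hf2
    · rcases mem_insert.mp hg with hg1 | hg2
      · rw [hf1, hg1]
      · subst hf1
        exact ((hfree v hvf) (mem_cov.mpr ⟨g, hg2, hvg⟩)).elim
    · rcases mem_insert.mp hg with hg1 | hg2
      · subst hg1
        exact ((hfree v hvg) (mem_cov.mpr ⟨f, hf2, hvf⟩)).elim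
      · exact hM.2 f hf2 g hg2 v hvf hvg

lemma not_mem_of_free {M : Finset (Sym2 V)} {e : Sym2 V} {v : V} (hv : v ∈ e)
    (hfree : v ∉ cov M) : e ∉ M := fun he => hfree (mem_cov.mpr ⟨e, he, hv⟩)

lemma card_insert_free {M : Finset (Sym2 V)} {e : Sym2 V} {v : V} (hv : v ∈ e)
    (hfree : v ∉ cov M) : (insert e M).card = M.card + 1 :=
  card_insert_of_notMem (not_mem_of_free hv hfree)

/-- removing an edge from a matching removes exactly its vertices from the cover -/
lemma cov_erase {M : Finset (Sym2 V)} (hM : IsM M) {e : Sym2 V} (he : e ∈ M) :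
    cov (M.erase e) = cov M \ everts e := by
  ext x
  simp only [mem_cov, mem_sdiff, mem_everts, mem_erase]
  constructor
  · rintro ⟨f, ⟨hfe, hf⟩, hxf⟩
    exact ⟨⟨f, hf, hxf⟩, fun hxe => hfe (hM.2 f hf e he x hxf hxe)⟩
  · rintro ⟨⟨f, hf, hxf⟩, hxe⟩
    refine ⟨f, ⟨fun h => hxe ?_, hf⟩, hxf⟩
    subst h; exact hxf


lemma altFlip (n : ℕ) : ∀ (M N : Finset (Sym2 V)), M.card + N.card ≤ n →
    IsM M → IsM N → ∀ w : V, w ∈ cov M → w ∉ cov N →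
    (∃ N' z, IsM N' ∧ N' ⊆ M ∪ N ∧ N'.card = N.card + 1 ∧
        z ∉ cov N ∧ z ≠ w ∧ cov N' = cov N ∪ {w, z}) ∨
    (∃ M' z, IsM M' ∧ M' ⊆ M ∪ N ∧ M'.card = M.card ∧
        z ∈ cov N ∧ z ∉ cov M ∧ cov M' = (cov M \ {w}) ∪ {z}) := by
  induction n with
  | zero =>
    intro M N hn hM hN w hwM hwN
    have : M = ∅ := card_eq_zero.mp (by omega)
    subst this; simp at hwM
  | succ n IH =>
    intro M N hn hM hN w hwM hwN
    obtain ⟨e, he, hwe⟩ := mem_cov.mp hwM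
    obtain ⟨a, rfl⟩ := Sym2.mem_iff_exists.mp hwe
    have haw : w ≠ a := by
      have := hM.1 _ he; rwa [Sym2.mk_isDiag_iff] at this
    have haM : a ∈ cov M := mem_cov.mpr ⟨_, he, Sym2.mem_mk_right w a⟩
    by_cases haN : a ∈ cov N
    · -- a is N-covered: get f = s(a,b) ∈ N
      obtain ⟨f, hf, haf⟩ := mem_cov.mp haN
      obtain ⟨b, rfl⟩ := Sym2.mem_iff_exists.mp haf
      have hab : a ≠ b := by
        have := hN.1 _ hf; rwa [Sym2.mk_isDiag_iff] at this
      have hbN : b ∈ cov N := mem_cov.mpr ⟨_, hf, Sym2.mem_mk_right a b⟩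
      have hbw : b ≠ w := fun h => hwN (h ▸ hbN)
      have covM1 : cov (M.erase s(w,a)) = cov M \ {w, a} := by
        rw [cov_erase hM he, everts_mk]
      have covN1 : cov (N.erase s(a,b)) = cov N \ {a, b} := by
        rw [cov_erase hN hf, everts_mk]
      have hwM1 : w ∉ cov (M.erase s(w,a)) := by rw [covM1]; simp
      have haM1 : a ∉ cov (M.erase s(w,a)) := by rw [covM1]; simp
      have haN1 : a ∉ cov (N.erase s(a,b)) := by rw [covN1]; simp
      have hwN1 : w ∉ cov (N.erase s(a,b)) := fun h => hwN (cov_mono (erase_subset _ _) h)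
      have hM1 : IsM (M.erase s(w,a)) := hM.subset (erase_subset _ _)
      have h1M : 1 ≤ M.card := card_pos.mpr ⟨_, he⟩
      have h1N : 1 ≤ N.card := card_pos.mpr ⟨_, hf⟩
      by_cases hbM : b ∈ cov M
      · -- recurse
        have hbM1 : b ∈ cov (M.erase s(w,a)) := by
          rw [covM1, mem_sdiff]
          refine ⟨hbM, ?_⟩
          simp only [mem_insert, mem_singleton]
          push_neg
          exact ⟨hbw, fun h => hab h.symm⟩
        have hbN1 : b ∉ cov (N.erase s(a,b)) := by rw [covN1]; simp
        have hN1 : IsM (N.erase s(a,b)) := hN.subset (erase_subset _ _)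
        have hcard : (M.erase s(w,a)).card + (N.erase s(a,b)).card ≤ n := by
          rw [card_erase_of_mem he, card_erase_of_mem hf]; omega
        have hsub : M.erase s(w,a) ∪ N.erase s(a,b) ⊆ M ∪ N :=
          union_subset_union (erase_subset _ _) (erase_subset _ _)
        rcases IH _ _ hcard hM1 hN1 b hbM1 hbN1 with
          ⟨N₁, z₁, hN₁, hN₁sub, hN₁card, hz₁N, hz₁b, hcovN₁⟩ |
          ⟨M₁, z₁, hM₁, hM₁sub, hM₁card, hz₁N, hz₁M, hcovM₁⟩
        · -- lift augmenting case
          left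
          have hz₁union : z₁ ∈ cov (M.erase s(w,a)) ∪ cov (N.erase s(a,b)) := by
            rw [← cov_union]
            refine cov_mono hN₁sub ?_
            rw [hcovN₁]
            exact mem_union_right _ (by simp)
          have hz₁w : z₁ ≠ w := by
            rintro rfl
            rcases mem_union.mp hz₁union with h | h
            exacts [hwM1 h, hwN1 h]
          have hz₁a : z₁ ≠ a := by
            rintro rfl
            rcases mem_union.mp hz₁union with h | h
            exacts [haM1 h, haN1 h]
          have hwN₁ : w ∉ cov N₁ := by
            rw [hcovN₁]
            intro h
            rcases mem_union.mp h with h | h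
            · exact hwN1 h
            · rcases mem_insert.mp h with h | h
              · exact hbw h.symm
              · exact hz₁w (mem_singleton.mp h).symm
          have haN₁ : a ∉ cov N₁ := by
            rw [hcovN₁]
            intro h
            rcases mem_union.mp h with h | h
            · exact haN1 h
            · rcases mem_insert.mp h with h | h
              · exact hab h
              · exact hz₁a (mem_singleton.mp h).symm
          refine ⟨insert s(w,a) N₁, z₁, ?_, ?_, ?_, ?_, hz₁w, ?_⟩
          · refine hN₁.insert (hM.1 _ he) ?_
            intro v hv
            rcases Sym2.mem_iff.mp hv with rfl | rfl
            · exact hwN₁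
            · exact haN₁
          · intro x hx
            rcases mem_insert.mp hx with rfl | hx
            · exact mem_union_left _ he
            · exact hsub (hN₁sub hx)
          · rw [card_insert_free (Sym2.mem_mk_left w a) hwN₁, hN₁card,
              card_erase_of_mem hf]
            omega
          · intro h
            apply hz₁N
            rw [covN1, mem_sdiff]
            refine ⟨h, ?_⟩
            simp only [mem_insert, mem_singleton]
            push_neg
            exact ⟨hz₁a, hz₁b⟩
          · rw [cov_insert, everts_mk, hcovN₁, covN1]
            ext x
            simp only [mem_union, mem_sdiff, mem_insert, mem_singleton]
            constructor
            · rintro ((rfl | rfl) | ⟨h1, _⟩ | rfl | rfl)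
              · right; left; rfl
              · left; exact haN
              · left; exact h1
              · left; exact hbN
              · right; right; rfl
            · rintro (h | rfl | rfl)
              · by_cases hxa : x = a
                · left; right; exact hxa
                · by_cases hxb : x = b
                  · right; right; left; exact hxb
                  · right; left
                    exact ⟨h, fun hc => hc.elim hxa hxb⟩
              · left; left; rfl
              · right; right; right; rfl
        · -- lift flip case
          right
          have hz₁a : z₁ ≠ a := fun h => haN1 (h ▸ hz₁N)
          have hz₁w : z₁ ≠ w := fun h => hwN1 (h ▸ hz₁N)
          have hz₁Mfull : z₁ ∉ cov M := by
            intro h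
            apply hz₁M
            rw [covM1, mem_sdiff]
            refine ⟨h, ?_⟩
            simp only [mem_insert, mem_singleton]
            push_neg
            exact ⟨hz₁w, hz₁a⟩
          have haM₁ : a ∉ cov M₁ := by
            rw [hcovM₁]
            intro h
            rcases mem_union.mp h with h | h
            · exact haM1 (mem_sdiff.mp h).1
            · exact hz₁a (mem_singleton.mp h).symm
          have hbM₁ : b ∉ cov M₁ := by
            rw [hcovM₁]
            intro h
            rcases mem_union.mp h with h | h
            · exact (mem_sdiff.mp h).2 (mem_singleton.mpr rfl)
            · exact hbN1 ((mem_singleton.mp h) ▸ hz₁N)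
          refine ⟨insert s(a,b) M₁, z₁, ?_, ?_, ?_, ?_, hz₁Mfull, ?_⟩
          · refine hM₁.insert (hN.1 _ hf) ?_
            intro v hv
            rcases Sym2.mem_iff.mp hv with rfl | rfl
            · exact haM₁
            · exact hbM₁
          · intro x hx
            rcases mem_insert.mp hx with rfl | hx
            · exact mem_union_right _ hf
            · exact hsub (hM₁sub hx)
          · rw [card_insert_free (Sym2.mem_mk_left a b) haM₁, hM₁card,
              card_erase_of_mem he]
            omega
          · exact cov_mono (erase_subset _ _) hz₁N
          · rw [cov_insert, everts_mk, hcovM₁, covM1]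
            ext x
            simp only [mem_union, mem_sdiff, mem_insert, mem_singleton]
            constructor
            · rintro ((rfl | rfl) | ⟨⟨h1, h2⟩, _⟩ | rfl)
              · left; exact ⟨haM, fun h => haw h.symm⟩
              · left; exact ⟨hbM, hbw⟩
              · left; exact ⟨h1, fun h => h2 (Or.inl h)⟩
              · right; rfl
            · rintro (⟨h1, h2⟩ | rfl)
              · by_cases hxa : x = a
                · left; left; exact hxa
                · by_cases hxb : x = b
                  · left; right; exact hxb
                  · right; left
                    exact ⟨⟨h1, fun h => h.elim h2 hxa⟩, hxb⟩
              · right; right; rfl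
      · -- b not M-covered: flip directly along path w-a-b
        right
        have hbM1 : b ∉ cov (M.erase s(w,a)) :=
          fun h => hbM (cov_mono (erase_subset _ _) h)
        refine ⟨insert s(a,b) (M.erase s(w,a)), b, ?_, ?_, ?_, hbN, hbM, ?_⟩
        · refine hM1.insert (hN.1 _ hf) ?_
          intro v hv
          rcases Sym2.mem_iff.mp hv with rfl | rfl
          · exact haM1
          · exact hbM1
        · intro x hx
          rcases mem_insert.mp hx with rfl | hx
          · exact mem_union_right _ hf
          · exact mem_union_left _ (erase_subset _ _ hx)
        · rw [card_insert_free (Sym2.mem_mk_left a b) haM1, card_erase_of_mem he]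
          omega
        · rw [cov_insert, everts_mk, covM1]
          ext x
          simp only [mem_union, mem_sdiff, mem_insert, mem_singleton]
          constructor
          · rintro ((rfl | rfl) | ⟨h1, h2⟩)
            · left; exact ⟨haM, fun h => haw h.symm⟩
            · right; rfl
            · left; exact ⟨h1, fun h => h2 (Or.inl h)⟩
          · rintro (⟨h1, h2⟩ | rfl)
            · by_cases hxa : x = a
              · left; left; exact hxa
              · right; exact ⟨h1, fun h => h.elim h2 hxa⟩
            · left; right; rfl
    · -- a not N-covered: augment N with s(w,a)
      left
      have hwa : ∀ v ∈ s(w,a), v ∉ cov N := by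
        intro v hv
        rcases Sym2.mem_iff.mp hv with rfl | rfl
        · exact hwN
        · exact haN
      refine ⟨insert s(w,a) N, a, hN.insert (hM.1 _ he) hwa, ?_, ?_, haN,
        fun h => haw h.symm, ?_⟩
      · intro x hx
        rcases mem_insert.mp hx with rfl | hx
        · exact mem_union_left _ he
        · exact mem_union_right _ hx
      · exact card_insert_free (Sym2.mem_mk_left w a) hwN
      · rw [cov_insert, everts_mk]
        ext x
        simp only [mem_union, mem_insert, mem_singleton]
        constructor
        · rintro ((rfl | rfl) | h)
          · right; left; rfl
          · right; right; rfl
          · left; exact h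
        · rintro (h | rfl | rfl)
          · right; exact h
          · left; left; rfl
          · left; right; rfl

/-- exists a walk of length n from x to y using edges of F -/
def RN (F : Finset (Sym2 V)) : ℕ → V → V → Prop
  | 0, x, y => x = y
  | n+1, x, y => ∃ z, s(x, z) ∈ F ∧ RN F n z y

lemma RN_zero {F : Finset (Sym2 V)} {x y : V} : RN F 0 x y ↔ x = y := Iff.rfl

lemma RN_succ {F : Finset (Sym2 V)} {n : ℕ} {x y : V} :
    RN F (n+1) x y ↔ ∃ z, s(x, z) ∈ F ∧ RN F n z y := Iff.rfl

lemma RN_append (F : Finset (Sym2 V)) : ∀ (n : ℕ) (x y z : V),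
    RN F n x y → s(y,z) ∈ F → RN F (n+1) x z := by
  intro n
  induction n with
  | zero =>
    intro x y z h hz
    exact ⟨z, (RN_zero.mp h) ▸ hz, rfl⟩
  | succ n IH =>
    intro x y z h hz
    obtain ⟨u, hu, h'⟩ := RN_succ.mp h
    exact RN_succ.mpr ⟨u, hu, IH u y z h' hz⟩

lemma RN_symm (F : Finset (Sym2 V)) : ∀ (n : ℕ) (x y : V),
    RN F n x y → ∃ m, RN F m y x := by
  intro n
  induction n with
  | zero => intro x y h; exact ⟨0, RN_zero.mpr (RN_zero.mp h).symm⟩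
  | succ n IH =>
    intro x y h
    obtain ⟨u, hu, h'⟩ := RN_succ.mp h
    obtain ⟨m, hm⟩ := IH u y h'
    have hux : s(u, x) ∈ F := by rwa [Sym2.eq_swap] at hu
    exact ⟨m + 1, RN_append F m y u x hm hux⟩

lemma RN_trans (F : Finset (Sym2 V)) : ∀ (m n : ℕ) (x y z : V),
    RN F m x y → RN F n y z → ∃ k, RN F k x z := by
  intro m
  induction m with
  | zero => intro n x y z h1 h2; exact ⟨n, (RN_zero.mp h1) ▸ h2⟩
  | succ m IH =>
    intro n x y z h1 h2
    obtain ⟨u, hu, h'⟩ := RN_succ.mp h1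
    obtain ⟨k, hk⟩ := IH n u y z h' h2
    exact ⟨k + 1, RN_succ.mpr ⟨u, hu, hk⟩⟩

open scoped Classical in
/-- connected component of x inside U w.r.t. edges F -/
noncomputable def comp (U : Finset V) (F : Finset (Sym2 V)) (x : V) : Finset V :=
  U.filter (fun y => ∃ n, RN F n x y)

lemma mem_comp {U : Finset V} {F : Finset (Sym2 V)} {x y : V} :
    y ∈ comp U F x ↔ y ∈ U ∧ ∃ n, RN F n x y := by
  simp [comp]

lemma mem_comp_self {U : Finset V} {F : Finset (Sym2 V)} {x : V} (hx : x ∈ U) :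
    x ∈ comp U F x := mem_comp.mpr ⟨hx, 0, RN_zero.mpr rfl⟩

lemma comp_subset {U : Finset V} {F : Finset (Sym2 V)} {x : V} : comp U F x ⊆ U :=
  fun _ h => (mem_comp.mp h).1

lemma comp_closed {U : Finset V} {F : Finset (Sym2 V)}
    (hF2 : ∀ e ∈ F, ∀ x ∈ e, x ∈ U) {x y z : V}
    (hy : y ∈ comp U F x) (hz : s(y,z) ∈ F) : z ∈ comp U F x := by
  obtain ⟨hyU, n, hn⟩ := mem_comp.mp hy
  exact mem_comp.mpr ⟨hF2 _ hz z (Sym2.mem_mk_right y z), n+1, RN_append F n x y z hn hz⟩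

lemma comp_eq_of_mem {U : Finset V} {F : Finset (Sym2 V)} {x y : V}
    (hy : y ∈ comp U F x) : comp U F y = comp U F x := by
  obtain ⟨hyU, k, hk⟩ := mem_comp.mp hy
  ext z
  simp only [mem_comp]
  constructor
  · rintro ⟨hzU, m, hm⟩
    obtain ⟨t, ht⟩ := RN_trans F k m x y z hk hm
    exact ⟨hzU, t, ht⟩
  · rintro ⟨hzU, m, hm⟩
    obtain ⟨k', hk'⟩ := RN_symm F k x y hk
    obtain ⟨t, ht⟩ := RN_trans F k' m y x z hk' hm
    exact ⟨hzU, t, ht⟩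

open scoped Classical in
/-- Gallai's lemma: a connected component in which every vertex is missed by some
maximum matching has deficiency at most one. -/
lemma gallai {U : Finset V} {F : Finset (Sym2 V)}
    (hF1 : ∀ e ∈ F, ¬ e.IsDiag) (hF2 : ∀ e ∈ F, ∀ x ∈ e, x ∈ U)
    {x₀ : V} (hx₀ : x₀ ∈ U) {p : Finset V} (hp : p = comp U F x₀)
    {Fp : Finset (Sym2 V)} (hFp : Fp = F.filter (fun e => ∀ y ∈ e, y ∈ p))
    (νp : ℕ) (hmax : ∀ M, IsM M → M ⊆ Fp → M.card ≤ νp)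
    (hmiss : ∀ v ∈ p, ∃ M, IsM M ∧ M ⊆ Fp ∧ M.card = νp ∧ v ∉ cov M) :
    p.card ≤ 2 * νp + 1 := by
  by_contra hbig
  push_neg at hbig
  obtain ⟨M₀, hM₀, hM₀sub, hM₀card, hx₀M₀⟩ := hmiss x₀ (hp ▸ mem_comp_self hx₀)
  have hcovcard : (cov M₀).card ≤ 2 * νp := hM₀card ▸ card_cov_le M₀
  have htwo : 1 < (p \ cov M₀).card := by
    have := le_card_sdiff (cov M₀) p
    omega
  obtain ⟨u₀, hu₀, v₀, hv₀, huv₀⟩ := one_lt_card.mp htwo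
  have hu₀p : u₀ ∈ p := (mem_sdiff.mp hu₀).1
  have hv₀p : v₀ ∈ p := (mem_sdiff.mp hv₀).1
  have hreach : ∃ ℓ, RN F ℓ u₀ v₀ := by
    obtain ⟨-, n₁, hn₁⟩ := mem_comp.mp (hp ▸ hu₀p : u₀ ∈ comp U F x₀)
    obtain ⟨-, n₂, hn₂⟩ := mem_comp.mp (hp ▸ hv₀p : v₀ ∈ comp U F x₀)
    obtain ⟨m, hm⟩ := RN_symm F n₁ x₀ u₀ hn₁
    exact RN_trans F m n₂ u₀ x₀ v₀ hm hn₂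
  set Q : ℕ → Prop := fun ℓ => ∃ M u v, (IsM M ∧ M ⊆ Fp ∧ M.card = νp) ∧
    u ∈ p ∧ v ∈ p ∧ u ≠ v ∧ u ∉ cov M ∧ v ∉ cov M ∧ RN F ℓ u v with hQdef
  have hQex : ∃ ℓ, Q ℓ := by
    obtain ⟨ℓ, hℓ⟩ := hreach
    exact ⟨ℓ, M₀, u₀, v₀, ⟨hM₀, hM₀sub, hM₀card⟩, hu₀p, hv₀p, huv₀,
      (mem_sdiff.mp hu₀).2, (mem_sdiff.mp hv₀).2, hℓ⟩
  have hnotQ1 : ¬ Q 1 := by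
    rintro ⟨M, u, v, ⟨hM, hMsub, hMcard⟩, hup, hvp, huv, huM, hvM, hRN⟩
    obtain ⟨z, hz, hz'⟩ := RN_succ.mp hRN
    rw [RN_zero] at hz'
    rw [hz'] at hz
    have hedge : s(u, v) ∈ Fp := by
      rw [hFp, mem_filter]
      refine ⟨hz, ?_⟩
      intro y hy
      rcases Sym2.mem_iff.mp hy with rfl | rfl
      exacts [hup, hvp]
    have hnd : ¬ (s(u,v)).IsDiag := by rw [Sym2.mk_isDiag_iff]; exact huv
    have hfree : ∀ y ∈ s(u,v), y ∉ cov M := by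
      intro y hy; rcases Sym2.mem_iff.mp hy with rfl | rfl; exacts [huM, hvM]
    have hsub : insert s(u,v) M ⊆ Fp := by
      intro x hx
      rcases mem_insert.mp hx with rfl | hx
      · exact hedge
      · exact hMsub hx
    have hle := hmax (insert s(u,v) M) (hM.insert hnd hfree) hsub
    rw [card_insert_free (Sym2.mem_mk_left u v) huM] at hle
    omega
  obtain ⟨M, u, v, ⟨hM, hMsub, hMcard⟩, hup, hvp, huv, huM, hvM, hRN⟩ :=
    Nat.find_spec hQex
  have hd0 : Nat.find hQex ≠ 0 := by
    intro h
    rw [h] at hRN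
    exact huv (RN_zero.mp hRN)
  have hd1 : Nat.find hQex ≠ 1 := by
    intro h
    rw [h] at hRN
    exact hnotQ1 ⟨M, u, v, ⟨hM, hMsub, hMcard⟩, hup, hvp, huv, huM, hvM, hRN⟩
  have hRN' : RN F ((Nat.find hQex - 1) + 1) u v := by
    rw [show Nat.find hQex - 1 + 1 = Nat.find hQex from by omega]
    exact hRN
  obtain ⟨w, huw, hwv⟩ := RN_succ.mp hRN'
  have hupc : u ∈ comp U F x₀ := hp ▸ hup
  have hwp : w ∈ p := by rw [hp]; exact comp_closed hF2 hupc huw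
  have huw' : u ≠ w := by
    have := hF1 _ huw; rwa [Sym2.mk_isDiag_iff] at this
  have hwv' : w ≠ v := by
    intro h
    subst h
    exact hnotQ1 ⟨M, u, w, ⟨hM, hMsub, hMcard⟩, hup, hwp, huw', huM, hvM,
      RN_succ.mpr ⟨w, huw, RN_zero.mpr rfl⟩⟩
  have hwcov : w ∈ cov M := by
    by_contra hw
    exact hnotQ1 ⟨M, u, w, ⟨hM, hMsub, hMcard⟩, hup, hwp, huw', huM, hw,
      RN_succ.mpr ⟨w, huw, RN_zero.mpr rfl⟩⟩
  obtain ⟨N, hN, hNsub, hNcard, hwN⟩ := hmiss w hwp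
  rcases altFlip (M.card + N.card) M N le_rfl hM hN w hwcov hwN with
    ⟨N', z, hN', hN'sub, hN'card, -, -, -⟩ |
    ⟨M', z, hM', hM'sub, hM'card, hzN, hzM, hcovM'⟩
  · have : N'.card ≤ νp := hmax N' hN' (hN'sub.trans (union_subset hMsub hNsub))
    omega
  · have hM'Fp : M' ⊆ Fp := hM'sub.trans (union_subset hMsub hNsub)
    have hzw : z ≠ w := fun h => hwN (h ▸ hzN)
    have hwM' : w ∉ cov M' := by
      rw [hcovM']
      intro h
      rcases mem_union.mp h with h | h
      · exact (mem_sdiff.mp h).2 (mem_singleton.mpr rfl)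
      · exact hzw (mem_singleton.mp h).symm
    by_cases hzu : z = u
    · have hvM' : v ∉ cov M' := by
        rw [hcovM']
        intro h
        rcases mem_union.mp h with h | h
        · exact hvM (mem_sdiff.mp h).1
        · exact huv ((mem_singleton.mp h).trans hzu).symm
      have hQd1 : Q (Nat.find hQex - 1) := ⟨M', w, v, ⟨hM', hM'Fp, hM'card.trans hMcard⟩,
        hwp, hvp, hwv', hwM', hvM', hwv⟩
      exact Nat.find_min hQex (show Nat.find hQex - 1 < Nat.find hQex from by omega) hQd1
    · have huM' : u ∉ cov M' := by
        rw [hcovM']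
        intro h
        rcases mem_union.mp h with h | h
        · exact huM (mem_sdiff.mp h).1
        · exact hzu (mem_singleton.mp h).symm
      exact hnotQ1 ⟨M', u, w, ⟨hM', hM'Fp, hM'card.trans hMcard⟩, hup, hwp,
        huw', huM', hwM', RN_succ.mpr ⟨w, huw, RN_zero.mpr rfl⟩⟩

open scoped Classical in
/-- maximum matching size within an edge set -/
noncomputable def nu (F : Finset (Sym2 V)) : ℕ :=
  ((F.powerset.filter IsM).image card).max'
    ⟨0, mem_image.mpr ⟨∅, mem_filter.mpr ⟨mem_powerset.mpr (empty_subset F), IsM.empty⟩,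
      card_empty⟩⟩

lemma le_nu {F M : Finset (Sym2 V)} (hM : IsM M) (hsub : M ⊆ F) : M.card ≤ nu F := by
  classical
  exact le_max' _ _ (mem_image.mpr ⟨M, mem_filter.mpr ⟨mem_powerset.mpr hsub, hM⟩, rfl⟩)

lemma nu_le {F : Finset (Sym2 V)} {K : ℕ} (h : ∀ M, IsM M → M ⊆ F → M.card ≤ K) :
    nu F ≤ K := by
  classical
  apply max'_le
  intro b hb
  obtain ⟨M, hM, rfl⟩ := mem_image.mp hb
  have h1 := mem_filter.mp hM
  exact h M h1.2 (mem_powerset.mp h1.1)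

lemma nu_spec (F : Finset (Sym2 V)) : ∃ M, IsM M ∧ M ⊆ F ∧ M.card = nu F := by
  classical
  have := max'_mem ((F.powerset.filter IsM).image card)
    ⟨0, mem_image.mpr ⟨∅, mem_filter.mpr ⟨mem_powerset.mpr (empty_subset F), IsM.empty⟩,
      card_empty⟩⟩
  obtain ⟨M, hM, hcard⟩ := mem_image.mp this
  have h1 := mem_filter.mp hM
  exact ⟨M, h1.2, mem_powerset.mp h1.1, hcard⟩

open scoped Classical in
/-- edges of F lying entirely inside p -/
noncomputable def Fpart (F : Finset (Sym2 V)) (p : Finset V) : Finset (Sym2 V) :=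
  F.filter (fun e => ∀ y ∈ e, y ∈ p)

lemma Fpart_subset (F : Finset (Sym2 V)) (p : Finset V) : Fpart F p ⊆ F :=
  filter_subset _ _

lemma mem_Fpart {F : Finset (Sym2 V)} {p : Finset V} {e : Sym2 V} :
    e ∈ Fpart F p ↔ e ∈ F ∧ ∀ y ∈ e, y ∈ p := by
  simp [Fpart]

/-- an edge is either inside a component or disjoint from it -/
lemma edge_in_out {U : Finset V} {F : Finset (Sym2 V)}
    (hF2 : ∀ e ∈ F, ∀ x ∈ e, x ∈ U) (x₀ : V) {e : Sym2 V} (he : e ∈ F) :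
    (∀ y ∈ e, y ∈ comp U F x₀) ∨ (∀ y ∈ e, y ∉ comp U F x₀) := by
  induction e using Sym2.ind with
  | _ a b =>
    by_cases ha : a ∈ comp U F x₀
    · left
      intro y hy
      rcases Sym2.mem_iff.mp hy with rfl | rfl
      · exact ha
      · exact comp_closed hF2 ha he
    · right
      intro y hy
      rcases Sym2.mem_iff.mp hy with rfl | rfl
      · exact ha
      · intro hb
        exact ha (comp_closed hF2 hb (by rwa [Sym2.eq_swap] at he))

open scoped Classical in
/-- Tutte–Berge type witness: if all matchings have at most K edges, there is a
set S and a partition of U \ S into parts with no F-edges leaving a part,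
with many parts. -/
lemma tutteBerge : ∀ (m : ℕ) (U : Finset V), U.card ≤ m →
    ∀ (F : Finset (Sym2 V)), (∀ e ∈ F, ¬ e.IsDiag) → (∀ e ∈ F, ∀ x ∈ e, x ∈ U) →
    ∀ (K : ℕ), (∀ M, IsM M → M ⊆ F → M.card ≤ K) →
    ∃ (S : Finset V) (P : Finset (Finset V)), S ⊆ U ∧ (∀ p ∈ P, p.Nonempty) ∧
      (∀ p ∈ P, ∀ q ∈ P, p ≠ q → Disjoint p q) ∧ (P.biUnion id = U \ S) ∧
      (∀ p ∈ P, ∀ x ∈ p, ∀ y, s(x,y) ∈ F → y ∉ S → y ∈ p) ∧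
      S.card + U.card ≤ P.card + 2 * K := by
  intro m
  induction m with
  | zero =>
    intro U hU F hF1 hF2 K hK
    have : U = ∅ := card_eq_zero.mp (by omega)
    subst this
    refine ⟨∅, ∅, Subset.rfl, by simp, by simp, by simp, by simp, by simp⟩
  | succ m IH =>
    intro U hU F hF1 hF2 K hK
    have hνK : nu F ≤ K := nu_le hK
    by_cases hA : ∃ v ∈ U, ∀ M, IsM M → M ⊆ F → M.card = nu F → v ∈ cov M
    · -- some vertex in every maximum matching
      obtain ⟨v, hvU, hvall⟩ := hA
      have hν1 : 1 ≤ nu F := by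
        by_contra h
        push_neg at h
        have h0 : nu F = 0 := by omega
        have := hvall ∅ IsM.empty (empty_subset F) (by simp [h0])
        simp at this
      set F' := F.filter (fun e => v ∉ e) with hF'def
      have hF1' : ∀ e ∈ F', ¬ e.IsDiag := fun e he => hF1 e (mem_of_mem_filter e he)
      have hF2' : ∀ e ∈ F', ∀ x ∈ e, x ∈ U.erase v := by
        intro e he x hx
        have h1 := mem_filter.mp he
        refine mem_erase.mpr ⟨?_, hF2 e h1.1 x hx⟩
        rintro rfl
        exact h1.2 hx
      have hUcard : (U.erase v).card ≤ m := by
        rw [card_erase_of_mem hvU]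
        have : 1 ≤ U.card := card_pos.mpr ⟨v, hvU⟩
        omega
      have hK' : ∀ M, IsM M → M ⊆ F' → M.card ≤ nu F - 1 := by
        intro M hM hsub
        by_contra h
        push_neg at h
        have hle : M.card ≤ nu F := le_nu hM (hsub.trans (filter_subset _ _))
        have heq : M.card = nu F := by omega
        have hv := hvall M hM (hsub.trans (filter_subset _ _)) heq
        obtain ⟨e, he, hve⟩ := mem_cov.mp hv
        exact (mem_filter.mp (hsub he)).2 hve
      obtain ⟨S', P', hS', hPne, hPdisj, hPcover, hPclosed, hcount⟩ :=
        IH (U.erase v) hUcard F' hF1' hF2' (nu F - 1) hK'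
      refine ⟨insert v S', P', ?_, hPne, hPdisj, ?_, ?_, ?_⟩
      · exact insert_subset hvU (hS'.trans (erase_subset _ _))
      · rw [hPcover]
        ext x
        simp only [mem_sdiff, mem_erase, mem_insert]
        constructor
        · rintro ⟨⟨hxv, hxU⟩, hxS⟩
          exact ⟨hxU, fun h => h.elim hxv hxS⟩
        · rintro ⟨hxU, h⟩
          push_neg at h
          exact ⟨⟨h.1, hxU⟩, h.2⟩
      · intro p hp x hx y hedge hyS
        have hxp : x ∈ U.erase v \ S' := by
          rw [← hPcover]
          exact mem_biUnion.mpr ⟨p, hp, hx⟩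
        have hxv : x ≠ v := (mem_erase.mp (mem_sdiff.mp hxp).1).1
        have hyv : y ≠ v := fun h => hyS (h ▸ mem_insert_self v S')
        have hedge' : s(x,y) ∈ F' := by
          rw [hF'def, mem_filter]
          refine ⟨hedge, ?_⟩
          intro hv'
          rcases Sym2.mem_iff.mp hv' with h | h
          exacts [hxv h.symm, hyv h.symm]
        exact hPclosed p hp x hx y hedge' (fun h => hyS (mem_insert_of_mem h))
      · have hvS' : v ∉ S' := fun h => (mem_erase.mp (hS' h)).1 rfl
        rw [card_insert_of_notMem hvS']
        rw [card_erase_of_mem hvU] at hcount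
        have : 1 ≤ U.card := card_pos.mpr ⟨v, hvU⟩
        omega
    · -- every vertex is missed by some maximum matching
      push_neg at hA
      set P := U.image (comp U F) with hPdef
      have hpart : ∀ p ∈ P, ∃ x₀ ∈ U, comp U F x₀ = p := fun p hp => mem_image.mp hp
      have hPdisj : ∀ p ∈ P, ∀ q ∈ P, p ≠ q → Disjoint p q := by
        intro p hp q hq hne
        obtain ⟨x, hxU, rfl⟩ := hpart p hp
        obtain ⟨y, hyU, rfl⟩ := hpart q hq
        rw [Finset.disjoint_left]
        intro z hz1 hz2
        exact hne ((comp_eq_of_mem hz1).symm.trans (comp_eq_of_mem hz2))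
      have hPcover : P.biUnion id = U := by
        ext x
        simp only [mem_biUnion, id]
        constructor
        · rintro ⟨p, hp, hxp⟩
          obtain ⟨y, hyU, rfl⟩ := hpart p hp
          exact comp_subset hxp
        · intro hx
          exact ⟨comp U F x, mem_image_of_mem _ hx, mem_comp_self hx⟩
      -- for every vertex of a part, a maximum part-matching missing it
      have hmiss : ∀ p ∈ P, ∀ w ∈ p, ∃ Mp, IsM Mp ∧ Mp ⊆ Fpart F p ∧
          Mp.card = nu (Fpart F p) ∧ w ∉ cov Mp := by
        intro p hp w hwp
        obtain ⟨x₀, hx₀U, rfl⟩ := hpart p hp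
        obtain ⟨M, hM, hMsub, hMcard, hwM⟩ := hA w (comp_subset hwp)
        set Mp := M.filter (fun e => e ∈ Fpart F (comp U F x₀)) with hMpdef
        have hMpsub : Mp ⊆ Fpart F (comp U F x₀) := fun e he => (mem_filter.mp he).2
        have hMpM : Mp ⊆ M := filter_subset _ _
        refine ⟨Mp, hM.subset hMpM, hMpsub, ?_, fun h => hwM (cov_mono hMpM h)⟩
        have hle : Mp.card ≤ nu (Fpart F (comp U F x₀)) := le_nu (hM.subset hMpM) hMpsub
        -- reverse: exchange argument
        obtain ⟨T, hT, hTsub, hTcard⟩ := nu_spec (Fpart F (comp U F x₀))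
        set Mout := M.filter (fun e => e ∉ Fpart F (comp U F x₀)) with hMoutdef
        have houtdisj : ∀ e ∈ Mout, ∀ y ∈ e, y ∉ comp U F x₀ := by
          intro e he y hy
          have h1 := mem_filter.mp he
          rcases edge_in_out hF2 x₀ (hMsub h1.1) with hin | hout
          · exact absurd (mem_Fpart.mpr ⟨hMsub h1.1, hin⟩) h1.2
          · exact hout y hy
        have hTin : ∀ e ∈ T, ∀ y ∈ e, y ∈ comp U F x₀ := by
          intro e he y hy
          exact (mem_Fpart.mp (hTsub he)).2 y hy
        have hdisj2 : Disjoint Mout T := by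
          rw [Finset.disjoint_left]
          intro e he1 he2
          exact houtdisj e he1 _ (Sym2.out_fst_mem e) (hTin e he2 _ (Sym2.out_fst_mem e))
        have hM' : IsM (Mout ∪ T) := by
          constructor
          · intro e he
            rcases mem_union.mp he with h | h
            · exact hF1 e (hMsub (mem_of_mem_filter e h))
            · exact hF1 e (Fpart_subset F _ (hTsub h))
          · intro e he f hf z hze hzf
            rcases mem_union.mp he with h1 | h1 <;> rcases mem_union.mp hf with h2 | h2
            · exact hM.2 e (mem_of_mem_filter e h1) f (mem_of_mem_filter f h2) z hze hzf
            · exact absurd (hTin f h2 z hzf) (houtdisj e h1 z hze)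
            · exact absurd (hTin e h1 z hze) (houtdisj f h2 z hzf)
            · exact hT.2 e h1 f h2 z hze hzf
        have hM'sub : Mout ∪ T ⊆ F := by
          intro e he
          rcases mem_union.mp he with h | h
          · exact hMsub (mem_of_mem_filter e h)
          · exact Fpart_subset F _ (hTsub h)
        have hsplit : Mp.card + Mout.card = M.card := by
          rw [hMpdef, hMoutdef]
          exact card_filter_add_card_filter_not _
        have hunion : (Mout ∪ T).card = Mout.card + T.card := card_union_of_disjoint hdisj2
        have hbound : (Mout ∪ T).card ≤ nu F := le_nu hM' hM'sub
        omega
      -- Gallai bound for every part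
      have hgallai : ∀ p ∈ P, p.card ≤ 2 * nu (Fpart F p) + 1 := by
        intro p hp
        obtain ⟨x₀, hx₀U, hpx₀⟩ := hpart p hp
        exact gallai hF1 hF2 hx₀U hpx₀.symm (by rw [Fpart]) (nu (Fpart F p))
          (fun M hM hsub => le_nu hM hsub) (hmiss p hp)
      -- sum of part maxima is at most nu F
      have hsum : ∑ p ∈ P, nu (Fpart F p) ≤ nu F := by
        set T : Finset V → Finset (Sym2 V) :=
          fun p => Classical.choose (nu_spec (Fpart F p)) with hTdef
        have hT : ∀ p, IsM (T p) ∧ T p ⊆ Fpart F p ∧ (T p).card = nu (Fpart F p) :=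
          fun p => Classical.choose_spec (nu_spec (Fpart F p))
        have hTin : ∀ p, ∀ e ∈ T p, ∀ y ∈ e, y ∈ p :=
          fun p e he => (mem_Fpart.mp ((hT p).2.1 he)).2
        have hdisjT : ∀ p ∈ P, ∀ q ∈ P, p ≠ q → Disjoint (T p) (T q) := by
          intro p hp q hq hne
          rw [Finset.disjoint_left]
          intro e he1 he2
          have h1 := hTin p e he1 _ (Sym2.out_fst_mem e)
          have h2 := hTin q e he2 _ (Sym2.out_fst_mem e)
          exact (Finset.disjoint_left.mp (hPdisj p hp q hq hne)) h1 h2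
        have hbig : IsM (P.biUnion T) := by
          constructor
          · intro e he
            obtain ⟨p, hp, hep⟩ := mem_biUnion.mp he
            exact hF1 e (Fpart_subset F p ((hT p).2.1 hep))
          · intro e he f hf z hze hzf
            obtain ⟨p, hp, hep⟩ := mem_biUnion.mp he
            obtain ⟨q, hq, hfq⟩ := mem_biUnion.mp hf
            by_cases hpq : p = q
            · subst hpq
              exact (hT p).1.2 e hep f hfq z hze hzf
            · exact absurd (hTin q f hfq z hzf)
                (Finset.disjoint_left.mp (hPdisj p hp q hq hpq) (hTin p e hep z hze))
        have hbigsub : P.biUnion T ⊆ F := by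
          intro e he
          obtain ⟨p, hp, hep⟩ := mem_biUnion.mp he
          exact Fpart_subset F p ((hT p).2.1 hep)
        have hcardbig : (P.biUnion T).card = ∑ p ∈ P, (T p).card :=
          card_biUnion hdisjT
        have := le_nu hbig hbigsub
        rw [hcardbig] at this
        calc ∑ p ∈ P, nu (Fpart F p) = ∑ p ∈ P, (T p).card :=
              sum_congr rfl (fun p _ => ((hT p).2.2).symm)
          _ ≤ nu F := this
      have hUsum : U.card = ∑ p ∈ P, p.card := by
        rw [← hPcover]
        exact card_biUnion (by intro x hx y hy hne; exact hPdisj x hx y hy hne)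
      have hfinal : U.card ≤ P.card + 2 * nu F := by
        calc U.card = ∑ p ∈ P, p.card := hUsum
          _ ≤ ∑ p ∈ P, (2 * nu (Fpart F p) + 1) := sum_le_sum (fun p hp => hgallai p hp)
          _ = 2 * (∑ p ∈ P, nu (Fpart F p)) + P.card := by
              rw [sum_add_distrib, sum_const, smul_eq_mul, mul_one, mul_sum]
          _ ≤ 2 * nu F + P.card := by
              have := hsum
              omega
          _ = P.card + 2 * nu F := by omega
      refine ⟨∅, P, empty_subset U, ?_, hPdisj, by rw [sdiff_empty]; exact hPcover, ?_, ?_⟩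
      · intro p hp
        obtain ⟨x₀, hx₀U, rfl⟩ := hpart p hp
        exact ⟨x₀, mem_comp_self hx₀U⟩
      · intro p hp x hx y hedge _
        obtain ⟨x₀, hx₀U, rfl⟩ := hpart p hp
        exact comp_closed hF2 hx hedge
      · simp only [card_empty, zero_add]
        omega

end StmtAux

open SimpleGraph StmtAux Finset

/-- Let `G` be an `n`-vertex graph with an `r`-edge-colouring, and suppose the minimum
degree satisfies `δ(G) ≤ rn/(r+1)`.  Then `G` contains a monochromatic matching with
at least `δ(G)/r` edges, i.e. a colour `i` and a matching `M` of colour-`i` edges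
with `r * |M| ≥ δ(G)`. -/
theorem stmt_3 {V : Type*} [Fintype V] [DecidableEq V] (G : SimpleGraph V)
    [DecidableRel G.Adj] (r : ℕ) (hr : 1 ≤ r) (col : Sym2 V → Fin r)
    (hδ : (r + 1) * G.minDegree ≤ r * Fintype.card V) :
    ∃ (i : Fin r) (M : Finset (Sym2 V)), ↑M ⊆ G.edgeSet ∧
      (M : Set (Sym2 V)).Pairwise (fun e f => ∀ v : V, ¬(v ∈ e ∧ v ∈ f)) ∧
      (∀ e ∈ M, col e = i) ∧ G.minDegree ≤ r * M.card := by
  classical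
  by_cases hδ0 : G.minDegree = 0
  · refine ⟨⟨0, hr⟩, ∅, by simp, by simp, by simp, by omega⟩
  -- setup
  by_contra hcon
  push_neg at hcon
  set δ := G.minDegree with hδdef
  set n := Fintype.card V with hndef
  have hδ1 : 1 ≤ δ := by omega
  have hr0 : 0 < r := hr
  set K := (δ - 1) / r with hKdef
  have hrK : r * K ≤ δ - 1 := by
    rw [hKdef, mul_comm]
    exact Nat.div_mul_le_self (δ - 1) r
  have hKlt : δ - 1 < (K + 1) * r := (Nat.div_lt_iff_lt_mul hr0).mp (Nat.lt_succ_self K)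
  -- the colour classes
  set Ei : Fin r → Finset (Sym2 V) :=
    fun i => G.edgeFinset.filter (fun e => col e = i) with hEidef
  -- no colour class has a matching with more than K edges
  have hmono : ∀ i, ∀ M, IsM M → M ⊆ Ei i → M.card ≤ K := by
    intro i M hM hsub
    by_contra h
    push_neg at h
    have h1 : ↑M ⊆ G.edgeSet := by
      intro e he
      have h2 := mem_filter.mp (hsub (mem_coe.mp he))
      exact mem_edgeFinset.mp h2.1
    have h2 : (M : Set (Sym2 V)).Pairwise (fun e f => ∀ v ∈ e, v ∉ f) := by
      intro e he f hf hne v hv1 hv2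
      exact hne (hM.2 e (mem_coe.mp he) f (mem_coe.mp hf) v hv1 hv2)
    have h3 : ∀ e ∈ M, col e = i := fun e he => (mem_filter.mp (hsub he)).2
    have h4 := hcon i M h1 h2 h3
    have h5 : (K + 1) * r ≤ M.card * r := Nat.mul_le_mul_right r h
    have h6 : r * M.card = M.card * r := mul_comm _ _
    omega
  -- the number of vertices is large
  have hn2 : (r + 1) * K + 2 ≤ n := by
    have h1 : (r + 1) * (r * K + 1) ≤ (r + 1) * δ := Nat.mul_le_mul_left _ (by omega)
    have h2 : (r + 1) * (r * K + 1) ≤ r * n := h1.trans hδ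
    have h3 : (r + 1) * (r * K + 1) = r * ((r + 1) * K + 1) + 1 := by ring
    have h4 : r * ((r + 1) * K + 1) < r * n := by omega
    have h5 : (r + 1) * K + 1 < n := lt_of_mul_lt_mul_left h4 (Nat.zero_le r)
    omega
  -- Tutte-Berge witnesses for each colour
  have hTB : ∀ i : Fin r, ∃ (S : Finset V) (P : Finset (Finset V)), S ⊆ univ ∧
      (∀ p ∈ P, p.Nonempty) ∧
      (∀ p ∈ P, ∀ q ∈ P, p ≠ q → Disjoint p q) ∧ (P.biUnion id = univ \ S) ∧
      (∀ p ∈ P, ∀ x ∈ p, ∀ y, s(x,y) ∈ Ei i → y ∉ S → y ∈ p) ∧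
      S.card + (univ : Finset V).card ≤ P.card + 2 * K := by
    intro i
    refine tutteBerge n univ (by rw [card_univ]) (Ei i) ?_ ?_ K (hmono i)
    · intro e he
      exact G.not_isDiag_of_mem_edgeSet (mem_edgeFinset.mp (mem_filter.mp he).1)
    · intro e _ x _
      exact mem_univ x
  choose S P hSsub hPne hPdisj hPcover hPclosed hcount using hTB
  -- bookkeeping
  set ex : Fin r → ℕ := fun i => ∑ p ∈ P i, (p.card - 1) with hexdef
  have haux : ∀ a : ℕ, a * a - a = a * (a - 1) := fun a => (Nat.mul_sub_one a a).symm
  have hexapp : ∀ i, ex i = ∑ p ∈ P i, (p.card - 1) := fun i => rfl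
  have hKEY : ∀ i, ex i + (P i).card + (S i).card = n ∧ ex i + 2 * (S i).card ≤ 2 * K := by
    intro i
    have h1 : (univ \ S i).card + (S i).card = n := by
      rw [card_sdiff_add_card_eq_card (subset_univ _), card_univ]
    have h2 : ∑ p ∈ P i, p.card = (univ \ S i).card := by
      rw [← hPcover i]
      exact (card_biUnion (hPdisj i)).symm
    have h3 : ex i + (P i).card = ∑ p ∈ P i, p.card := by
      calc ex i + (P i).card = ∑ p ∈ P i, ((p.card - 1) + 1) := by
            rw [hexapp i, sum_add_distrib, sum_const, smul_eq_mul, mul_one]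
        _ = ∑ p ∈ P i, p.card := sum_congr rfl fun p hp => by
            have := card_pos.mpr (hPne i p hp)
            omega
    have h4 := hcount i
    rw [card_univ] at h4
    exact ⟨by omega, by omega⟩
  have hsK : ∀ i, (S i).card ≤ K := fun i => by have := (hKEY i).2; omega
  set A := ∑ i : Fin r, (K - (S i).card) with hAdef
  set σ := ∑ i : Fin r, (S i).card with hσdef
  have hAσ : A + σ = r * K := by
    rw [hAdef, hσdef, ← sum_add_distrib]
    have : ∀ i : Fin r, (K - (S i).card) + (S i).card = K := fun i => by
      have := hsK i; omega
    rw [sum_congr rfl (fun i _ => this i), sum_const, card_univ, Fintype.card_fin,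
      smul_eq_mul]
  set V' := (univ : Finset V) \ univ.biUnion S with hV'def
  have hv'σ : V'.card + σ ≥ n := by
    have h1 : V'.card + (univ.biUnion S).card = n := by
      rw [hV'def, card_sdiff_add_card_eq_card (subset_univ _), card_univ]
    have h2 : (univ.biUnion S).card ≤ σ := card_biUnion_le
    omega
  have hv' : A + K + 2 ≤ V'.card := by
    have h1 : (r + 1) * K = r * K + K := by ring
    omega
  -- find a good pair
  set good := V'.offDiag.filter
    (fun z => ∀ i, ∀ p ∈ P i, ¬(z.1 ∈ p ∧ z.2 ∈ p)) with hgooddef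
  have hgood : good.Nonempty := by
    rw [nonempty_iff_ne_empty]
    intro hg
    have hsub : V'.offDiag ⊆
        (univ : Finset (Fin r)).biUnion (fun i => (P i).biUnion (fun p => p.offDiag)) := by
      intro z hz
      have hzg : z ∉ good := by rw [hg]; exact notMem_empty z
      rw [hgooddef, mem_filter] at hzg
      push_neg at hzg
      obtain ⟨i, p, hp, h1, h2⟩ := hzg hz
      have hne : z.1 ≠ z.2 := (mem_offDiag.mp hz).2.2
      exact mem_biUnion.mpr ⟨i, mem_univ i,
        mem_biUnion.mpr ⟨p, hp, mem_offDiag.mpr ⟨h1, h2, hne⟩⟩⟩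
    have hcard1 : V'.offDiag.card ≤ ∑ i : Fin r, ∑ p ∈ P i, p.offDiag.card := by
      calc V'.offDiag.card ≤ _ := card_le_card hsub
        _ ≤ ∑ i : Fin r, ((P i).biUnion (fun p => p.offDiag)).card := card_biUnion_le
        _ ≤ ∑ i : Fin r, ∑ p ∈ P i, p.offDiag.card := sum_le_sum fun i _ => card_biUnion_le
    have hcard2 : ∀ i, ∑ p ∈ P i, p.offDiag.card ≤ (ex i + 1) * ex i := by
      intro i
      calc ∑ p ∈ P i, p.offDiag.card = ∑ p ∈ P i, p.card * (p.card - 1) := by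
            refine sum_congr rfl fun p _ => ?_
            rw [offDiag_card, haux]
        _ ≤ ∑ p ∈ P i, (ex i + 1) * (p.card - 1) := by
            refine sum_le_sum fun p hp => ?_
            have hple : p.card - 1 ≤ ex i := by
              rw [hexapp i]
              exact single_le_sum (f := fun q => q.card - 1) (fun q _ => Nat.zero_le _) hp
            have := card_pos.mpr (hPne i p hp)
            exact Nat.mul_le_mul (show p.card ≤ ex i + 1 by omega) (le_refl (p.card - 1))
        _ = (ex i + 1) * ex i := by rw [← mul_sum]
    have hcard3 : ∀ i, (ex i + 1) * ex i ≤ 4 * K * (K - (S i).card) + 2 * (K - (S i).card) := by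
      intro i
      have h1 : ex i ≤ 2 * (K - (S i).card) := by
        have := (hKEY i).2
        have := hsK i
        omega
      calc (ex i + 1) * ex i ≤ (2 * (K - (S i).card) + 1) * (2 * (K - (S i).card)) :=
            Nat.mul_le_mul (show ex i + 1 ≤ 2 * (K - (S i).card) + 1 by omega) h1
        _ = 4 * ((K - (S i).card) * (K - (S i).card)) + 2 * (K - (S i).card) := by ring
        _ ≤ 4 * (K * (K - (S i).card)) + 2 * (K - (S i).card) := by
            have : (K - (S i).card) * (K - (S i).card) ≤ K * (K - (S i).card) :=
              Nat.mul_le_mul (Nat.sub_le K (S i).card) (le_refl (K - (S i).card))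
            omega
        _ = 4 * K * (K - (S i).card) + 2 * (K - (S i).card) := by ring
    have hcard4 : ∑ i : Fin r, (4 * K * (K - (S i).card) + 2 * (K - (S i).card))
        = 4 * K * A + 2 * A := by
      rw [sum_add_distrib, ← mul_sum, ← mul_sum, ← hAdef]
    have hstrictgen : ∀ a k : ℕ, 4 * k * a + 2 * a < (a + k + 2) * (a + k + 1) := by
      intro a k
      rcases le_total a k with h | h
      · obtain ⟨d, rfl⟩ := le_iff_exists_add.mp h
        nlinarith
      · obtain ⟨d, rfl⟩ := le_iff_exists_add.mp h
        nlinarith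
    have hstrict : 4 * K * A + 2 * A < (A + K + 2) * (A + K + 1) := hstrictgen A K
    have hbig : (A + K + 2) * (A + K + 1) ≤ V'.offDiag.card := by
      rw [offDiag_card, haux]
      exact Nat.mul_le_mul hv' (by omega)
    have hchain : V'.offDiag.card ≤ 4 * K * A + 2 * A := by
      calc V'.offDiag.card ≤ ∑ i : Fin r, ∑ p ∈ P i, p.offDiag.card := hcard1
        _ ≤ ∑ i : Fin r, ((ex i + 1) * ex i) := sum_le_sum fun i _ => hcard2 i
        _ ≤ ∑ i : Fin r, (4 * K * (K - (S i).card) + 2 * (K - (S i).card)) :=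
            sum_le_sum fun i _ => hcard3 i
        _ = 4 * K * A + 2 * A := hcard4
    exact absurd (hbig.trans hchain) (not_le.mpr hstrict)
  obtain ⟨⟨u, v⟩, hz⟩ := hgood
  rw [hgooddef, mem_filter] at hz
  obtain ⟨hoff, hsep⟩ := hz
  obtain ⟨huV', hvV', huv⟩ := mem_offDiag.mp hoff
  have hnotS : ∀ (x : V), x ∈ V' → ∀ i, x ∉ S i := by
    intro x hx i hxS
    exact (mem_sdiff.mp hx).2 (mem_biUnion.mpr ⟨i, mem_univ i, hxS⟩)
  have hpart : ∀ (x : V), x ∈ V' → ∀ i, ∃ p ∈ P i, x ∈ p := by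
    intro x hx i
    have : x ∈ univ \ S i := mem_sdiff.mpr ⟨mem_univ x, hnotS x hx i⟩
    rw [← hPcover i] at this
    exact mem_biUnion.mp this
  -- degree bounds
  set Ni : V → Fin r → Finset V :=
    fun x i => (G.neighborFinset x).filter (fun y => col s(x,y) = i) with hNidef
  have hdeg : ∀ x : V, G.degree x = ∑ i : Fin r, (Ni x i).card := by
    intro x
    rw [degree]
    exact card_eq_sum_card_fiberwise (fun y _ => mem_univ (col s(x,y)))
  have hNbound : ∀ i, ∀ (x : V), x ∈ V' → ∀ p, p ∈ P i → x ∈ p →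
      (Ni x i).card + 1 ≤ (S i).card + p.card := by
    intro i x hx p hp hxp
    have hsub2 : Ni x i ⊆ (S i ∪ p).erase x := by
      intro y hy
      obtain ⟨hyn, hcol⟩ := mem_filter.mp hy
      have hadj : G.Adj x y := (mem_neighborFinset G x y).mp hyn
      refine mem_erase.mpr ⟨fun h => (G.ne_of_adj hadj) h.symm, ?_⟩
      by_cases hyS : y ∈ S i
      · exact mem_union_left _ hyS
      · refine mem_union_right _ ?_
        refine hPclosed i p hp x hxp y ?_ hyS
        rw [hEidef, mem_filter, mem_edgeFinset]
        exact ⟨hadj, hcol⟩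
    have hxup : x ∈ S i ∪ p := mem_union_right _ hxp
    have hdisjSp : Disjoint (S i) p := by
      rw [Finset.disjoint_left]
      intro a haS hap
      have : a ∈ univ \ S i := by
        rw [← hPcover i]
        exact mem_biUnion.mpr ⟨p, hp, hap⟩
      exact (mem_sdiff.mp this).2 haS
    calc (Ni x i).card + 1 ≤ ((S i ∪ p).erase x).card + 1 := by
          have := card_le_card hsub2
          omega
      _ = (S i ∪ p).card := by rw [card_erase_of_mem hxup]; have := card_pos.mpr ⟨x, hxup⟩; omega
      _ = (S i).card + p.card := card_union_of_disjoint hdisjSp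
  have hpairbound : ∀ i : Fin r, (Ni u i).card + (Ni v i).card ≤ 2 * K := by
    intro i
    obtain ⟨pu, hpu, hupu⟩ := hpart u huV' i
    obtain ⟨pv, hpv, hvpv⟩ := hpart v hvV' i
    have hpupv : pu ≠ pv := by
      intro h
      exact hsep i pu hpu ⟨hupu, h ▸ hvpv⟩
    have hexbound : (pu.card - 1) + (pv.card - 1) ≤ ex i := by
      rw [hexapp i]
      calc (pu.card - 1) + (pv.card - 1) = ∑ p ∈ ({pu, pv} : Finset (Finset V)), (p.card - 1) := by
            rw [sum_pair hpupv]
        _ ≤ ∑ p ∈ P i, (p.card - 1) :=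
            sum_le_sum_of_subset (insert_subset hpu (by simpa using hpv))
    have h1 := hNbound i u huV' pu hpu hupu
    have h2 := hNbound i v hvV' pv hpv hvpv
    have h3 := card_pos.mpr (hPne i pu hpu)
    have h4 := card_pos.mpr (hPne i pv hpv)
    have h5 := (hKEY i).2
    omega
  have hdu : δ ≤ G.degree u := G.minDegree_le_degree u
  have hdv : δ ≤ G.degree v := G.minDegree_le_degree v
  have htotal : G.degree u + G.degree v ≤ 2 * K * r := by
    rw [hdeg u, hdeg v, ← sum_add_distrib]
    calc ∑ i : Fin r, ((Ni u i).card + (Ni v i).card) ≤ ∑ _i : Fin r, 2 * K :=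
          sum_le_sum fun i _ => hpairbound i
      _ = 2 * K * r := by rw [sum_const, card_univ, Fintype.card_fin, smul_eq_mul, mul_comm]
    
  have h9 : 2 * K * r = 2 * (r * K) := by ring
  omega
end

section
/- Let B be a finite bipartite graph with vertex classes X and Y such that for every subset Z ⊆ Y we have |N(Z)| ≥ 2|Z|. Then B contains two matchings M₁ and M₂, each covering every vertex of Y, such that the sets V(M₁) ∩ X and V(M₂) ∩ X are disjoint. -/
/-- Bigamy variant of Hall's theorem: let `B` be a finite bipartite graph with parts
`α` (playing the role of `X`) and `β` (playing the role of `Y`), given by the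
adjacency relation `R`.  If `|N(Z)| ≥ 2|Z|` for every `Z ⊆ Y`, then there are two
matchings covering `Y` (encoded as injections `f₁ f₂ : β → α` matching each `y` to a
neighbour) whose sets of used `X`-vertices are disjoint. -/
theorem stmt_6 {α β : Type*} [Fintype α] [Fintype β] (R : α → β → Prop)
    (h : ∀ Z : Finset β, 2 * Z.card ≤ {x : α | ∃ y ∈ Z, R x y}.ncard) :
    ∃ f₁ f₂ : β → α, Function.Injective f₁ ∧ Function.Injective f₂ ∧
      (∀ y, R (f₁ y) y) ∧ (∀ y, R (f₂ y) y) ∧ ∀ y y', f₁ y ≠ f₂ y' := by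
  classical
  set t : β × Bool → Finset α := fun p => {x : α | R x p.1}.toFinset with ht
  have hall : ∀ s : Finset (β × Bool), s.card ≤ (s.biUnion t).card := by
    intro s
    set Z : Finset β := s.image Prod.fst with hZ
    have h1 : s.card ≤ 2 * Z.card := by
      have hs : s ⊆ Z ×ˢ (Finset.univ : Finset Bool) := by
        intro p hp
        simp only [Finset.mem_product, Finset.mem_univ, and_true, hZ]
        exact Finset.mem_image_of_mem _ hp
      calc s.card ≤ (Z ×ˢ (Finset.univ : Finset Bool)).card := Finset.card_le_card hs
        _ = Z.card * 2 := by simp [Finset.card_product]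
        _ = 2 * Z.card := Nat.mul_comm _ _
    have h2 : {x : α | ∃ y ∈ Z, R x y}.ncard ≤ (s.biUnion t).card := by
      have : {x : α | ∃ y ∈ Z, R x y}.ncard = ({x : α | ∃ y ∈ Z, R x y}.toFinset).card :=
        Set.ncard_eq_toFinset_card' _
      rw [this]
      apply Finset.card_le_card
      intro x hx
      simp only [Set.mem_toFinset, Set.mem_setOf_eq] at hx
      obtain ⟨y, hy, hR⟩ := hx
      simp only [hZ, Finset.mem_image] at hy
      obtain ⟨p, hp, hfst⟩ := hy
      refine Finset.mem_biUnion.2 ⟨p, hp, ?_⟩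
      simp [ht, hfst, hR]
    exact h1.trans ((h Z).trans h2)
  obtain ⟨g, hg_inj, hg_mem⟩ :=
    (Finset.all_card_le_biUnion_card_iff_existsInjective' t).1 hall
  have hgR : ∀ p, R (g p) p.1 := by
    intro p
    have := hg_mem p
    simpa [ht] using this
  refine ⟨fun y => g (y, true), fun y => g (y, false), ?_, ?_, ?_, ?_, ?_⟩
  · intro a b hab
    have := hg_inj hab
    simpa using congrArg Prod.fst this
  · intro a b hab
    have := hg_inj hab
    simpa using congrArg Prod.fst this
  · intro y; exact hgR (y, true)
  · intro y; exact hgR (y, false)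
  · intro y y' hne
    have := hg_inj hne
    simpa using congrArg Prod.snd this
end

section
/- Let n, r ≥ 2 be integers and let α ∈ [1/2 + 1/(2r), 1) with αn an integer. Partition n vertices into sets V₁,…,V_r with |V_r| = αn and the remaining (1−α)n vertices distributed as evenly as possible among V₁,…,V_{r−1}. Let F be the graph whose edges are all pairs intersecting V_r, coloured so that edges between V_i and V_r get colour i (for i ≤ r−1) and edges inside V_r get colour r. Then F has minimum degree αn, and every Hamilton cycle of F contains exactly (2α−1)n edges of colour r and exactly 2|V_i| edges of colour i for each i ∈ [r−1]. -/
open SimpleGraph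

lemma countP_edges_aux {V : Type*} [DecidableEq V] {G : SimpleGraph V} {x y : V}
    (p : G.Walk x y) (w : V) :
    p.edges.countP (fun e => decide (w ∈ e)) =
      p.support.dropLast.count w + p.support.tail.count w := by
  induction p with
  | nil => simp
  | @cons x' y' z' h q ih =>
    have hne : x' ≠ y' := h.ne
    have hdl : (x' :: q.support).dropLast = x' :: q.support.dropLast := by
      rw [List.dropLast_cons_of_ne_nil q.support_ne_nil]
    have hq : q.support = y' :: q.support.tail := q.support_eq_cons
    rw [SimpleGraph.Walk.edges_cons, List.countP_cons, ih,
      SimpleGraph.Walk.support_cons, hdl, List.tail_cons, List.count_cons]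
    nth_rewrite 4 [hq]
    rw [List.count_cons]
    by_cases h1 : w = x'
    · subst h1
      simp [Sym2.mem_iff, Ne.symm hne]; omega
    · by_cases h2 : w = y'
      · subst h2
        simp [Sym2.mem_iff, hne, fun h : x' = w => h1 h.symm]; omega
      · have hx : x' ≠ w := fun h => h1 h.symm
        have hy : y' ≠ w := fun h => h2 h.symm
        simp [Sym2.mem_iff, h1, h2, hx, hy]

lemma countP_edges_hamiltonian {V : Type*} [DecidableEq V] [Fintype V]
    {G : SimpleGraph V} {v : V} {c : G.Walk v v} (hc : c.IsHamiltonianCycle)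
    (w : V) : c.edges.countP (fun e => decide (w ∈ e)) = 2 := by
  have htail : c.support.tail.count w = 1 :=
    (SimpleGraph.Walk.isHamiltonianCycle_iff_isCycle_and_support_count_tail_eq_one.mp
      hc).2 w
  have hlast : c.support.getLast c.support_ne_nil = v := c.getLast_support
  have hsplit : c.support = c.support.dropLast ++ [v] := by
    conv_lhs => rw [← List.dropLast_append_getLast c.support_ne_nil]
    rw [hlast]
  have hdl : c.support.dropLast.count w = 1 := by
    by_cases hw : w = v
    · subst hw
      have h2 : c.support.count w = 2 := hc.count_support_self
      rw [hsplit, List.count_append] at h2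
      simp at h2
      omega
    · have h1 : c.support.count w = 1 := hc.support_count_of_ne (Ne.symm hw)
      rw [hsplit, List.count_append, List.count_singleton',
        if_neg (fun h : v = w => hw h.symm)] at h1
      omega
  rw [countP_edges_aux, htail, hdl]

/-- Construction 2.1.  Let `n, r ≥ 2`, `α ∈ [1/2 + 1/(2r), 1)` with `a = αn` an
integer.  Partition the `n` vertices into parts `P i` (`i : Fin r`) with a
distinguished part `P ℓ` of size `a`, the others of size `⌊(n−a)/(r−1)⌋` or
`⌈(n−a)/(r−1)⌉`.  Let `F` have as edges all pairs meeting `P ℓ`, coloured so that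
edges between `P i` and `P ℓ` (for `i ≠ ℓ`) get colour `i` and edges inside `P ℓ`
get colour `ℓ`.  Then `F` has minimum degree `a = αn`, and every Hamilton cycle of
`F` contains exactly `(2α−1)n = 2a − n` edges of colour `ℓ` and exactly `2|P i|`
edges of each colour `i ≠ ℓ`. -/
theorem stmt_10 {V : Type*} [Fintype V] [DecidableEq V]
    (r : ℕ) (hr : 2 ≤ r) (a : ℕ)
    (hα₁ : (Fintype.card V : ℝ) * (1 / 2 + 1 / (2 * r)) ≤ a)
    (hα₂ : a < Fintype.card V)
    (P : Fin r → Finset V) (ℓ : Fin r)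
    (hdisj : ∀ i j, i ≠ j → Disjoint (P i) (P j))
    (hcover : ∀ v : V, ∃ i, v ∈ P i)
    (hsizeℓ : (P ℓ).card = a)
    (hsizes : ∀ i, i ≠ ℓ →
      (P i).card = (Fintype.card V - a) / (r - 1) ∨
      (P i).card = (Fintype.card V - a + (r - 2)) / (r - 1))
    (F : SimpleGraph V) [DecidableRel F.Adj]
    (hadj : ∀ u v, F.Adj u v ↔ u ≠ v ∧ (u ∈ P ℓ ∨ v ∈ P ℓ))
    (col : Sym2 V → Fin r)
    (hcol₁ : ∀ u v, F.Adj u v → u ∈ P ℓ → v ∈ P ℓ → col s(u, v) = ℓ)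
    (hcol₂ : ∀ u v, F.Adj u v → ∀ i, i ≠ ℓ → u ∈ P i → col s(u, v) = i) :
    F.minDegree = a ∧
    ∀ (v : V) (c : F.Walk v v), c.IsHamiltonianCycle →
      ((c.edges.filter fun e => decide (col e = ℓ)).length + Fintype.card V = 2 * a ∧
       ∀ i, i ≠ ℓ →
        (c.edges.filter fun e => decide (col e = i)).length = 2 * (P i).card) := by
  have hn1 : 0 < Fintype.card V := lt_of_le_of_lt (Nat.zero_le a) hα₂
  haveI : Nonempty V := Fintype.card_pos_iff.mp hn1
  -- degrees
  have hdegℓ : ∀ v ∈ P ℓ, F.degree v = Fintype.card V - 1 := by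
    intro v hv
    have hnb : F.neighborFinset v = Finset.univ.erase v := by
      ext u
      simp only [mem_neighborFinset, Finset.mem_erase, Finset.mem_univ, and_true]
      rw [hadj]
      constructor
      · rintro ⟨h1, _⟩; exact Ne.symm h1
      · intro h; exact ⟨Ne.symm h, Or.inl hv⟩
    rw [SimpleGraph.degree, hnb, Finset.card_erase_of_mem (Finset.mem_univ v),
      Finset.card_univ]
  have hdegout : ∀ v, v ∉ P ℓ → F.degree v = a := by
    intro v hv
    have hnb : F.neighborFinset v = P ℓ := by
      ext u
      simp only [mem_neighborFinset]
      rw [hadj]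
      constructor
      · rintro ⟨h1, h2 | h2⟩
        · exact absurd h2 hv
        · exact h2
      · intro h
        exact ⟨fun he => hv (he ▸ h), Or.inr h⟩
    rw [SimpleGraph.degree, hnb, hsizeℓ]
  have hex : ∃ v, v ∉ P ℓ := by
    by_contra h
    push_neg at h
    have : P ℓ = Finset.univ := Finset.eq_univ_iff_forall.mpr h
    rw [this, Finset.card_univ] at hsizeℓ
    omega
  obtain ⟨v₀, hv₀⟩ := hex
  have hmin : F.minDegree = a := by
    apply le_antisymm
    · have := F.minDegree_le_degree v₀
      rwa [hdegout v₀ hv₀] at this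
    · apply SimpleGraph.le_minDegree_of_forall_le_degree
      intro v
      by_cases hv : v ∈ P ℓ
      · rw [hdegℓ v hv]; omega
      · rw [hdegout v hv]
  refine ⟨hmin, ?_⟩
  intro v c hc
  -- per edge counting lemma
  have hkey : ∀ i, i ≠ ℓ → ∀ e ∈ F.edgeSet,
      ((P i).filter (fun w => w ∈ e)).card = if col e = i then 1 else 0 := by
    intro i hi e
    induction e using Sym2.ind with
    | _ u w =>
      intro he
      rw [SimpleGraph.mem_edgeSet] at he
      obtain ⟨hne, hor⟩ := (hadj u w).mp he
      by_cases hu : u ∈ P ℓ <;> by_cases hw : w ∈ P ℓ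
      · have hcol := hcol₁ u w he hu hw
        rw [hcol, if_neg (Ne.symm hi), Finset.card_eq_zero, Finset.filter_eq_empty_iff]
        intro x hx
        rw [Sym2.mem_iff]
        rintro (rfl | rfl)
        · exact (Finset.disjoint_left.mp (hdisj i ℓ hi)) hx hu
        · exact (Finset.disjoint_left.mp (hdisj i ℓ hi)) hx hw
      · obtain ⟨j, hj⟩ := hcover w
        have hjℓ : j ≠ ℓ := fun h => hw (h ▸ hj)
        have hcol : col s(u, w) = j := by
          rw [Sym2.eq_swap]
          exact hcol₂ w u he.symm j hjℓ hj
        by_cases hij : i = j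
        · subst hij
          rw [hcol, if_pos rfl]
          rw [Finset.card_eq_one]
          refine ⟨w, ?_⟩
          ext x
          simp only [Finset.mem_filter, Sym2.mem_iff, Finset.mem_singleton]
          constructor
          · rintro ⟨hx, rfl | rfl⟩
            · exact absurd hu (Finset.disjoint_left.mp (hdisj i ℓ hi) hx)
            · rfl
          · rintro rfl
            exact ⟨hj, Or.inr rfl⟩
        · rw [hcol, if_neg (fun h : j = i => hij h.symm), Finset.card_eq_zero,
            Finset.filter_eq_empty_iff]
          intro x hx
          rw [Sym2.mem_iff]
          rintro (rfl | rfl)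
          · exact (Finset.disjoint_left.mp (hdisj i ℓ hi)) hx hu
          · exact (Finset.disjoint_left.mp (hdisj i j hij)) hx hj
      · obtain ⟨j, hj⟩ := hcover u
        have hjℓ : j ≠ ℓ := fun h => hu (h ▸ hj)
        have hcol : col s(u, w) = j := hcol₂ u w he j hjℓ hj
        by_cases hij : i = j
        · subst hij
          rw [hcol, if_pos rfl, Finset.card_eq_one]
          refine ⟨u, ?_⟩
          ext x
          simp only [Finset.mem_filter, Sym2.mem_iff, Finset.mem_singleton]
          constructor
          · rintro ⟨hx, rfl | rfl⟩
            · rfl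
            · exact absurd hw (Finset.disjoint_left.mp (hdisj i ℓ hi) hx)
          · rintro rfl
            exact ⟨hj, Or.inl rfl⟩
        · rw [hcol, if_neg (fun h : j = i => hij h.symm), Finset.card_eq_zero,
            Finset.filter_eq_empty_iff]
          intro x hx
          rw [Sym2.mem_iff]
          rintro (rfl | rfl)
          · exact (Finset.disjoint_left.mp (hdisj i j hij)) hx hj
          · exact (Finset.disjoint_left.mp (hdisj i ℓ hi)) hx hw
      · rcases hor with h | h
        · exact absurd h hu
        · exact absurd h hw
  -- countP over list equals sum over P i of incidence counts
  have hsum : ∀ (M : List (Sym2 V)), (∀ e ∈ M, e ∈ F.edgeSet) → ∀ i, i ≠ ℓ →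
      M.countP (fun e => decide (col e = i)) =
        ∑ w ∈ P i, M.countP (fun e => decide (w ∈ e)) := by
    intro M
    induction M with
    | nil => simp
    | cons e M ih =>
      intro hM i hi
      simp only [List.countP_cons]
      rw [Finset.sum_add_distrib, ← ih (fun e' he' => hM e' (List.mem_cons_of_mem _ he')) i hi]
      congr 1
      have h1 := hkey i hi e (hM e List.mem_cons_self)
      rw [Finset.card_filter] at h1
      simp only [decide_eq_true_eq]
      exact h1.symm
  have hEdge : ∀ e ∈ c.edges, e ∈ F.edgeSet := fun e he => c.edges_subset_edgeSet he
  -- the count for colours i ≠ ℓ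
  have hcount : ∀ i, i ≠ ℓ →
      c.edges.countP (fun e => decide (col e = i)) = 2 * (P i).card := by
    intro i hi
    rw [hsum c.edges hEdge i hi]
    rw [Finset.sum_congr rfl (fun w _ => countP_edges_hamiltonian hc w)]
    rw [Finset.sum_const, smul_eq_mul, mul_comm]
  -- total count over all colours equals length
  have htot : ∀ (M : List (Sym2 V)),
      ∑ i : Fin r, M.countP (fun e => decide (col e = i)) = M.length := by
    intro M
    induction M with
    | nil => simp
    | cons e M ih =>
      simp only [List.countP_cons, List.length_cons]
      rw [Finset.sum_add_distrib, ih]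
      congr 1
      have : ∑ i : Fin r, (if col e = i then 1 else 0) = 1 := by
        rw [Finset.sum_ite_eq Finset.univ (col e) (fun _ => 1), if_pos (Finset.mem_univ _)]
      simpa using this
  -- sum of part sizes
  have hparts : ∑ i : Fin r, (P i).card = Fintype.card V := by
    have hbu : Finset.univ.biUnion P = Finset.univ := by
      apply Finset.eq_univ_iff_forall.mpr
      intro x
      rw [Finset.mem_biUnion]
      obtain ⟨i, hi⟩ := hcover x
      exact ⟨i, Finset.mem_univ i, hi⟩
    have := Finset.card_biUnion (s := (Finset.univ : Finset (Fin r))) (t := P)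
      (fun i _ j _ hij => hdisj i j hij)
    rw [hbu, Finset.card_univ] at this
    exact this.symm
  have hlen : c.edges.length = Fintype.card V := by
    rw [SimpleGraph.Walk.length_edges, hc.length_eq]
  -- split sums at ℓ
  have hsplit1 : c.edges.countP (fun e => decide (col e = ℓ)) +
      ∑ i ∈ Finset.univ.erase ℓ, c.edges.countP (fun e => decide (col e = i)) =
      Fintype.card V := by
    have h := htot c.edges
    rw [← Finset.add_sum_erase Finset.univ _ (Finset.mem_univ ℓ), hlen] at h
    exact h
  have hsplit2 : a + ∑ i ∈ Finset.univ.erase ℓ, (P i).card = Fintype.card V := by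
    have h := hparts
    rw [← Finset.add_sum_erase Finset.univ _ (Finset.mem_univ ℓ), hsizeℓ] at h
    exact h
  have hsum2 : ∑ i ∈ Finset.univ.erase ℓ, c.edges.countP (fun e => decide (col e = i)) =
      2 * ∑ i ∈ Finset.univ.erase ℓ, (P i).card := by
    rw [Finset.mul_sum]
    exact Finset.sum_congr rfl (fun i hi => hcount i (Finset.ne_of_mem_erase hi))
  constructor
  · rw [← List.countP_eq_length_filter]
    rw [hsum2] at hsplit1
    omega
  · intro i hi
    rw [← List.countP_eq_length_filter]
    exact hcount i hi
end

section
/- Let n, r ≥ 2 and α ∈ (0, 1) with αn an integer. Partition n vertices into sets V₁,…,V_{r+1} with |V_{r+1}| = (1−α)n and |V_i| ∈ {⌊αn/r⌋, ⌈αn/r⌉} for i ∈ [r], and let F be the graph whose edges are all pairs meeting ∪_{i∈[r]} V_i, coloured so that for i ≤ j ≤ r every edge between V_i and V_j has colour i and every edge between V_i and V_{r+1} has colour i. Then F has minimum degree αn, every Hamilton cycle of F contains at most 2⌈αn/r⌉ edges of any single colour, and (for n even) every perfect matching contains at most ⌈αn/r⌉ edges of any single colour. -/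
open SimpleGraph

private lemma countP_or_le' {β : Type*} (l : List β) (q r : β → Bool) :
    l.countP (fun b => q b || r b) ≤ l.countP q + l.countP r := by
  induction l with
  | nil => simp
  | cons a l ih =>
    simp only [List.countP_cons]
    cases hq : q a <;> cases hr : r a <;> simp <;> omega

private lemma walk_countP_edges_le {V : Type*} [DecidableEq V] {G : SimpleGraph V} {u v : V}
    (w : G.Walk u v) (x : V) :
    w.edges.countP (fun e => decide (x ∈ e)) ≤
      w.support.dropLast.count x + w.support.tail.count x := by
  have hedges : w.edges = w.darts.map SimpleGraph.Dart.edge := rfl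
  rw [hedges, List.countP_map]
  have h1 : (w.darts.countP ((fun e => decide (x ∈ e)) ∘ SimpleGraph.Dart.edge)) ≤
      w.darts.countP (fun d => decide (x = d.fst)) + w.darts.countP (fun d => decide (x = d.snd)) := by
    refine le_trans (le_of_eq (List.countP_congr ?_)) (countP_or_le' _ _ _)
    rintro ⟨⟨y, z⟩, hyz⟩ _
    simp [SimpleGraph.Dart.edge]
  refine h1.trans ?_
  have h2 : w.darts.countP (fun d => decide (x = d.fst)) = w.support.dropLast.count x := by
    rw [← w.map_fst_darts, List.count, List.countP_map]
    exact List.countP_congr fun d _ => by simp [Function.comp]; exact eq_comm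
  have h3 : w.darts.countP (fun d => decide (x = d.snd)) = w.support.tail.count x := by
    rw [← w.map_snd_darts, List.count, List.countP_map]
    exact List.countP_congr fun d _ => by simp [Function.comp]; exact eq_comm
  omega

private lemma ham_countP_le_two {V : Type*} [DecidableEq V] {G : SimpleGraph V} {v : V}
    {c : G.Walk v v} (hc : c.IsHamiltonianCycle) (x : V) :
    c.edges.countP (fun e => decide (x ∈ e)) ≤ 2 := by
  have h1 : c.support.tail.count x = 1 := by
    rw [← SimpleGraph.Walk.support_tail_of_not_nil _ hc.isCycle.not_nil]
    exact hc.isHamiltonian_tail x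
  have h2 : c.support.dropLast.count x = 1 := by
    have hne : c.support ≠ [] := c.support_ne_nil
    have hl := List.dropLast_append_getLast hne
    rw [c.getLast_support] at hl
    have hcnt := congrArg (List.count x) hl
    rw [List.count_append] at hcnt
    by_cases hx : x = v
    · subst hx
      have h2' := hc.count_support_self (a := x)
      simp at hcnt
      omega
    · have h2' := hc.support_count_of_ne (Ne.symm hx)
      have : List.count x [v] = 0 := List.count_eq_zero.mpr (by simp [hx])
      omega
  calc c.edges.countP (fun e => decide (x ∈ e)) ≤ _ := walk_countP_edges_le c x
    _ ≤ 2 := by omega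

/-- Construction 2.2.  Let `n, r ≥ 2` and `α ∈ (0,1)` with `a = αn` an integer.
Partition the vertices by `p : V → Fin (r+1)` with the last part of size `n − a` and
the other parts of size `⌊a/r⌋` or `⌈a/r⌉`.  Let `F` have as edges all pairs meeting
the union of the first `r` parts, and colour an edge by the minimum of the part
indices of its endpoints.  Then `F` has minimum degree `a = αn`, every Hamilton
cycle of `F` has at most `2⌈a/r⌉` edges of any single colour, and (for `n` even)
every perfect matching has at most `⌈a/r⌉` edges of any single colour. -/
theorem stmt_11 {V : Type*} [Fintype V] [DecidableEq V]
    (r : ℕ) (hr : 2 ≤ r) (a : ℕ) (ha₀ : 0 < a) (ha₁ : a < Fintype.card V)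
    (p : V → Fin (r + 1))
    (hlast : {v | p v = Fin.last r}.ncard = Fintype.card V - a)
    (hsizes : ∀ i : Fin (r + 1), i ≠ Fin.last r →
      {v | p v = i}.ncard = a / r ∨ {v | p v = i}.ncard = (a + r - 1) / r)
    (F : SimpleGraph V) [DecidableRel F.Adj]
    (hadj : ∀ u v, F.Adj u v ↔ u ≠ v ∧ (p u ≠ Fin.last r ∨ p v ≠ Fin.last r))
    (col : Sym2 V → Fin r)
    (hcol : ∀ u v, F.Adj u v → (col s(u, v) : ℕ) = min (p u : ℕ) (p v : ℕ)) :
    F.minDegree = a ∧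
    (∀ (v : V) (c : F.Walk v v), c.IsHamiltonianCycle →
      ∀ k : Fin r,
        (c.edges.filter fun e => decide (col e = k)).length ≤ 2 * ((a + r - 1) / r)) ∧
    (Even (Fintype.card V) → ∀ M : F.Subgraph, M.IsPerfectMatching →
      ∀ k : Fin r, {e ∈ M.edgeSet | col e = k}.ncard ≤ (a + r - 1) / r) := by
  classical
  haveI : Nonempty V := Fintype.card_pos_iff.mp (by omega)
  -- size bound for the colour classes
  have size_set : ∀ k : Fin r, {x : V | (p x : ℕ) = (k : ℕ)}.ncard ≤ (a + r - 1) / r := by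
    intro k
    have hklt := k.isLt
    have hk : (k : ℕ) < r + 1 := by omega
    have hik : (⟨(k : ℕ), hk⟩ : Fin (r + 1)) ≠ Fin.last r := by
      simp only [ne_eq, Fin.ext_iff, Fin.val_last]
      omega
    have hset : {x : V | (p x : ℕ) = (k : ℕ)} = {x : V | p x = ⟨(k : ℕ), hk⟩} := by
      ext x
      simp [Fin.ext_iff]
    rw [hset]
    rcases hsizes _ hik with h | h <;> rw [h]
    exact Nat.div_le_div_right (by omega)
  have size_fin : ∀ k : Fin r,
      (Finset.univ.filter fun x => (p x : ℕ) = (k : ℕ)).card ≤ (a + r - 1) / r := by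
    intro k
    have := size_set k
    rwa [Set.ncard_eq_toFinset_card', Set.toFinset_setOf] at this
  -- every colour-k edge has an endpoint in part k
  have key : ∀ e ∈ F.edgeSet, ∀ k : Fin r, col e = k →
      ∃ x, x ∈ e ∧ (p x : ℕ) = (k : ℕ) := by
    intro e
    induction e using Sym2.ind with
    | _ u w =>
      intro he k hk
      rw [SimpleGraph.mem_edgeSet] at he
      have hmin := hcol u w he
      rw [hk] at hmin
      rcases le_total (p u : ℕ) (p w : ℕ) with hle | hle
      · exact ⟨u, by simp, by rw [hmin]; exact (min_eq_left hle).symm⟩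
      · exact ⟨w, by simp, by rw [hmin]; exact (min_eq_right hle).symm⟩
  -- the last part as a finset
  have hlastF : (Finset.univ.filter fun u => p u = Fin.last r).card = Fintype.card V - a := by
    have := hlast
    rwa [Set.ncard_eq_toFinset_card', Set.toFinset_setOf] at this
  -- degrees
  have hdeg_last : ∀ u, p u = Fin.last r → F.degree u = a := by
    intro u hu
    have hnb : F.neighborFinset u = Finset.univ.filter fun w => ¬ p w = Fin.last r := by
      ext w
      simp only [SimpleGraph.mem_neighborFinset, Finset.mem_filter, Finset.mem_univ, true_and]
      rw [hadj u w]
      constructor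
      · rintro ⟨-, h | h⟩
        · exact absurd hu h
        · exact h
      · intro h
        exact ⟨fun huw => h (huw ▸ hu), Or.inr h⟩
    have hdeg : F.degree u = (Finset.univ.filter fun w => ¬ p w = Fin.last r).card :=
      congrArg Finset.card hnb
    have hsplit := Finset.card_filter_add_card_filter_not
      (s := (Finset.univ : Finset V)) (p := fun w => p w = Fin.last r)
    rw [Finset.card_univ] at hsplit
    omega
  have hdeg_other : ∀ u, p u ≠ Fin.last r → F.degree u = Fintype.card V - 1 := by
    intro u hu
    have hnb : F.neighborFinset u = Finset.univ.erase u := by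
      ext w
      simp only [SimpleGraph.mem_neighborFinset, Finset.mem_erase, Finset.mem_univ, and_true]
      rw [hadj u w]
      constructor
      · rintro ⟨h, -⟩
        exact fun hw => h hw.symm
      · intro h
        exact ⟨fun hw => h hw.symm, Or.inl hu⟩
    have hdeg : F.degree u = (Finset.univ.erase u).card := congrArg Finset.card hnb
    rw [Finset.card_erase_of_mem (Finset.mem_univ u), Finset.card_univ] at hdeg
    exact hdeg
  refine ⟨?_, ?_, ?_⟩
  · -- min degree
    have hex : {v | p v = Fin.last r}.Nonempty := by
      rw [← Set.ncard_pos (Set.toFinite _), hlast]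
      omega
    obtain ⟨v₀, hv₀⟩ := hex
    refine le_antisymm ?_ ?_
    · rw [← hdeg_last v₀ hv₀]
      exact F.minDegree_le_degree v₀
    · refine F.le_minDegree_of_forall_le_degree a fun u => ?_
      by_cases hu : p u = Fin.last r
      · rw [hdeg_last u hu]
      · rw [hdeg_other u hu]
        omega
  · -- Hamilton cycles
    intro v c hc k
    set L := c.edges.filter fun e => decide (col e = k) with hL
    have hnodup : L.Nodup := hc.isCycle.edges_nodup.filter _
    have hlen : L.length = L.toFinset.card := (List.toFinset_card_of_nodup hnodup).symm
    set t : Finset V := Finset.univ.filter fun x => (p x : ℕ) = (k : ℕ) with ht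
    have hmemL : ∀ e ∈ L.toFinset, ∃ x, x ∈ e ∧ (p x : ℕ) = (k : ℕ) := by
      intro e he
      rw [List.mem_toFinset, hL, List.mem_filter, decide_eq_true_eq] at he
      exact key e (c.edges_subset_edgeSet he.1) k he.2
    set g : Sym2 V → V := fun e =>
      if h : ∃ x, x ∈ e ∧ (p x : ℕ) = (k : ℕ) then h.choose else v with hg
    have hgspec : ∀ e ∈ L.toFinset, g e ∈ e ∧ (p (g e) : ℕ) = (k : ℕ) := by
      intro e he
      have h := hmemL e he
      simp only [hg, dif_pos h]
      exact ⟨h.choose_spec.1, h.choose_spec.2⟩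
    have hfib : ∀ x ∈ t, (L.toFinset.filter fun e => g e = x).card ≤ 2 := by
      intro x _
      have hsub : (L.toFinset.filter fun e => g e = x) ⊆
          (c.edges.filter fun e => decide (x ∈ e)).toFinset := by
        intro e he
        obtain ⟨he1, he2⟩ := Finset.mem_filter.mp he
        have hce : e ∈ c.edges := by
          rw [List.mem_toFinset, hL, List.mem_filter] at he1
          exact he1.1
        rw [List.mem_toFinset, List.mem_filter, decide_eq_true_eq]
        refine ⟨hce, ?_⟩
        rw [← he2]
        exact (hgspec e he1).1
      calc (L.toFinset.filter fun e => g e = x).card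
          ≤ (c.edges.filter fun e => decide (x ∈ e)).toFinset.card := Finset.card_le_card hsub
        _ ≤ (c.edges.filter fun e => decide (x ∈ e)).length := List.toFinset_card_le _
        _ = c.edges.countP fun e => decide (x ∈ e) := by rw [List.countP_eq_length_filter]
        _ ≤ 2 := ham_countP_le_two hc x
    have hcard := Finset.card_le_mul_card_image_of_maps_to
      (f := g) (s := L.toFinset) (t := t)
      (fun e he => Finset.mem_filter.mpr ⟨Finset.mem_univ _, (hgspec e he).2⟩) 2 hfib
    calc L.length = L.toFinset.card := hlen
      _ ≤ 2 * t.card := hcard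
      _ ≤ 2 * ((a + r - 1) / r) := Nat.mul_le_mul_left 2 (size_fin k)
  · -- perfect matchings
    intro _ M hM k
    obtain ⟨v⟩ := (inferInstance : Nonempty V)
    set S : Set (Sym2 V) := {e ∈ M.edgeSet | col e = k} with hS
    set g : Sym2 V → V := fun e =>
      if h : ∃ x, x ∈ e ∧ (p x : ℕ) = (k : ℕ) then h.choose else v with hg
    have hgspec : ∀ e ∈ S, g e ∈ e ∧ (p (g e) : ℕ) = (k : ℕ) := by
      intro e he
      have h : ∃ x, x ∈ e ∧ (p x : ℕ) = (k : ℕ) :=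
        key e (M.edgeSet_subset he.1) k he.2
      simp only [hg, dif_pos h]
      exact ⟨h.choose_spec.1, h.choose_spec.2⟩
    have hchar : ∀ e ∈ M.edgeSet, ∀ x ∈ e, ∃ y, M.Adj x y ∧ e = s(x, y) := by
      intro e
      induction e using Sym2.ind with
      | _ u w =>
        intro he x hx
        rw [SimpleGraph.Subgraph.mem_edgeSet] at he
        rcases Sym2.mem_iff.mp hx with rfl | rfl
        · exact ⟨w, he, rfl⟩
        · exact ⟨u, he.symm, Sym2.eq_swap⟩
    have hinj : Set.InjOn g S := by
      intro e1 h1 e2 h2 hgeq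
      obtain ⟨y1, hy1, he1⟩ := hchar e1 h1.1 (g e1) (hgspec e1 h1).1
      obtain ⟨y2, hy2, he2⟩ := hchar e2 h2.1 (g e2) (hgspec e2 h2).1
      rw [hgeq] at hy1 he1
      have hy12 : y1 = y2 := (hM.1 (hM.2 (g e2))).unique hy1 hy2
      rw [he1, hy12]
      exact he2.symm
    have hmaps : ∀ e ∈ S, g e ∈ {x : V | (p x : ℕ) = (k : ℕ)} := fun e he => (hgspec e he).2
    exact (Set.ncard_le_ncard_of_injOn g hmaps hinj (Set.toFinite _)).trans (size_set k)
end

section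
/- Let n and r ≥ 2 be integers. Partition the complete graph K_n into parts V₁,…,V_{r+1} of sizes ⌊n/(r+1)⌋ or ⌈n/(r+1)⌉ with |V_{r+1}| = ⌈n/(r+1)⌉, and colour the edges so that edges inside V_i get colour i for i ∈ [r], edges inside V_{r+1} get colour r, and edges between V_i and V_j with i < j get colour i. Then every Hamilton cycle of K_n contains at most 2⌈(n−1)/(r+1)⌉ edges of the same colour, and the maximum monochromatic matching has size at most ⌈(n−1)/(r+1)⌉. -/
open SimpleGraph Finset

lemma aux_path_count {V : Type*} [DecidableEq V] {G : SimpleGraph V} :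
    ∀ {y x : V} (q : G.Walk y x), q.IsPath → y ≠ x →
      (q.edges.countP fun e => decide (x ∈ e)) = 1 := by
  intro y x q
  induction q with
  | nil => intro _ h; exact absurd rfl h
  | @cons a b c h' q ih =>
    intro hp hyx
    rw [SimpleGraph.Walk.edges_cons, List.countP_cons]
    by_cases hbx : b = c
    · subst hbx
      have hq : q = SimpleGraph.Walk.nil := (SimpleGraph.Walk.isPath_iff_eq_nil).mp hp.of_cons
      subst hq
      simp [Sym2.mem_iff]
    · have h1 := ih hp.of_cons hbx
      have : ¬ (c ∈ s(a, b)) := by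
        rw [Sym2.mem_iff]
        push_neg
        exact ⟨fun h => hyx h.symm, fun h => hbx h.symm⟩
      simp [h1, this]

lemma aux_cycle_count_start {V : Type*} [DecidableEq V] {G : SimpleGraph V} {x : V}
    (c : G.Walk x x) (hc : c.IsCycle) :
    (c.edges.countP fun e => decide (x ∈ e)) = 2 := by
  cases c with
  | nil => exact absurd hc (SimpleGraph.Walk.IsCycle.not_of_nil)
  | @cons a b c h q =>
    rw [SimpleGraph.Walk.cons_isCycle_iff] at hc
    rw [SimpleGraph.Walk.edges_cons, List.countP_cons]
    have h1 := aux_path_count q hc.1 h.ne'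
    simp [h1, Sym2.mem_iff]

lemma aux_cycle_count {V : Type*} [DecidableEq V] {G : SimpleGraph V} {v : V}
    (c : G.Walk v v) (hc : c.IsCycle) {x : V} (hx : x ∈ c.support) :
    (c.edges.countP fun e => decide (x ∈ e)) = 2 := by
  have hperm : ((c.rotate x hx).edges).Perm c.edges := (c.rotate_edges x hx).perm
  rw [← hperm.countP_eq]
  exact aux_cycle_count_start _ (hc.rotate hx)

lemma aux_walk_cross {V : Type*} {G : SimpleGraph V} (Q : V → Prop) :
    ∀ {a b : V} (W : G.Walk a b), Q a → ¬ Q b →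
      ∃ x y, s(x,y) ∈ W.edges ∧ Q x ∧ ¬ Q y := by
  intro a b W
  induction W with
  | nil => intro h h'; exact absurd h h'
  | @cons a b c h q ih =>
    intro ha hb
    by_cases hm : Q b
    · obtain ⟨x, y, hxy, h1, h2⟩ := ih hm hb
      exact ⟨x, y, List.mem_cons_of_mem _ hxy, h1, h2⟩
    · exact ⟨a, b, by simp, ha, hm⟩

/-- Construction 2.3.  Partition the complete graph `K_n` into parts indexed by
`Fin (r+1)`, each of size `⌊n/(r+1)⌋` or `⌈n/(r+1)⌉` with the last part of size
`⌈n/(r+1)⌉`.  Colour an edge by `min{min(part indices), r−1}` (so edges inside or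
meeting part `i < r` get colour `i`, and edges inside the last part get the last
colour).  Then every Hamilton cycle of `K_n` has at most `2⌈(n−1)/(r+1)⌉`
edges of one colour, and every monochromatic matching has size at most
`⌈(n−1)/(r+1)⌉`. -/
theorem stmt_12 {V : Type*} [Fintype V] [DecidableEq V]
    (r : ℕ) (hr : 2 ≤ r)
    (p : V → Fin (r + 1))
    (hsizes : ∀ i : Fin (r + 1),
      {v | p v = i}.ncard = Fintype.card V / (r + 1) ∨
      {v | p v = i}.ncard = (Fintype.card V + r) / (r + 1))
    (hlast : {v | p v = Fin.last r}.ncard = (Fintype.card V + r) / (r + 1))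
    (col : Sym2 V → Fin r)
    (hcol : ∀ u v : V, u ≠ v →
      (col s(u, v) : ℕ) = min (min (p u : ℕ) (p v : ℕ)) (r - 1)) :
    (∀ (v : V) (c : (⊤ : SimpleGraph V).Walk v v), c.IsHamiltonianCycle →
      ∀ k : Fin r, (c.edges.filter fun e => decide (col e = k)).length ≤
        2 * ((Fintype.card V - 1 + r) / (r + 1))) ∧
    ∀ M : Finset (Sym2 V), ↑M ⊆ (⊤ : SimpleGraph V).edgeSet →
      (M : Set (Sym2 V)).Pairwise (fun e f => ∀ x : V, ¬(x ∈ e ∧ x ∈ f)) →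
      (∃ k : Fin r, ∀ e ∈ M, col e = k) →
      M.card ≤ (Fintype.card V - 1 + r) / (r + 1) := by
  classical
  set n := Fintype.card V with hn
  set Mb := (n - 1 + r) / (r + 1) with hMb
  have hfib : ∀ i : Fin (r+1), {v | p v = i}.ncard = (univ.filter fun v => p v = i).card := by
    intro i
    rw [← Set.ncard_coe_finset]
    congr 1
    ext v
    simp
  have hsizes' : ∀ i : Fin (r+1), (univ.filter fun v => p v = i).card = n / (r + 1) ∨
      (univ.filter fun v => p v = i).card = (n + r) / (r + 1) := by
    intro i; have := hsizes i; rwa [hfib i] at this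
  have hlast' : (univ.filter fun v => p v = Fin.last r).card = (n + r) / (r + 1) := by
    have := hlast; rwa [hfib _] at this
  have hq_le : n / (r+1) ≤ Mb := Nat.div_le_div_right (by omega)
  have hc_le : (n + r) / (r+1) ≤ Mb + 1 := by
    have h1 : Mb + 1 = (n - 1 + r + (r+1)) / (r+1) := (Nat.add_div_right _ (by omega)).symm
    rw [h1]; exact Nat.div_le_div_right (by omega)
  -- non-last parts are small
  have hsize : ∀ i : Fin (r + 1), i ≠ Fin.last r →
      (univ.filter fun v => p v = i).card ≤ Mb := by
    intro i hi
    rcases hsizes' i with h | h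
    · rw [h]; exact hq_le
    · by_cases hcM : (n + r)/(r+1) ≤ Mb
      · rw [h]; exact hcM
      · exfalso
        push_neg at hcM
        have hceq : (n + r)/(r+1) = Mb + 1 := le_antisymm hc_le hcM
        have hcq : (n + r)/(r+1) ≤ n/(r+1) + 1 := by
          rw [show n/(r+1)+1 = (n + (r+1))/(r+1) from (Nat.add_div_right _ (by omega)).symm]
          exact Nat.div_le_div_right (by omega)
        have hqM : n/(r+1) = Mb := by omega
        have hub : n - 1 + r < (Mb + 1) * (r + 1) := by
          rw [← Nat.div_lt_iff_lt_mul (by omega)]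
          omega
        have hsum : ∑ j : Fin (r+1), (univ.filter fun v => p v = j).card = n :=
          (Finset.card_eq_sum_card_fiberwise (fun x _ => mem_univ (p x))).symm
        have hge : ∀ j : Fin (r+1), n/(r+1) ≤ (univ.filter fun v => p v = j).card := by
          intro j
          have hqc : n/(r+1) ≤ (n+r)/(r+1) := Nat.div_le_div_right (by omega)
          rcases hsizes' j with h' | h' <;> omega
        have hmem : Fin.last r ∈ (univ : Finset (Fin (r+1))).erase i :=
          Finset.mem_erase.mpr ⟨Ne.symm hi, mem_univ _⟩
        rw [← Finset.add_sum_erase _ _ (mem_univ i),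
          ← Finset.add_sum_erase _ _ hmem] at hsum
        have hcard : (((univ : Finset (Fin (r+1))).erase i).erase (Fin.last r)).card = r - 1 := by
          rw [Finset.card_erase_of_mem hmem, Finset.card_erase_of_mem (mem_univ i)]
          simp
        have hrest : (r - 1) * (n/(r+1)) ≤
            ∑ j ∈ ((univ : Finset (Fin (r+1))).erase i).erase (Fin.last r),
              (univ.filter fun v => p v = j).card := by
          rw [← hcard]
          exact Finset.card_nsmul_le_sum _ _ _ (fun j _ => hge j)
        have hrest' : (r - 1) * Mb ≤
            ∑ j ∈ ((univ : Finset (Fin (r+1))).erase i).erase (Fin.last r),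
              (univ.filter fun v => p v = j).card := by
          rw [← hqM]; exact hrest
        have hlow : (Mb + 1) + ((Mb + 1) + (r-1) * Mb) ≤ n := by
          rw [← hsum, h, hlast', hceq]
          exact Nat.add_le_add_left (Nat.add_le_add_left hrest' _) _
        rw [Nat.succ_mul] at hub
        have e2 : (r-1)*Mb + 2*Mb = Mb*(r+1) := by
          rw [mul_comm Mb (r+1), ← Nat.add_mul]
          congr 1
          omega
        obtain ⟨Z, hZ⟩ : ∃ z, Mb*(r+1) = z := ⟨_, rfl⟩
        obtain ⟨X, hX⟩ : ∃ z, (r-1)*Mb = z := ⟨_, rfl⟩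
        rw [hZ] at hub e2
        rw [hX] at e2 hlow
        omega
  have hrm1 : (⟨r-1, by omega⟩ : Fin (r+1)) ≠ Fin.last r := by
    simp only [ne_eq, Fin.ext_iff, Fin.val_last]
    omega
  -- the union of the two last parts is small
  have hS : (univ.filter fun v => r - 1 ≤ (p v : ℕ)).card ≤ 2 * Mb + 1 := by
    have hsub : (univ.filter fun v => r - 1 ≤ (p v : ℕ)) ⊆
        (univ.filter fun v => p v = (⟨r-1, by omega⟩ : Fin (r+1))) ∪
        (univ.filter fun v => p v = Fin.last r) := by
      intro v hv
      simp only [mem_filter, mem_union, mem_univ, true_and] at hv ⊢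
      have h2 := (p v).isLt
      by_cases hh : (p v : ℕ) = r - 1
      · left; exact Fin.ext hh
      · right
        apply Fin.ext
        simp only [Fin.val_last]
        omega
    calc (univ.filter fun v => r - 1 ≤ (p v : ℕ)).card
        ≤ _ := Finset.card_le_card hsub
      _ ≤ _ + _ := Finset.card_union_le _ _
      _ ≤ Mb + (Mb + 1) := add_le_add (hsize _ hrm1) (hlast' ▸ hc_le)
      _ = 2*Mb + 1 := by ring
  -- decoding the colouring
  have hcol2 : ∀ e ∈ (⊤:SimpleGraph V).edgeSet, ∃ x y, x ≠ y ∧ e = s(x,y) ∧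
      (col e : ℕ) = min (min (p x : ℕ) (p y : ℕ)) (r-1) := by
    intro e he
    induction e with
    | _ x y =>
      have hxy : x ≠ y := by simpa using he
      exact ⟨x, y, hxy, rfl, hcol x y hxy⟩
  constructor
  · -- Hamiltonian part
    intro v c hc k
    have hnodup : c.edges.Nodup := hc.isCycle.isTrail.edges_nodup
    set E := c.edges.toFinset with hE
    have hEmem : ∀ e ∈ E, e ∈ (⊤:SimpleGraph V).edgeSet := by
      intro e he
      exact c.edges_subset_edgeSet (List.mem_toFinset.mp he)
    have key : ∀ (P : Sym2 V → Prop) [DecidablePred P],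
        (E.filter P).card = c.edges.countP (fun e => decide (P e)) := by
      intro P _
      rw [hE]
      rw [show (c.edges.toFinset.filter P) = (c.edges.filter (fun e => decide (P e))).toFinset
        from by ext e; simp [List.mem_toFinset, List.mem_filter]]
      rw [List.toFinset_card_of_nodup (hnodup.filter _), ← List.countP_eq_length_filter]
    have hcount : ∀ x : V, (E.filter (fun e => x ∈ e)).card = 2 := by
      intro x
      rw [key]
      exact aux_cycle_count c hc.isCycle (hc.mem_support x)
    have hlength : (c.edges.filter fun e => decide (col e = k)).length
        = (E.filter (fun e => col e = k)).card := by
      rw [key]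
      exact (List.countP_eq_length_filter).symm
    rw [hlength]
    have hk1 : (k : ℕ) < r := k.isLt
    by_cases hkr : (k:ℕ) < r - 1
    · -- small colour: all edges touch part k
      have hsub : E.filter (fun e => col e = k) ⊆
          (univ.filter fun x => p x = (⟨(k:ℕ), by omega⟩ : Fin (r+1))).biUnion
            (fun x => E.filter (fun e => x ∈ e)) := by
        intro e he
        rw [mem_filter] at he
        obtain ⟨heE, hek⟩ := he
        obtain ⟨x, y, hxy, heq, hmin⟩ := hcol2 e (hEmem e heE)
        rw [hek] at hmin
        rw [Finset.mem_biUnion]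
        have hor : (p x : ℕ) = (k:ℕ) ∨ (p y : ℕ) = (k:ℕ) := by omega
        rcases hor with hh | hh
        · exact ⟨x, by simp [Fin.ext_iff, hh],
            mem_filter.mpr ⟨heE, heq ▸ Sym2.mem_mk_left _ _⟩⟩
        · exact ⟨y, by simp [Fin.ext_iff, hh],
            mem_filter.mpr ⟨heE, heq ▸ Sym2.mem_mk_right _ _⟩⟩
      calc (E.filter (fun e => col e = k)).card
          ≤ _ := Finset.card_le_card hsub
        _ ≤ ∑ x ∈ univ.filter fun x => p x = (⟨(k:ℕ), by omega⟩ : Fin (r+1)),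
              (E.filter (fun e => x ∈ e)).card := Finset.card_biUnion_le
        _ = ∑ _x ∈ univ.filter fun x => p x = (⟨(k:ℕ), by omega⟩ : Fin (r+1)), 2 :=
            Finset.sum_congr rfl (fun x _ => hcount x)
        _ = (univ.filter fun x => p x = (⟨(k:ℕ), by omega⟩ : Fin (r+1))).card * 2 := by
            rw [Finset.sum_const, smul_eq_mul]
        _ ≤ Mb * 2 := by
            have := hsize (⟨(k:ℕ), by omega⟩ : Fin (r+1))
              (by simp only [ne_eq, Fin.ext_iff, Fin.val_last]; omega)
            omega
        _ = 2 * Mb := by ring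
    · -- last colour
      have hkeq : (k:ℕ) = r - 1 := by omega
      set Q : V → Prop := fun v => r - 1 ≤ (p v : ℕ) with hQ
      set ES := E.filter (fun e => ∀ x ∈ e, Q x) with hES
      have hsub : E.filter (fun e => col e = k) ⊆ ES := by
        intro e he
        rw [mem_filter] at he
        obtain ⟨heE, hek⟩ := he
        obtain ⟨x, y, hxy, heq, hmin⟩ := hcol2 e (hEmem e heE)
        rw [hek] at hmin
        rw [hES, mem_filter]
        refine ⟨heE, ?_⟩
        subst heq
        intro z hz
        rw [Sym2.mem_iff] at hz
        rcases hz with rfl | rfl <;> (rw [hQ]; omega)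
      refine (Finset.card_le_card hsub).trans ?_
      -- it suffices to bound ES
      rcases ES.eq_empty_or_nonempty with hESe | ⟨e₀, he₀⟩
      · rw [hESe]; simp
      by_cases hex : ∃ w, ¬ Q w
      · obtain ⟨w, hw⟩ := hex
        have he₀E : e₀ ∈ E := (mem_filter.mp he₀).1
        have he₀Q : ∀ x ∈ e₀, Q x := (mem_filter.mp he₀).2
        obtain ⟨x₀, y₀, hxy₀, he₀eq, -⟩ := hcol2 e₀ (hEmem e₀ he₀E)
        have hs₀ : Q x₀ := he₀Q x₀ (he₀eq ▸ Sym2.mem_mk_left _ _)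
        have hsupx : x₀ ∈ c.support := hc.mem_support x₀
        have hsupw : w ∈ c.support := hc.mem_support w
        set W := (c.takeUntil x₀ hsupx).reverse.append (c.takeUntil w hsupw) with hW
        have hWsub : W.edges ⊆ c.edges := by
          intro e he
          rw [hW, SimpleGraph.Walk.edges_append, List.mem_append,
            SimpleGraph.Walk.edges_reverse, List.mem_reverse] at he
          rcases he with he | he
          · exact c.edges_takeUntil_subset _ he
          · exact c.edges_takeUntil_subset _ he
        obtain ⟨x, y, hxyW, hQx, hQy⟩ := aux_walk_cross Q W hs₀ hw
        have hxyE : s(x,y) ∈ E := List.mem_toFinset.mpr (hWsub hxyW)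
        have hdouble : ∑ v ∈ univ.filter Q, (ES.filter (fun e => v ∈ e)).card
            = 2 * ES.card := by
          have h1 : ∀ e ∈ ES, ((univ.filter Q).filter (· ∈ e)).card = 2 := by
            intro e he
            rw [hES, mem_filter] at he
            obtain ⟨x', y', hne', heq', -⟩ := hcol2 e (hEmem e he.1)
            subst heq'
            have hx' : Q x' := he.2 x' (Sym2.mem_mk_left _ _)
            have hy' : Q y' := he.2 y' (Sym2.mem_mk_right _ _)
            have heqset : (univ.filter Q).filter (· ∈ s(x',y')) = {x', y'} := by
              ext u
              simp only [mem_filter, mem_univ, true_and, Sym2.mem_iff, mem_insert,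
                mem_singleton]
              constructor
              · rintro ⟨-, h⟩; exact h
              · rintro (rfl | rfl)
                · exact ⟨hx', Or.inl rfl⟩
                · exact ⟨hy', Or.inr rfl⟩
            rw [heqset, Finset.card_insert_of_notMem (by simpa using hne'),
              Finset.card_singleton]
          calc ∑ v ∈ univ.filter Q, (ES.filter (fun e => v ∈ e)).card
              = ∑ v ∈ univ.filter Q, ∑ e ∈ ES, if v ∈ e then 1 else 0 := by
                refine Finset.sum_congr rfl fun v _ => ?_
                rw [Finset.card_filter]
            _ = ∑ e ∈ ES, ∑ v ∈ univ.filter Q, if v ∈ e then 1 else 0 := Finset.sum_comm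
            _ = ∑ e ∈ ES, ((univ.filter Q).filter (· ∈ e)).card := by
                refine Finset.sum_congr rfl fun e _ => ?_
                rw [Finset.card_filter]
            _ = ∑ _e ∈ ES, 2 := Finset.sum_congr rfl h1
            _ = 2 * ES.card := by rw [Finset.sum_const, smul_eq_mul, mul_comm]
        have hstrict : ∑ v ∈ univ.filter Q, (ES.filter (fun e => v ∈ e)).card
            < ∑ v ∈ univ.filter Q, (E.filter (fun e => v ∈ e)).card := by
          apply Finset.sum_lt_sum
          · intro i _
            exact Finset.card_le_card
              (Finset.filter_subset_filter _ (Finset.filter_subset _ _))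
          · refine ⟨x, mem_filter.mpr ⟨mem_univ x, hQx⟩, ?_⟩
            apply Finset.card_lt_card
            rw [Finset.ssubset_iff_of_subset
              (Finset.filter_subset_filter _ (Finset.filter_subset _ _))]
            refine ⟨s(x,y), mem_filter.mpr ⟨hxyE, Sym2.mem_mk_left _ _⟩, fun hmem => ?_⟩
            have := (mem_filter.mp (mem_filter.mp hmem).1).2
            exact hQy (this y (Sym2.mem_mk_right _ _))
        have hsum2 : ∑ v ∈ univ.filter Q, (E.filter (fun e => v ∈ e)).card
            = 2 * (univ.filter Q).card := by
          rw [Finset.sum_congr rfl (fun v _ => hcount v), Finset.sum_const, smul_eq_mul,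
            mul_comm]
        have hQS : (univ.filter Q).card ≤ 2 * Mb + 1 := hS
        omega
      · -- every vertex is in the top two parts: contradiction with n ≥ 3
        exfalso
        push_neg at hex
        have h3 : 3 ≤ n := by
          have hl := hc.length_eq
          have := hc.isCycle.three_le_length
          omega
        have hfib0 : (univ.filter fun v => p v = (⟨0, by omega⟩ : Fin (r+1))).card = 0 := by
          rw [Finset.card_eq_zero, Finset.filter_eq_empty_iff]
          intro v _
          have hv := hex v
          rw [hQ] at hv
          intro hpv
          rw [hpv] at hv
          simp at hv
          omega
        rcases hsizes' ⟨0, by omega⟩ with h0 | h0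
        · rw [hfib0] at h0
          have hnlt : n < r + 1 := by
            by_contra hge'
            have : 1 ≤ n / (r+1) := (Nat.one_le_div_iff (by omega)).mpr (by omega)
            omega
          have hc1 : (n + r)/(r+1) ≤ 1 := by
            have : (n+r)/(r+1) < 2 := (Nat.div_lt_iff_lt_mul (by omega)).mpr (by omega)
            omega
          have huniv : (univ : Finset V) ⊆ univ.filter Q :=
            fun v _ => mem_filter.mpr ⟨mem_univ v, hex v⟩
          have hn2 : n ≤ (univ.filter Q).card := by
            rw [← Finset.card_univ] at *
            exact Finset.card_le_card huniv
          have hQle : (univ.filter Q).card ≤ 2 := by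
            have hsub2 : (univ.filter Q) ⊆
                (univ.filter fun v => p v = (⟨r-1, by omega⟩ : Fin (r+1))) ∪
                (univ.filter fun v => p v = Fin.last r) := by
              intro v hv
              simp only [mem_filter, mem_union, mem_univ, true_and, hQ] at hv ⊢
              have h2 := (p v).isLt
              by_cases hh : (p v : ℕ) = r - 1
              · left; exact Fin.ext hh
              · right
                apply Fin.ext
                simp only [Fin.val_last]
                omega
            have hA : (univ.filter fun v => p v = (⟨r-1, by omega⟩ : Fin (r+1))).card ≤ 1 := by
              rcases hsizes' ⟨r-1, by omega⟩ with hA' | hA' <;> omega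
            have hB : (univ.filter fun v => p v = Fin.last r).card ≤ 1 := by
              rw [hlast']; exact hc1
            calc (univ.filter Q).card ≤ _ := Finset.card_le_card hsub2
              _ ≤ _ + _ := Finset.card_union_le _ _
              _ ≤ 2 := by omega
          omega
        · rw [hfib0] at h0
          have : n + r < r + 1 := by
            by_contra hge'
            have : 1 ≤ (n+r) / (r+1) := (Nat.one_le_div_iff (by omega)).mpr (by omega)
            omega
          omega
  · -- matching part
    rintro M hM hdisj ⟨k, hk⟩
    rcases Finset.eq_empty_or_nonempty M with rfl | ⟨e₀, he₀⟩
    · simp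
    have hk1 : (k : ℕ) < r := k.isLt
    by_cases hkr : (k:ℕ) < r - 1
    · have hpt : ∀ e ∈ M, ∃ x, x ∈ e ∧ p x = (⟨(k:ℕ), by omega⟩ : Fin (r+1)) := by
        intro e he
        obtain ⟨x, y, hxy, heq, hmin⟩ := hcol2 e (hM he)
        rw [hk e he] at hmin
        have hor : (p x : ℕ) = (k:ℕ) ∨ (p y : ℕ) = (k:ℕ) := by omega
        rcases hor with hh | hh
        · exact ⟨x, heq ▸ Sym2.mem_mk_left _ _, Fin.ext hh⟩
        · exact ⟨y, heq ▸ Sym2.mem_mk_right _ _, Fin.ext hh⟩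
      have hVne : Nonempty V := by
        obtain ⟨x, -, -⟩ := hpt e₀ he₀
        exact ⟨x⟩
      set f : Sym2 V → V := fun e =>
        if h : ∃ x, x ∈ e ∧ p x = (⟨(k:ℕ), by omega⟩ : Fin (r+1)) then h.choose
        else Classical.arbitrary V with hf
      have hfm : ∀ e ∈ M, f e ∈ e ∧ p (f e) = (⟨(k:ℕ), by omega⟩ : Fin (r+1)) := by
        intro e he
        rw [hf]
        beta_reduce
        rw [dif_pos (hpt e he)]
        exact (hpt e he).choose_spec
      have hinj : Set.InjOn f M := by
        intro e₁ h₁ e₂ h₂ hfe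
        by_contra hne
        exact hdisj h₁ h₂ hne (f e₁)
          ⟨(hfm e₁ h₁).1, hfe ▸ (hfm e₂ h₂).1⟩
      have hmaps : ∀ e ∈ M, f e ∈
          univ.filter (fun v => p v = (⟨(k:ℕ), by omega⟩ : Fin (r+1))) :=
        fun e he => mem_filter.mpr ⟨mem_univ _, (hfm e he).2⟩
      have hcard := Finset.card_le_card_of_injOn f hmaps hinj
      exact hcard.trans (hsize _ (by simp only [ne_eq, Fin.ext_iff, Fin.val_last]; omega))
    · have hkeq : (k:ℕ) = r - 1 := by omega
      have hboth : ∀ e ∈ M, ∀ x ∈ e, r - 1 ≤ (p x : ℕ) := by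
        intro e he
        obtain ⟨x, y, hxy, heq, hmin⟩ := hcol2 e (hM he)
        rw [hk e he] at hmin
        subst heq
        intro z hz
        rw [Sym2.mem_iff] at hz
        rcases hz with rfl | rfl <;> omega
      have hdisj2 : ∀ e₁ ∈ M, ∀ e₂ ∈ M, e₁ ≠ e₂ →
          Disjoint (univ.filter (· ∈ e₁)) (univ.filter (· ∈ e₂)) := by
        intro e₁ h₁ e₂ h₂ hne
        rw [Finset.disjoint_left]
        intro v hv1 hv2
        simp only [mem_filter, mem_univ, true_and] at hv1 hv2
        exact hdisj h₁ h₂ hne v ⟨hv1, hv2⟩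
      have hbu := Finset.card_biUnion hdisj2
      have hcard2 : ∀ e ∈ M, (univ.filter (· ∈ e)).card = 2 := by
        intro e he
        obtain ⟨x, y, hxy, rfl, -⟩ := hcol2 e (hM he)
        have heqs : (univ.filter (· ∈ s(x,y))) = {x, y} := by
          ext u; simp [Sym2.mem_iff]
        rw [heqs, Finset.card_insert_of_notMem (by simpa using hxy),
          Finset.card_singleton]
      have hsub : M.biUnion (fun e => univ.filter (· ∈ e)) ⊆
          univ.filter fun v => r - 1 ≤ (p v : ℕ) := by
        intro v hv
        rw [Finset.mem_biUnion] at hv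
        obtain ⟨e, he, hv⟩ := hv
        simp only [mem_filter, mem_univ, true_and] at hv ⊢
        exact hboth e he v hv
      have h2m : 2 * M.card ≤ 2 * Mb + 1 := by
        calc 2 * M.card = ∑ _e ∈ M, 2 := by rw [Finset.sum_const, smul_eq_mul, mul_comm]
          _ = ∑ e ∈ M, (univ.filter (· ∈ e)).card :=
              Finset.sum_congr rfl (fun e he => (hcard2 e he).symm)
          _ = (M.biUnion fun e => univ.filter (· ∈ e)).card := hbu.symm
          _ ≤ _ := Finset.card_le_card hsub
          _ ≤ 2 * Mb + 1 := hS
      omega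
end

section
/- For every d with 0 ≤ d ≤ n−1 there exists an n-vertex graph with minimum degree at least d together with an r-edge-colouring such that the maximum size of a monochromatic matching is at most ⌈min{d/r, (n−1)/(r+1)}⌉. -/
open SimpleGraph

lemma divk_13 (m k a : ℕ) (hm : 0 < m) (h : a / m = k) : k*m ≤ a ∧ a < k*m + m := by
  have e := Nat.div_add_mod a m
  have e2 := Nat.mod_lt a hm
  rw [h, Nat.mul_comm] at e
  omega

lemma key_13 (m r k a b : ℕ) (hm : 0 < m) (ha : a < r*m)
    (hk : min (min (a/m) (r-1)) (min (b/m) (r-1)) = k) :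
    (k*m ≤ a ∧ a < k*m+m) ∨ (k*m ≤ b ∧ b < k*m+m) := by
  have hr1 : 1 ≤ r := by
    rcases Nat.eq_zero_or_pos r with h | h
    · subst h; simp at ha
    · exact h
  have hadiv : a/m < r := (Nat.div_lt_iff_lt_mul hm).mpr ha
  by_cases hab : min (a/m) (r-1) ≤ min (b/m) (r-1)
  · exact Or.inl (divk_13 m k a hm (by omega))
  · by_cases hb : b < r*m
    · exact Or.inr (divk_13 m k b hm (by have := (Nat.div_lt_iff_lt_mul hm).mpr hb; omega))
    · have : r ≤ b/m := (Nat.le_div_iff_mul_le hm).mpr (by omega)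
      omega

lemma keyA_13 (m r k a b : ℕ) (hm : 0 < m) (hkr : k < r-1)
    (hk : min (min (a/m) (r-1)) (min (b/m) (r-1)) = k) :
    (k*m ≤ a ∧ a < k*m+m) ∨ (k*m ≤ b ∧ b < k*m+m) := by
  have : a/m = k ∨ b/m = k := by omega
  rcases this with h | h
  · exact Or.inl (divk_13 m k a hm h)
  · exact Or.inr (divk_13 m k b hm h)

lemma cover_13 {n : ℕ} (M : Finset (Sym2 (Fin n))) (T : Finset (Fin n))
    (hp : (M : Set (Sym2 (Fin n))).Pairwise (fun e f => ∀ x : Fin n, ¬(x ∈ e ∧ x ∈ f)))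
    (hT : ∀ e ∈ M, ∃ x ∈ T, x ∈ e) : M.card ≤ T.card := by
  classical
  rcases M.eq_empty_or_nonempty with rfl | ⟨e0, he0⟩
  · simp
  obtain ⟨x0, _, _⟩ := hT e0 he0
  have hT' : ∀ e ∈ M, ∃ x, x ∈ T ∧ x ∈ e := by
    intro e he; obtain ⟨x, hx1, hx2⟩ := hT e he; exact ⟨x, hx1, hx2⟩
  set g : Sym2 (Fin n) → Fin n := fun e => if h : ∃ x, x ∈ T ∧ x ∈ e then h.choose else x0 with hg
  apply Finset.card_le_card_of_injOn g
  · intro e he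
    have h := hT' e he
    simp only [hg, dif_pos h]
    exact h.choose_spec.1
  · intro e he f hf hef
    by_contra hne
    have h1 := hT' e he
    have h2 := hT' f hf
    have hge : g e ∈ e := by simp only [hg, dif_pos h1]; exact h1.choose_spec.2
    have hgf : g f ∈ f := by simp only [hg, dif_pos h2]; exact h2.choose_spec.2
    exact hp he hf hne (g e) ⟨hge, hef ▸ hgf⟩

lemma double_13 {n : ℕ} (M : Finset (Sym2 (Fin n))) (W : Finset (Fin n))
    (hp : (M : Set (Sym2 (Fin n))).Pairwise (fun e f => ∀ x : Fin n, ¬(x ∈ e ∧ x ∈ f)))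
    (hnd : ∀ e ∈ M, ¬ e.IsDiag)
    (hW : ∀ e ∈ M, ∀ x : Fin n, x ∈ e → x ∈ W) : 2 * M.card ≤ W.card := by
  classical
  set F : Sym2 (Fin n) → Finset (Fin n) := fun e => Finset.univ.filter (· ∈ e) with hF
  have hcard2 : ∀ e ∈ M, (F e).card = 2 := by
    intro e he
    obtain ⟨⟨a, b⟩, rfl⟩ := Quot.exists_rep e
    have hab : a ≠ b := by
      intro h; exact hnd _ he (by simp [h, Sym2.mk_isDiag_iff])
    have : F (Sym2.mk a b) = {a, b} := by
      ext x; simp [hF, Sym2.mem_iff]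
    rw [this, Finset.card_insert_of_notMem (by simp [hab]), Finset.card_singleton]
  have hdisj : ∀ e ∈ M, ∀ f ∈ M, e ≠ f → Disjoint (F e) (F f) := by
    intro e he f hf hef
    rw [Finset.disjoint_left]
    intro x hxe hxf
    simp only [hF, Finset.mem_filter] at hxe hxf
    exact hp he hf hef x ⟨hxe.2, hxf.2⟩
  have h1 : (M.biUnion F).card = ∑ e ∈ M, (F e).card := Finset.card_biUnion hdisj
  have h2 : ∑ e ∈ M, (F e).card = 2 * M.card := by
    rw [Finset.sum_congr rfl hcard2, Finset.sum_const, smul_eq_mul, Nat.mul_comm]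
  have h3 : M.biUnion F ⊆ W := by
    intro x hx
    obtain ⟨e, he, hxe⟩ := Finset.mem_biUnion.mp hx
    simp only [hF, Finset.mem_filter] at hxe
    exact hW e he x hxe.2
  calc 2 * M.card = (M.biUnion F).card := by rw [h1, h2]
    _ ≤ W.card := Finset.card_le_card h3
set_option maxHeartbeats 1000000 in
/-- For all `0 ≤ d ≤ n−1` there exists an `n`-vertex graph with minimum degree at
least `d`, together with an `r`-edge-colouring, such that every monochromatic
matching has size at most `⌈min{d/r, (n−1)/(r+1)}⌉`. -/
theorem stmt_13 (n r d : ℕ) (hr : 2 ≤ r) (hd : d ≤ n - 1) :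
    ∃ (G : SimpleGraph (Fin n)) (col : Sym2 (Fin n) → Fin r),
      (∀ v, d ≤ (G.neighborSet v).ncard) ∧
      ∀ M : Finset (Sym2 (Fin n)), ↑M ⊆ G.edgeSet →
        (M : Set (Sym2 (Fin n))).Pairwise (fun e f => ∀ x : Fin n, ¬(x ∈ e ∧ x ∈ f)) →
        (∃ k : Fin r, ∀ e ∈ M, col e = k) →
        (M.card : ℤ) ≤ ⌈min ((d : ℚ) / r) (((n : ℚ) - 1) / (r + 1))⌉ := by
  classical
  set q : ℚ := min ((d : ℚ) / r) (((n : ℚ) - 1) / (r + 1)) with hq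
  have hr2 : (2:ℚ) ≤ (r:ℚ) := by exact_mod_cast hr
  have hq_lb : (-1 : ℚ) < q := by
    rw [hq, lt_min_iff]
    constructor
    · have : (0:ℚ) ≤ (d:ℚ)/r := by positivity
      linarith
    · rw [lt_div_iff₀ (by linarith)]
      have hn0 : (0:ℚ) ≤ (n:ℚ) := by positivity
      nlinarith
  have hceil : 0 ≤ ⌈q⌉ := by
    have := Int.lt_ceil.mpr (show ((-1 : ℤ):ℚ) < q by push_cast; exact hq_lb)
    omega
  set m : ℕ := (⌈q⌉).toNat with hm
  have hmz : (m : ℤ) = ⌈q⌉ := Int.toNat_of_nonneg hceil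
  have hmq : q ≤ (m : ℚ) := by
    have h1 := Int.le_ceil q
    rw [← hmz] at h1
    push_cast at h1
    exact h1
  suffices h : ∃ (G : SimpleGraph (Fin n)) (col : Sym2 (Fin n) → Fin r),
      (∀ v, d ≤ (G.neighborSet v).ncard) ∧
      ∀ M : Finset (Sym2 (Fin n)), ↑M ⊆ G.edgeSet →
        (M : Set (Sym2 (Fin n))).Pairwise (fun e f => ∀ x : Fin n, ¬(x ∈ e ∧ x ∈ f)) →
        (∃ k : Fin r, ∀ e ∈ M, col e = k) → M.card ≤ m by
    obtain ⟨G, col, h1, h2⟩ := h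
    refine ⟨G, col, h1, fun M a b c => ?_⟩
    have := h2 M a b c
    rw [← hmz]
    exact_mod_cast this
  have hrpos : 0 < r := by omega
  set cf : Fin n → ℕ := fun v => min (v.val / m) (r-1) with hcf
  set col : Sym2 (Fin n) → Fin r :=
    Sym2.lift ⟨fun a b => ⟨min (cf a) (cf b), by simp only [hcf]; omega⟩,
      by intro a b; simp [Nat.min_comm]⟩ with hcol
  have hcolval : ∀ a b : Fin n,
      (col (Sym2.mk a b)).val = min (min (a.val/m) (r-1)) (min (b.val/m) (r-1)) := by
    intro a b
    simp [hcol, hcf, Sym2.lift_mk]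
  have ncard_ge : ∀ (G : SimpleGraph (Fin n)) (v : Fin n) (F : Finset (Fin n)),
      (∀ w ∈ F, G.Adj v w) → F.card ≤ (G.neighborSet v).ncard := by
    intro G v F h
    have hsub : ↑F ⊆ G.neighborSet v := fun w hw => h w hw
    calc F.card = (↑F : Set (Fin n)).ncard := (Set.ncard_coe_finset F).symm
      _ ≤ _ := Set.ncard_le_ncard hsub (Set.toFinite _)
  have Tcard : ∀ k : ℕ,
      (Finset.univ.filter (fun v : Fin n => k*m ≤ v.val ∧ v.val < k*m+m)).card ≤ m := by
    intro k
    have h := Finset.card_le_card_of_injOn (fun v : Fin n => v.val)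
      (s := Finset.univ.filter (fun v : Fin n => k*m ≤ v.val ∧ v.val < k*m+m))
      (t := Finset.Ico (k*m) (k*m+m))
      (fun v hv => by simp only [Finset.mem_coe, Finset.mem_filter] at hv; simp only [Finset.mem_coe, Finset.mem_Ico]; omega)
      (fun x _ y _ h => Fin.val_injective h)
    rw [Nat.card_Ico] at h
    omega
  by_cases hc : n ≤ (r+1)*m + 1
  · -- Case A : complete graph
    refine ⟨⊤, col, ?_, ?_⟩
    · intro v
      have h := ncard_ge ⊤ v (Finset.univ.erase v) (fun w hw => by
        simp only [Finset.mem_erase] at hw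
        rw [top_adj]
        exact fun h => hw.1 h.symm)
      rw [Finset.card_erase_of_mem (Finset.mem_univ v), Finset.card_univ, Fintype.card_fin] at h
      omega
    · rintro M hM hpair ⟨k, hk⟩
      by_cases hn1 : n ≤ 1
      · have hME : M = ∅ := by
          rw [Finset.eq_empty_iff_forall_notMem]
          intro e he
          have hA := hM he
          obtain ⟨⟨a, b⟩, rfl⟩ := Quot.exists_rep e
          have hA' : (⊤ : SimpleGraph (Fin n)).Adj a b := hA
          rw [top_adj] at hA'
          exact hA' (Fin.ext (by omega))
        rw [hME, Finset.card_empty]; exact Nat.zero_le m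
      · have hm0 : 0 < m := by
          rcases Nat.eq_zero_or_pos m with h | h
          · rw [h, Nat.mul_zero] at hc; omega
          · exact h
        by_cases hkr : k.val < r - 1
        · refine le_trans (cover_13 M _ hpair ?_) (Tcard k.val)
          intro e he
          have hke := hk e he
          obtain ⟨⟨a, b⟩, rfl⟩ := Quot.exists_rep e
          have hkval : min (min (a.val/m) (r-1)) (min (b.val/m) (r-1)) = k.val := by
            rw [← hcolval a b, hke]
          rcases keyA_13 m r k.val a.val b.val hm0 hkr hkval with ⟨h1, h2⟩ | ⟨h1, h2⟩
          · exact ⟨a, by simp only [Finset.mem_filter]; exact ⟨Finset.mem_univ _, h1, h2⟩,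
              Sym2.mem_mk_left a b⟩
          · exact ⟨b, by simp only [Finset.mem_filter]; exact ⟨Finset.mem_univ _, h1, h2⟩,
              Sym2.mem_mk_right a b⟩
        · have hkeq : k.val = r - 1 := by have := k.isLt; omega
          set W := Finset.univ.filter (fun v : Fin n => (r-1)*m ≤ v.val) with hW
          have hdbl : 2 * M.card ≤ W.card := by
            apply double_13 M W hpair
            · intro e he
              exact (⊤ : SimpleGraph (Fin n)).not_isDiag_of_mem_edgeSet (hM he)
            · intro e he x hx
              have hke := hk e he
              obtain ⟨⟨a, b⟩, rfl⟩ := Quot.exists_rep e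
              have hkval : min (min (a.val/m) (r-1)) (min (b.val/m) (r-1)) = r - 1 := by
                rw [← hcolval a b, hke, hkeq]
              have ha : r - 1 ≤ a.val / m := by omega
              have hb : r - 1 ≤ b.val / m := by omega
              have ha' : (r-1)*m ≤ a.val := (Nat.le_div_iff_mul_le hm0).mp ha
              have hb' : (r-1)*m ≤ b.val := (Nat.le_div_iff_mul_le hm0).mp hb
              rw [Sym2.mem_iff] at hx
              rcases hx with rfl | rfl
              · simp only [hW, Finset.mem_filter]; exact ⟨Finset.mem_univ _, ha'⟩
              · simp only [hW, Finset.mem_filter]; exact ⟨Finset.mem_univ _, hb'⟩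
          have hWcard : W.card ≤ n - (r-1)*m := by
            have h := Finset.card_le_card_of_injOn (fun v : Fin n => v.val)
              (s := W)
              (t := Finset.Ico ((r-1)*m) n)
              (fun v hv => by
                simp only [hW, Finset.mem_coe, Finset.mem_filter] at hv
                simp only [Finset.mem_coe, Finset.mem_Ico]
                exact ⟨hv.2, v.isLt⟩)
              (fun x _ y _ h => Fin.val_injective h)
            rw [Nat.card_Ico] at h
            exact h
          have hsplit : (r+1)*m = (r-1)*m + 2*m := by
            have h : r+1 = (r-1)+2 := by omega
            rw [h, Nat.add_mul]
          omega
  · -- Case B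
    push_neg at hc
    have hcnat : (r+1)*m + 2 ≤ n := by omega
    have hdrm : d ≤ r * m := by
      have h1 : ((r:ℚ)+1)*(m:ℚ) + 2 ≤ (n:ℚ) := by exact_mod_cast hcnat
      have hmb : (m:ℚ) < ((n:ℚ) - 1) / ((r:ℚ) + 1) := by
        rw [lt_div_iff₀ (by linarith)]
        nlinarith
      have hdq : (d:ℚ)/r ≤ (m:ℚ) := by
        by_contra hcon
        push_neg at hcon
        have : (m:ℚ) < q := lt_min hcon hmb
        linarith
      rw [div_le_iff₀ (by linarith)] at hdq
      have : (d:ℚ) ≤ ((r*m : ℕ) : ℚ) := by push_cast; linarith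
      exact_mod_cast this
    have hrmn : r * m ≤ n := by
      have : r * m ≤ (r+1)*m := Nat.mul_le_mul_right m (by omega)
      omega
    refine ⟨SimpleGraph.fromRel (fun a _b : Fin n => a.val < r*m), col, ?_, ?_⟩
    · intro v
      by_cases hv : v.val < r*m
      · have h := ncard_ge (SimpleGraph.fromRel (fun a _b : Fin n => a.val < r*m)) v
          (Finset.univ.erase v) (fun w hw => by
          simp only [Finset.mem_erase] at hw
          rw [fromRel_adj]
          exact ⟨fun h => hw.1 h.symm, Or.inl hv⟩)
        rw [Finset.card_erase_of_mem (Finset.mem_univ v), Finset.card_univ, Fintype.card_fin] at h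
        omega
      · have h := ncard_ge (SimpleGraph.fromRel (fun a _b : Fin n => a.val < r*m)) v
          (Finset.univ.filter (fun w : Fin n => w.val < r*m)) (fun w hw => by
          simp only [Finset.mem_filter] at hw
          rw [fromRel_adj]
          refine ⟨fun h => ?_, Or.inr hw.2⟩
          rw [h] at hv
          exact hv hw.2)
        refine le_trans (le_trans hdrm ?_) h
        have himg : (Finset.univ.image (Fin.castLE hrmn)).card = r * m := by
          rw [Finset.card_image_of_injective _ (Fin.castLE_injective hrmn), Finset.card_univ,
            Fintype.card_fin]
        have hsub : Finset.univ.image (Fin.castLE hrmn) ⊆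
            Finset.univ.filter (fun w : Fin n => w.val < r*m) := by
          intro x hx
          obtain ⟨i, _, rfl⟩ := Finset.mem_image.mp hx
          simp only [Finset.mem_filter]
          refine ⟨Finset.mem_univ _, ?_⟩
          simp only [Fin.coe_castLE]; exact i.isLt
        calc r * m = (Finset.univ.image (Fin.castLE hrmn)).card := himg.symm
          _ ≤ _ := Finset.card_le_card hsub
    · rintro M hM hpair ⟨k, hk⟩
      rcases Nat.eq_zero_or_pos m with hm0 | hm0
      · have hME : M = ∅ := by
          rw [Finset.eq_empty_iff_forall_notMem]
          intro e he
          have hA := hM he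
          obtain ⟨⟨a, b⟩, rfl⟩ := Quot.exists_rep e
          have hA' : (SimpleGraph.fromRel (fun a _b : Fin n => a.val < r*m)).Adj a b := hA
          rw [fromRel_adj] at hA'
          have hrm0 : r * m = 0 := by rw [hm0, Nat.mul_zero]
          rcases hA'.2 with h | h <;> omega
        rw [hME, Finset.card_empty]; exact Nat.zero_le m
      · refine le_trans (cover_13 M _ hpair ?_) (Tcard k.val)
        intro e he
        have hke := hk e he
        have hA := hM he
        obtain ⟨⟨a, b⟩, rfl⟩ := Quot.exists_rep e
        have hA' : (SimpleGraph.fromRel (fun a _b : Fin n => a.val < r*m)).Adj a b := hA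
        rw [fromRel_adj] at hA'
        have hkval : min (min (a.val/m) (r-1)) (min (b.val/m) (r-1)) = k.val := by
          rw [← hcolval a b, hke]
        have hres : (k.val*m ≤ a.val ∧ a.val < k.val*m+m) ∨
            (k.val*m ≤ b.val ∧ b.val < k.val*m+m) := by
          rcases hA'.2 with h | h
          · exact key_13 m r k.val a.val b.val hm0 h hkval
          · have hkval' : min (min (b.val/m) (r-1)) (min (a.val/m) (r-1)) = k.val := by
              rw [Nat.min_comm]; exact hkval
            exact (key_13 m r k.val b.val a.val hm0 h hkval').symm
        rcases hres with ⟨h1, h2⟩ | ⟨h1, h2⟩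
        · exact ⟨a, by simp only [Finset.mem_filter]; exact ⟨Finset.mem_univ _, h1, h2⟩,
            Sym2.mem_mk_left a b⟩
        · exact ⟨b, by simp only [Finset.mem_filter]; exact ⟨Finset.mem_univ _, h1, h2⟩,
            Sym2.mem_mk_right a b⟩
end

section
/- Let H be a graph and M a matching on V(H) such that H is an M-respecting 2-expander. Let P be a longest M-respecting path in H + M with endpoint v. Then there are at least |V(H)|/8 vertices u ∈ V(P) for which there is an M-respecting path in H + M from v to u whose vertex set equals V(P). -/
open SimpleGraph

/-- A walk `p` (in any graph) is `M`-respecting if every edge of the matching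
graph `M` either belongs to the walk's edges or is vertex-disjoint from the walk. -/
def MRespecting {V : Type*} (M : SimpleGraph V) {G : SimpleGraph V} {u v : V}
    (p : G.Walk u v) : Prop :=
  ∀ e ∈ M.edgeSet, e ∈ p.edges ∨ ∀ x, x ∈ e → x ∉ p.support

/-- `H` is an `M`-respecting 2-expander: `H` is connected and every `U ⊆ V` with
`|U| ≤ |V|/8` satisfies `|N_H(U) \ V(M)| ≥ 2|U|`. -/
def MRespExpander {V : Type*} [Fintype V] (H M : SimpleGraph V) : Prop :=
  H.Connected ∧ ∀ U : Set V, 8 * U.ncard ≤ Fintype.card V →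
    2 * U.ncard ≤ (((⋃ u ∈ U, H.neighborSet u) \ U) \ M.support).ncard

section PosaRotation

variable {V : Type*}

/-- Walks obtainable from `p` by a sequence of `M`-respecting rotations fixing `v`. -/
inductive Derived (G M : SimpleGraph V) {v w : V} (p : G.Walk v w) :
    ∀ {u : V}, G.Walk v u → Prop
  | base : Derived G M p p
  | rot {y z u : V} (q₁ : G.Walk v y) (h : G.Adj y z) (q₂ : G.Walk z u)
      (hadj : G.Adj y u) (hyM : y ∉ M.support)
      (hder : Derived G M p (q₁.append (Walk.cons h q₂))) :
      Derived G M p (q₁.append (Walk.cons hadj q₂.reverse))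

variable {G M : SimpleGraph V} {v w : V} {p : G.Walk v w}

lemma Derived.support_iff {u : V} {q : G.Walk v u} (hd : Derived G M p q) :
    ∀ x, x ∈ q.support ↔ x ∈ p.support := by
  induction hd with
  | base => simp
  | @rot y z u q₁ h q₂ hadj hyM hder ih =>
      intro x
      rw [← ih x]
      simp only [Walk.mem_support_append_iff, Walk.support_cons, List.mem_cons,
        Walk.support_reverse, List.mem_reverse]

lemma Derived.isPath {u : V} {q : G.Walk v u} (hd : Derived G M p q) (hp : p.IsPath) :
    q.IsPath := by
  induction hd with
  | base => exact hp
  | @rot y z u q₁ h q₂ hadj hyM hder ih =>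
      rw [Walk.isPath_def, Walk.support_append, Walk.support_cons] at ih ⊢
      simp only [List.tail_cons, Walk.support_reverse] at ih ⊢
      rw [List.nodup_append] at ih ⊢
      refine ⟨ih.1, List.nodup_reverse.mpr ih.2.1, ?_⟩
      intro a ha b hb
      exact ih.2.2 a ha b (List.mem_reverse.mp hb)

lemma Derived.mem_edges {u : V} {q : G.Walk v u} (hd : Derived G M p q) :
    ∀ e ∈ p.edges, e ∈ q.edges ∨ ∃ x, x ∈ e ∧ ∃ r : G.Walk v x, Derived G M p r := by
  induction hd with
  | base => exact fun e he => Or.inl he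
  | @rot y z u q₁ h q₂ hadj hyM hder ih =>
      intro e he
      rcases ih e he with he' | hx
      · rw [Walk.edges_append, Walk.edges_cons, List.mem_append, List.mem_cons] at he'
        rcases he' with h1 | h2 | h3
        · exact Or.inl (by rw [Walk.edges_append]; exact List.mem_append_left _ h1)
        · -- e = s(y,z) : removed edge, z is the new endpoint
          refine Or.inr ⟨_, by rw [h2]; exact Sym2.mem_mk_right _ _,
            q₁.append (Walk.cons hadj q₂.reverse), Derived.rot q₁ h q₂ hadj hyM hder⟩
        · refine Or.inl ?_
          rw [Walk.edges_append, Walk.edges_cons]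
          refine List.mem_append_right _ (List.mem_cons_of_mem _ ?_)
          rw [Walk.edges_reverse, List.mem_reverse]
          exact h3
      · exact Or.inr hx

lemma Derived.respects {u : V} {q : G.Walk v u} (hd : Derived G M p q)
    (hpr : MRespecting M p) : MRespecting M q := by
  induction hd with
  | base => exact hpr
  | @rot y z u q₁ h q₂ hadj hyM hder ih =>
      intro e he
      rcases ih e he with he' | hdisj
      · left
        rw [Walk.edges_append, Walk.edges_cons, List.mem_append, List.mem_cons] at he'
        rcases he' with h1 | h2 | h3
        · rw [Walk.edges_append]; exact List.mem_append_left _ h1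
        · exfalso
          apply hyM
          rw [SimpleGraph.mem_support]
          rw [h2] at he
          exact ⟨z, (SimpleGraph.mem_edgeSet M).mp he⟩
        · rw [Walk.edges_append, Walk.edges_cons]
          refine List.mem_append_right _ (List.mem_cons_of_mem _ ?_)
          rw [Walk.edges_reverse, List.mem_reverse]; exact h3
      · right
        intro x hx hxs
        apply hdisj x hx
        have i1 := hder.support_iff x
        have i2 := (Derived.rot q₁ h q₂ hadj hyM hder).support_iff x
        exact i1.mpr (i2.mp hxs)

lemma mem_support_of_mem_edges' {a b : V} {q : G.Walk a b} {e : Sym2 V} {y : V}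
    (he : e ∈ q.edges) (hy : y ∈ e) : y ∈ q.support := by
  induction e with
  | _ x₁ x₂ =>
    rcases Sym2.mem_iff.mp hy with rfl | rfl
    · exact q.fst_mem_support_of_mem_edges he
    · exact q.snd_mem_support_of_mem_edges he

lemma edges_at_start_unique {a b : V} {q : G.Walk a b} (hq : q.IsPath) {e₁ e₂ : Sym2 V}
    (h₁ : e₁ ∈ q.edges) (h₂ : e₂ ∈ q.edges) (ha₁ : a ∈ e₁) (ha₂ : a ∈ e₂) : e₁ = e₂ := by
  cases q with
  | nil => simp at h₁
  | cons h r =>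
    rename_i c
    have key : ∀ e : Sym2 V, e ∈ (Walk.cons h r).edges → a ∈ e → e = s(a, c) := by
      intro e he hae
      rw [Walk.edges_cons, List.mem_cons] at he
      rcases he with rfl | he
      · rfl
      · exact absurd (mem_support_of_mem_edges' he hae) ((Walk.cons_isPath_iff _ _).mp hq).2
    rw [key e₁ h₁ ha₁, key e₂ h₂ ha₂]

lemma edges_at_end_unique {a b : V} {q : G.Walk a b} (hq : q.IsPath) {e₁ e₂ : Sym2 V}
    (h₁ : e₁ ∈ q.edges) (h₂ : e₂ ∈ q.edges) (hb₁ : b ∈ e₁) (hb₂ : b ∈ e₂) : e₁ = e₂ := by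
  refine edges_at_start_unique (q := q.reverse) hq.reverse ?_ ?_ hb₁ hb₂ <;>
    rw [Walk.edges_reverse, List.mem_reverse] <;> assumption

lemma edges_at_le_two {a b : V} {q : G.Walk a b} (hq : q.IsPath) {e₁ e₂ e₃ : Sym2 V} {y : V}
    (h₁ : e₁ ∈ q.edges) (h₂ : e₂ ∈ q.edges) (h₃ : e₃ ∈ q.edges)
    (hy₁ : y ∈ e₁) (hy₂ : y ∈ e₂) (hy₃ : y ∈ e₃)
    (d₁₂ : e₁ ≠ e₂) (d₁₃ : e₁ ≠ e₃) (d₂₃ : e₂ ≠ e₃) : False := by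
  induction q with
  | nil => simp at h₁
  | cons h r ih =>
    rename_i x c _
    have hr : r.IsPath := ((Walk.cons_isPath_iff _ _).mp hq).1
    have hx : x ∉ r.support := ((Walk.cons_isPath_iff _ _).mp hq).2
    -- helper: if two of the edges are in r.edges and one is the head edge
    have key : ∀ f₁ f₂ : Sym2 V, f₁ ∈ r.edges → f₂ ∈ r.edges → f₁ ≠ f₂ →
        y ∈ f₁ → y ∈ f₂ → y ∈ s(x, c) → False := by
      intro f₁ f₂ hf₁ hf₂ hne hyf₁ hyf₂ hysc
      have hys : y ∈ r.support := mem_support_of_mem_edges' hf₁ hyf₁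
      have hyx : y ≠ x := fun hh => hx (hh ▸ hys)
      have hyc : y = c := by
        rcases Sym2.mem_iff.mp hysc with rfl | rfl
        · exact absurd rfl hyx
        · rfl
      subst hyc
      exact hne (edges_at_start_unique hr hf₁ hf₂ hyf₁ hyf₂)
    rw [Walk.edges_cons, List.mem_cons] at h₁ h₂ h₃
    rcases h₁ with rfl | h₁ <;> rcases h₂ with rfl | h₂ <;> rcases h₃ with rfl | h₃
    · exact d₁₂ rfl
    · exact d₁₂ rfl
    · exact d₁₃ rfl
    · exact key e₂ e₃ h₂ h₃ d₂₃ hy₂ hy₃ hy₁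
    · exact d₂₃ rfl
    · exact key e₁ e₃ h₁ h₃ d₁₃ hy₁ hy₃ hy₂
    · exact key e₁ e₂ h₁ h₂ d₁₂ hy₁ hy₂ hy₃
    · exact ih hr h₁ h₂ h₃

lemma loop_path_length_zero {q : G.Walk v v} (hq : q.IsPath) : q.length = 0 := by
  cases q with
  | nil => rfl
  | cons h r => exact absurd r.end_mem_support ((Walk.cons_isPath_iff _ _).mp hq).2

lemma length_eq_of_support_iff {a b : V} {q : G.Walk v a} {r : G.Walk v b}
    (hq : q.IsPath) (hr : r.IsPath) (h : ∀ x, x ∈ q.support ↔ x ∈ r.support) :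
    q.length = r.length := by
  have hperm := (List.perm_ext_iff_of_nodup hq.support_nodup hr.support_nodup).mpr h
  have := hperm.length_eq
  rw [Walk.length_support, Walk.length_support] at this
  omega

lemma derived_rotate [DecidableEq V] {u y : V} {q : G.Walk v u} (hd : Derived G M p q)
    (hy : y ∈ q.support) (hyu : y ≠ u) (hadj : G.Adj y u) (hyM : y ∉ M.support) :
    ∃ z : V, (∃ r : G.Walk v z, Derived G M p r) ∧ s(y, z) ∈ q.edges := by
  obtain ⟨z, h, q₂, hdeq⟩ := (q.dropUntil y hy).exists_eq_cons_of_ne hyu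
  have hq : q = (q.takeUntil y hy).append (Walk.cons h q₂) := by
    rw [← hdeq]; exact (q.take_spec hy).symm
  refine ⟨z, ⟨_, Derived.rot (q.takeUntil y hy) h q₂ hadj hyM (hq ▸ hd)⟩, ?_⟩
  rw [hq, Walk.edges_append, Walk.edges_cons]
  exact List.mem_append_right _ (List.mem_cons_self)

lemma mem_graph_support_of_mem_edgeSet {x : V} {e : Sym2 V} (he : e ∈ M.edgeSet)
    (hx : x ∈ e) : x ∈ M.support := by
  induction e with
  | _ a b =>
    rw [SimpleGraph.mem_edgeSet] at he
    rw [SimpleGraph.mem_support]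
    rcases Sym2.mem_iff.mp hx with rfl | rfl
    · exact ⟨b, he⟩
    · exact ⟨a, he.symm⟩

lemma matching_edge_unique (hM : ∀ x : V, (M.neighborSet x).Subsingleton) {c d : V}
    (hcd : M.Adj c d) {e : Sym2 V} (he : e ∈ M.edgeSet) (hc : c ∈ e) : e = s(c, d) := by
  induction e with
  | _ a b =>
    rw [SimpleGraph.mem_edgeSet] at he
    rcases Sym2.mem_iff.mp hc with rfl | rfl
    · rw [show _ = d from hM c he hcd]
    · rw [show _ = d from hM c he.symm hcd, Sym2.eq_swap]

theorem stmt_14' {V : Type*} [Fintype V] [DecidableEq V] (H M : SimpleGraph V)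
    (hM : ∀ v : V, (M.neighborSet v).Subsingleton)
    (hexp : H.Connected ∧ ∀ U : Set V, 8 * U.ncard ≤ Fintype.card V →
      2 * U.ncard ≤ (((⋃ u ∈ U, H.neighborSet u) \ U) \ M.support).ncard)
    (v w : V) (p : (H ⊔ M).Walk v w) (hp : p.IsPath) (hpr : MRespecting M p)
    (hlong : ∀ (a b : V) (q : (H ⊔ M).Walk a b),
      q.IsPath → MRespecting M q → q.length ≤ p.length) :
    Fintype.card V ≤ 8 * {u | u ∈ p.support ∧ ∃ q : (H ⊔ M).Walk v u,
      q.IsPath ∧ MRespecting M q ∧ ∀ x, x ∈ q.support ↔ x ∈ p.support}.ncard := by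
  classical
  set S : Set V := {u | u ∈ p.support ∧ ∃ q : (H ⊔ M).Walk v u,
      q.IsPath ∧ MRespecting M q ∧ ∀ x, x ∈ q.support ↔ x ∈ p.support} with hSdef
  have hwS : w ∈ S := ⟨p.end_mem_support, p, hp, hpr, fun _ => Iff.rfl⟩
  by_contra hcon
  push_neg at hcon
  have hS1 : 1 ≤ S.ncard := (Set.ncard_pos (Set.toFinite S)).mpr ⟨w, hwS⟩
  -- p has length at least 1
  have hlen1 : 1 ≤ p.length := by
    by_contra h0
    push_neg at h0
    interval_cases h : p.length
    have hcard : 8 < Fintype.card V := by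
      calc 8 = 8 * 1 := by ring
      _ ≤ 8 * S.ncard := by omega
      _ < Fintype.card V := hcon
    by_cases hMe : ∃ c d, M.Adj c d
    · obtain ⟨c, d, hcd⟩ := hMe
      have hW : ((Walk.cons (show (H ⊔ M).Adj c d from (sup_adj _ _ _ _).mpr (Or.inr hcd))
          Walk.nil) : (H ⊔ M).Walk c d).IsPath := by
        simp [Walk.cons_isPath_iff, M.ne_of_adj hcd]
      have hWr : MRespecting M ((Walk.cons (show (H ⊔ M).Adj c d from
          (sup_adj _ _ _ _).mpr (Or.inr hcd)) Walk.nil) : (H ⊔ M).Walk c d) := by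
        intro e he
        by_cases hecd : e = s(c, d)
        · left; simp [hecd]
        · right
          intro x hx hxs
          have hxs' : x = c ∨ x = d := by simpa using hxs
          rcases hxs' with rfl | rfl
          · exact hecd (matching_edge_unique hM hcd he hx)
          · exact hecd ((matching_edge_unique hM hcd.symm he hx).trans Sym2.eq_swap.symm)
      have := hlong c d _ hW hWr
      simp [h] at this
    · push_neg at hMe
      have hcard1 : (1 : ℕ) < Fintype.card V := by omega
      obtain ⟨a, b, hab⟩ := Fintype.exists_pair_of_one_lt_card hcard1
      obtain ⟨c, hac, r, hreq⟩ := ((hexp.1).preconnected a b).some.exists_eq_cons_of_ne hab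
      have hW : ((Walk.cons (show (H ⊔ M).Adj a c from (sup_adj _ _ _ _).mpr (Or.inl hac))
          Walk.nil) : (H ⊔ M).Walk a c).IsPath := by
        simp [Walk.cons_isPath_iff, H.ne_of_adj hac]
      have hWr : MRespecting M ((Walk.cons (show (H ⊔ M).Adj a c from
          (sup_adj _ _ _ _).mpr (Or.inl hac)) Walk.nil) : (H ⊔ M).Walk a c) := by
        intro e he
        exfalso
        induction e with
        | _ x y => exact hMe x y ((SimpleGraph.mem_edgeSet M).mp he)
      have := hlong a c _ hW hWr
      simp [h] at this
  -- the set of rotation endpoints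
  set S₀ : Set V := {x | ∃ r : (H ⊔ M).Walk v x, Derived (H ⊔ M) M p r} with hS₀def
  have hwS₀ : w ∈ S₀ := ⟨p, Derived.base⟩
  have hsubS : S₀ ⊆ S := by
    rintro x ⟨r, hr⟩
    exact ⟨(hr.support_iff x).mp r.end_mem_support, r, hr.isPath hp, hr.respects hpr,
      hr.support_iff⟩
  have hvS₀ : v ∉ S₀ := by
    rintro ⟨r, hr⟩
    have h1 := length_eq_of_support_iff (hr.isPath hp) hp (hr.support_iff)
    have h2 := loop_path_length_zero (hr.isPath hp)
    omega
  have h8 : 8 * S₀.ncard ≤ Fintype.card V :=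
    le_of_lt (lt_of_le_of_lt
      (Nat.mul_le_mul_left 8 (Set.ncard_le_ncard hsubS (Set.toFinite S))) hcon)
  have hY := hexp.2 S₀ h8
  set Y : Set V := ((⋃ u ∈ S₀, H.neighborSet u) \ S₀) \ M.support with hYdef
  have hYmem : ∀ y, y ∈ Y → (∃ u ∈ S₀, H.Adj u y) ∧ y ∉ S₀ ∧ y ∉ M.support := by
    intro y hy
    obtain ⟨⟨h1, h2⟩, h3⟩ := hy
    refine ⟨?_, h2, h3⟩
    simpa using h1
  -- Claim A : every vertex of Y lies on p
  have hA : ∀ y, y ∈ Y → y ∈ p.support := by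
    intro y hy
    obtain ⟨⟨u, huS₀, hadj⟩, hyS₀, hyM⟩ := hYmem y hy
    obtain ⟨r, hr⟩ := huS₀
    by_contra hyp
    have hys : y ∉ r.support := fun hh => hyp ((hr.support_iff y).mp hh)
    set r' := r.concat (show (H ⊔ M).Adj u y from (sup_adj _ _ _ _).mpr (Or.inl hadj)) with hr'def
    have hr'path : r'.IsPath := by
      rw [Walk.isPath_def, hr'def, Walk.support_concat,
        List.nodup_append]
      exact ⟨(hr.isPath hp).support_nodup, List.nodup_singleton y,
        fun x hx b hb hxb => hys (by rw [List.mem_singleton] at hb; rw [← hb, ← hxb]; exact hx)⟩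
    have hr'resp : MRespecting M r' := by
      intro e he
      rcases hr.respects hpr e he with h1 | h2
      · left
        rw [hr'def, Walk.edges_concat, List.concat_eq_append]
        exact List.mem_append_left _ h1
      · right
        intro x hx hxs
        rw [hr'def, Walk.support_concat, List.mem_append,
          List.mem_singleton] at hxs
        rcases hxs with hxs | rfl
        · exact h2 x hx hxs
        · exact hyM (mem_graph_support_of_mem_edgeSet he hx)
    have hle := hlong v y r' hr'path hr'resp
    have hlen := length_eq_of_support_iff (hr.isPath hp) hp (hr.support_iff)
    rw [hr'def, Walk.length_concat] at hle
    omega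
  -- Claim B : every vertex of Y has a p-neighbour in S₀
  have hB : ∀ y, y ∈ Y → ∃ z, z ∈ S₀ ∧ s(y, z) ∈ p.edges := by
    intro y hy
    obtain ⟨⟨u, huS₀, hadj⟩, hyS₀, hyM⟩ := hYmem y hy
    have hyp : y ∈ p.support := hA y hy
    obtain ⟨r, hr⟩ := huS₀
    have hysr : y ∈ r.support := (hr.support_iff y).mpr hyp
    have hyu : y ≠ u := (H.ne_of_adj hadj).symm
    obtain ⟨z, hzS₀, hyzr⟩ :=
      derived_rotate hr hysr hyu ((sup_adj _ _ _ _).mpr (Or.inl hadj.symm)) hyM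
    by_cases hyzp : s(y, z) ∈ p.edges
    · exact ⟨z, hzS₀, hyzp⟩
    by_cases hyv : y = v
    · subst hyv
      have hvw : y ≠ w := by
        rintro rfl
        have := loop_path_length_zero hp
        omega
      obtain ⟨b, hb, p₂, hpeq⟩ := p.exists_eq_cons_of_ne hvw
      have he₀ : s(y, b) ∈ p.edges := by rw [hpeq, Walk.edges_cons]; exact List.mem_cons_self
      by_cases h0r : s(y, b) ∈ r.edges
      · exfalso
        have heq := edges_at_start_unique (hr.isPath hp) h0r hyzr
          (Sym2.mem_mk_left _ _) (Sym2.mem_mk_left _ _)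
        exact hyzp (heq ▸ he₀)
      · rcases hr.mem_edges _ he₀ with h | ⟨x, hxe, hxS₀⟩
        · exact absurd h h0r
        · rcases Sym2.mem_iff.mp hxe with rfl | rfl
          · exact absurd hxS₀ hvS₀
          · exact ⟨x, hxS₀, he₀⟩
    · have hyw : y ≠ w := fun hh => hyS₀ (hh ▸ hwS₀)
      have hspec : (p.takeUntil y hyp).append (p.dropUntil y hyp) = p := p.take_spec hyp
      obtain ⟨a, ha, t, hteq⟩ := (p.takeUntil y hyp).reverse.exists_eq_cons_of_ne hyv
      have hya₁ : s(y, a) ∈ (p.takeUntil y hyp).edges := by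
        have : s(y, a) ∈ (p.takeUntil y hyp).reverse.edges := by
          rw [hteq, Walk.edges_cons]; exact List.mem_cons_self
        rwa [Walk.edges_reverse, List.mem_reverse] at this
      obtain ⟨b, hb, t₂, ht₂eq⟩ := (p.dropUntil y hyp).exists_eq_cons_of_ne hyw
      have hyb₂ : s(y, b) ∈ (p.dropUntil y hyp).edges := by
        rw [ht₂eq, Walk.edges_cons]; exact List.mem_cons_self
      have hyap : s(y, a) ∈ p.edges := by
        rw [← hspec, Walk.edges_append]; exact List.mem_append_left _ hya₁
      have hybp : s(y, b) ∈ p.edges := by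
        rw [← hspec, Walk.edges_append]; exact List.mem_append_right _ hyb₂
      have hab : a ≠ b := by
        have hnodup := hp.support_nodup
        rw [← hspec, Walk.support_append, List.nodup_append] at hnodup
        have has : a ∈ (p.takeUntil y hyp).support :=
          mem_support_of_mem_edges' hya₁ (Sym2.mem_mk_right _ _)
        have hbs : b ∈ (p.dropUntil y hyp).support.tail := by
          rw [ht₂eq, Walk.support_cons]
          exact t₂.start_mem_support
        exact fun hh => hnodup.2.2 a has a (hh ▸ hbs) rfl
      by_cases hcase : s(y, a) ∈ r.edges ∧ s(y, b) ∈ r.edges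
      · exfalso
        refine edges_at_le_two (hr.isPath hp) hcase.1 hcase.2 hyzr
          (Sym2.mem_mk_left _ _) (Sym2.mem_mk_left _ _) (Sym2.mem_mk_left _ _) ?_ ?_ ?_
        · intro hh
          rcases Sym2.eq_iff.mp hh with ⟨-, h2⟩ | ⟨h1, h2⟩
          · exact hab h2
          · exact hab (h2.trans h1)
        · exact fun hh => hyzp (hh ▸ hyap)
        · exact fun hh => hyzp (hh ▸ hybp)
      · rcases not_and_or.mp hcase with hmiss | hmiss
        · rcases hr.mem_edges _ hyap with h | ⟨x, hxe, hxS₀⟩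
          · exact absurd h hmiss
          · rcases Sym2.mem_iff.mp hxe with rfl | rfl
            · exact absurd hxS₀ hyS₀
            · exact ⟨x, hxS₀, hyap⟩
        · rcases hr.mem_edges _ hybp with h | ⟨x, hxe, hxS₀⟩
          · exact absurd h hmiss
          · rcases Sym2.mem_iff.mp hxe with rfl | rfl
            · exact absurd hxS₀ hyS₀
            · exact ⟨x, hxS₀, hybp⟩
  -- Counting
  have hfinS₀ := S₀.toFinite
  have hfinY := Y.toFinite
  set S₀f := hfinS₀.toFinset with hS₀f
  set Yf := hfinY.toFinset with hYf
  have hnS : S₀f.card = S₀.ncard := (Set.ncard_eq_toFinset_card S₀ hfinS₀).symm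
  have hnY : Yf.card = Y.ncard := (Set.ncard_eq_toFinset_card Y hfinY).symm
  set F := p.edges.toFinset.filter (fun e => ∃ z ∈ S₀f, z ∈ e) with hF
  set f : V → Sym2 V := fun y =>
    if h : ∃ z, z ∈ S₀ ∧ s(y, z) ∈ p.edges then s(y, h.choose) else s(y, y) with hf
  have hfY : ∀ y ∈ Yf, f y ∈ F := by
    intro y hy
    rw [hYf, Set.Finite.mem_toFinset] at hy
    obtain ⟨z, hz⟩ := hB y hy
    have hex : ∃ z, z ∈ S₀ ∧ s(y, z) ∈ p.edges := ⟨z, hz⟩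
    have hfy : f y = s(y, hex.choose) := dif_pos hex
    obtain ⟨hzc1, hzc2⟩ := hex.choose_spec
    rw [hF, Finset.mem_filter, hfy]
    exact ⟨List.mem_toFinset.mpr hzc2,
      hex.choose, (Set.Finite.mem_toFinset hfinS₀).mpr hzc1, Sym2.mem_mk_right _ _⟩
  have hYnotS₀ : ∀ y ∈ Yf, y ∉ S₀ := by
    intro y hy
    rw [hYf, Set.Finite.mem_toFinset] at hy
    exact (hYmem y hy).2.1
  have hinj : Set.InjOn f Yf := by
    intro y₁ hy₁ y₂ hy₂ heq
    rw [Finset.mem_coe] at hy₁ hy₂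
    have h₁ : ∃ z, z ∈ S₀ ∧ s(y₁, z) ∈ p.edges := by
      obtain ⟨z, hz⟩ := hB y₁ ((Set.Finite.mem_toFinset hfinY).mp hy₁); exact ⟨z, hz⟩
    have h₂ : ∃ z, z ∈ S₀ ∧ s(y₂, z) ∈ p.edges := by
      obtain ⟨z, hz⟩ := hB y₂ ((Set.Finite.mem_toFinset hfinY).mp hy₂); exact ⟨z, hz⟩
    rw [hf] at heq
    simp only at heq
    rw [dif_pos h₁, dif_pos h₂] at heq
    rcases Sym2.eq_iff.mp heq with ⟨h3, -⟩ | ⟨h3, h4⟩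
    · exact h3
    · exact absurd (h3 ▸ h₂.choose_spec.1) (hYnotS₀ y₁ hy₁)
  have c1 : Yf.card ≤ F.card := Finset.card_le_card_of_injOn f hfY hinj
  have c2 : F ⊆ S₀f.biUnion (fun z => p.edges.toFinset.filter (fun e => z ∈ e)) := by
    intro e he
    rw [hF, Finset.mem_filter] at he
    obtain ⟨hep, z, hz, hze⟩ := he
    rw [Finset.mem_biUnion]
    exact ⟨z, hz, Finset.mem_filter.mpr ⟨hep, hze⟩⟩
  have c3 : F.card ≤ ∑ z ∈ S₀f, (p.edges.toFinset.filter (fun e => z ∈ e)).card :=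
    le_trans (Finset.card_le_card c2) Finset.card_biUnion_le
  have d2 : ∀ z : V, (p.edges.toFinset.filter (fun e => z ∈ e)).card ≤ 2 := by
    intro z
    by_contra hgt
    push_neg at hgt
    obtain ⟨e₁, he₁, e₂, he₂, e₃, he₃, d₁₂, d₁₃, d₂₃⟩ := Finset.two_lt_card.mp hgt
    rw [Finset.mem_filter, List.mem_toFinset] at he₁ he₂ he₃
    exact edges_at_le_two hp he₁.1 he₂.1 he₃.1 he₁.2 he₂.2 he₃.2 d₁₂ d₁₃ d₂₃
  have dw : (p.edges.toFinset.filter (fun e => w ∈ e)).card ≤ 1 := by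
    rw [Finset.card_le_one]
    intro e₁ h₁ e₂ h₂
    rw [Finset.mem_filter, List.mem_toFinset] at h₁ h₂
    exact edges_at_end_unique hp h₁.1 h₂.1 h₁.2 h₂.2
  have hwf : w ∈ S₀f := (Set.Finite.mem_toFinset hfinS₀).mpr hwS₀
  have c4 : ∑ z ∈ S₀f, (p.edges.toFinset.filter (fun e => z ∈ e)).card ≤
      1 + 2 * (S₀f.card - 1) := by
    rw [← Finset.sum_erase_add S₀f _ hwf]
    have h5 : ∑ z ∈ S₀f.erase w, (p.edges.toFinset.filter (fun e => z ∈ e)).card ≤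
        ∑ _z ∈ S₀f.erase w, 2 := Finset.sum_le_sum (fun z _ => d2 z)
    rw [Finset.sum_const, smul_eq_mul, Finset.card_erase_of_mem hwf] at h5
    omega
  have hn1 : 1 ≤ S₀.ncard := (Set.ncard_pos hfinS₀).mpr ⟨w, hwS₀⟩
  omega

end PosaRotation

/-- Let `H` be an `M`-respecting 2-expander (for a matching `M` on `V(H)`), and let
`P` be a longest `M`-respecting path in `H + M` with endpoint `v`.  Then at least
`|V(H)|/8` vertices `u ∈ V(P)` admit an `M`-respecting `v–u` path in `H + M` whose
vertex set equals `V(P)`. -/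
theorem stmt_14 {V : Type*} [Fintype V] [DecidableEq V] (H M : SimpleGraph V)
    (hM : ∀ v : V, (M.neighborSet v).Subsingleton)
    (hexp : MRespExpander H M)
    (v w : V) (p : (H ⊔ M).Walk v w) (hp : p.IsPath) (hpr : MRespecting M p)
    (hlong : ∀ (a b : V) (q : (H ⊔ M).Walk a b),
      q.IsPath → MRespecting M q → q.length ≤ p.length) :
    Fintype.card V ≤ 8 * {u | u ∈ p.support ∧ ∃ q : (H ⊔ M).Walk v u,
      q.IsPath ∧ MRespecting M q ∧ ∀ x, x ∈ q.support ↔ x ∈ p.support}.ncard := by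
  exact stmt_14' H M hM hexp v w p hp hpr hlong
end

section
/- Let D be a finite directed graph on vertex set T in which every vertex outside a subset A ⊆ T has exactly two out-neighbours and every vertex of T has at most one in-neighbour, all out-neighbours of a vertex x ∈ T \ A lie in A ∪ {vertices earlier than x in a fixed linear order on T \ A}, and vertices of A have no out-neighbours. Then the underlying undirected graph of D contains a collection of vertex-disjoint paths covering T \ A such that each path has both endpoints in A and all internal vertices in T \ A, using at most 2|T \ A| vertices of A in total. -/
open SimpleGraph

/-- Let `D` be a finite digraph on `T` with `A ⊆ T` and a fixed linear order, in
which every vertex outside `A` has exactly two out-neighbours (each in `A` or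
strictly earlier in the order), every vertex has at most one in-neighbour, and
vertices of `A` have no out-neighbours.  Then the underlying undirected graph
contains a linear forest (acyclic, maximum degree `≤ 2`) covering `T \ A` whose
path endpoints lie in `A`, whose internal (degree-2) vertices lie in `T \ A`, and
which uses at most `2|T \ A|` vertices of `A`. -/
theorem stmt_18 {T : Type*} [Fintype T] [DecidableEq T] [LinearOrder T]
    (D : T → T → Prop) (A : Set T)
    (hout : ∀ x ∉ A, {y | D x y}.ncard = 2)
    (hin : ∀ y : T, {x | D x y}.ncard ≤ 1)
    (hdir : ∀ x ∉ A, ∀ y, D x y → y ∈ A ∨ y < x)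
    (hA : ∀ a ∈ A, ∀ y, ¬D a y) :
    ∃ F : SimpleGraph T,
      (∀ x y, F.Adj x y → x ≠ y ∧ (D x y ∨ D y x)) ∧
      F.IsAcyclic ∧ (∀ v, (F.neighborSet v).ncard ≤ 2) ∧
      (Aᶜ ⊆ F.support) ∧
      (∀ v ∈ F.support, (F.neighborSet v).ncard ≤ 1 → v ∈ A) ∧
      (∀ v, (F.neighborSet v).ncard = 2 → v ∉ A) ∧
      (F.support ∩ A).ncard ≤ 2 * (Aᶜ : Set T).ncard := by
  classical
  -- the two out-neighbours of a vertex outside A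
  have h2 : ∀ x : T, ∃ u w : T, x ∉ A → u < w ∧ {y | D x y} = {u, w} := by
    intro x
    by_cases hx : x ∈ A
    · exact ⟨x, x, fun h => absurd hx h⟩
    · obtain ⟨a, b, hab, hs⟩ := Set.ncard_eq_two.mp (hout x hx)
      rcases lt_or_gt_of_ne hab with h | h
      · exact ⟨a, b, fun _ => ⟨h, hs⟩⟩
      · exact ⟨b, a, fun _ => ⟨h, by rw [hs, Set.pair_comm]⟩⟩
  choose l r hlr using h2
  have hmem : ∀ {x y : T}, x ∉ A → (D x y ↔ y = l x ∨ y = r x) := by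
    intro x y hx
    have := (hlr x hx).2
    constructor
    · intro hD
      have hy : y ∈ ({l x, r x} : Set T) := this ▸ hD
      simpa using hy
    · intro h
      have hy : y ∈ {y | D x y} := by rw [this]; simpa using h
      exact hy
  have hDl : ∀ {x : T}, x ∉ A → D x (l x) := fun {x} hx => (hmem hx).mpr (Or.inl rfl)
  have hDr : ∀ {x : T}, x ∉ A → D x (r x) := fun {x} hx => (hmem hx).mpr (Or.inr rfl)
  have hlt : ∀ {x : T}, x ∉ A → l x < r x := fun {x} hx => (hlr x hx).1
  -- at most one in-neighbour
  have huniq : ∀ {y p q : T}, D p y → D q y → p = q := by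
    intro y p q hp hq
    exact (Set.ncard_le_one (Set.toFinite _)).mp (hin y) p hp q hq
  -- tails of edges are outside A
  have hnA : ∀ {p y : T}, D p y → p ∉ A := fun {p y} h hp => hA p hp y h
  have parent_gt : ∀ {p x : T}, D p x → x ∉ A → x < p := by
    intro p x hpx hx
    rcases hdir p (hnA hpx) x hpx with h | h
    · exact absurd h hx
    · exact h
  have noself : ∀ x : T, ¬D x x := by
    intro x hx
    by_cases h : x ∈ A
    · exact hA x h x hx
    · exact lt_irrefl x (parent_gt hx h)
  -- "top" vertices, by well-founded recursion upward through parents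
  have wfgt : WellFounded ((· > ·) : T → T → Prop) := wellFounded_gt
  let top : T → Prop := WellFounded.fix wfgt
    (fun x ih => (∀ p, ¬D p x) ∨ ∃ p, ∃ hpx : p > x, D p x ∧ x = r p ∧ ¬ih p hpx)
  have top_def : ∀ x : T,
      top x ↔ ((∀ p, ¬D p x) ∨ ∃ p, ∃ _ : p > x, D p x ∧ x = r p ∧ ¬top p) := by
    intro x
    exact iff_of_eq (WellFounded.fix_eq wfgt _ x)
  -- the kept directed edges
  let K : T → T → Prop := fun x y => x ∉ A ∧ D x y ∧ (y = l x ∨ (y = r x ∧ top x))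
  let F : SimpleGraph T :=
    { Adj := fun x y => K x y ∨ K y x
      symm := ⟨fun x y h => h.symm⟩
      loopless := by
        constructor
        intro x h
        rcases h with ⟨_, hD, _⟩ | ⟨_, hD, _⟩ <;> exact noself x hD }
  have hFAdj : ∀ x y : T, F.Adj x y ↔ (K x y ∨ K y x) := fun _ _ => Iff.rfl
  have hKD : ∀ {x y : T}, K x y → D x y := fun h => h.2.1
  -- neighbour set of a top vertex outside A
  have nbTop : ∀ v : T, v ∉ A → top v → F.neighborSet v = {l v, r v} := by
    intro v hv htop
    ext y
    simp only [mem_neighborSet, hFAdj, Set.mem_insert_iff, Set.mem_singleton_iff]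
    constructor
    · rintro (⟨_, _, hc⟩ | ⟨hy, hDyv, hc⟩)
      · rcases hc with h | ⟨h, _⟩
        · exact Or.inl h
        · exact Or.inr h
      · exfalso
        rcases (top_def v).mp htop with h | ⟨p, _, hDpv, hrv, hntp⟩
        · exact h y hDyv
        · have : p = y := huniq hDpv hDyv
          subst this
          rcases hc with h | ⟨_, htp⟩
          · exact (ne_of_lt (hlt hy)) (h ▸ hrv ▸ rfl)
          · exact hntp htp
    · rintro (rfl | rfl)
      · exact Or.inl ⟨hv, hDl hv, Or.inl rfl⟩
      · exact Or.inl ⟨hv, hDr hv, Or.inr ⟨rfl, htop⟩⟩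
  -- neighbour set of a non-top vertex outside A
  have nbNotTop : ∀ v : T, v ∉ A → ¬top v →
      ∃ p : T, D p v ∧ F.neighborSet v = {l v, p} := by
    intro v hv hnt
    have h1 : ¬((∀ p, ¬D p v) ∨ ∃ p, ∃ _ : p > v, D p v ∧ v = r p ∧ ¬top p) :=
      fun h => hnt ((top_def v).mpr h)
    push_neg at h1
    obtain ⟨⟨p, hp⟩, h2⟩ := h1
    have hforce : ∀ q : T, D q v → v = r q → top q := by
      intro q hq hrv
      exact h2 q (parent_gt hq hv) hq hrv
    refine ⟨p, hp, ?_⟩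
    ext y
    simp only [mem_neighborSet, hFAdj, Set.mem_insert_iff, Set.mem_singleton_iff]
    constructor
    · rintro (⟨_, _, hc⟩ | ⟨hy, hDyv, _⟩)
      · rcases hc with h | ⟨_, htv⟩
        · exact Or.inl h
        · exact absurd htv hnt
      · exact Or.inr (huniq hDyv hp)
    · rintro (rfl | hyp)
      · exact Or.inl ⟨hv, hDl hv, Or.inl rfl⟩
      · rw [hyp]
        refine Or.inr ⟨hnA hp, hp, ?_⟩
        rcases (hmem (hnA hp)).mp hp with h | h
        · exact Or.inl h
        · exact Or.inr ⟨h, hforce p hp h⟩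
  -- degree of any vertex outside A is exactly 2
  have deg2 : ∀ v : T, v ∉ A → (F.neighborSet v).ncard = 2 := by
    intro v hv
    by_cases htop : top v
    · rw [nbTop v hv htop]
      exact Set.ncard_pair (ne_of_lt (hlt hv))
    · obtain ⟨p, hp, hnb⟩ := nbNotTop v hv htop
      rw [hnb]
      refine Set.ncard_pair ?_
      intro h
      by_cases hlA : l v ∈ A
      · exact (hnA hp) (h ▸ hlA)
      · have h1 : l v < v := by
          rcases hdir v hv (l v) (hDl hv) with hh | hh
          · exact absurd hh hlA
          · exact hh
        have h2 : v < p := parent_gt hp hv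
        have h3 := h1.trans h2
        rw [h] at h3
        exact lt_irrefl p h3
  -- neighbour set of a vertex in A is contained in its in-neighbours
  have nbA : ∀ v : T, v ∈ A → (F.neighborSet v).ncard ≤ 1 := by
    intro v hv
    refine le_trans (Set.ncard_le_ncard ?_ (Set.toFinite _)) (hin v)
    rintro y (⟨hvA, _, _⟩ | ⟨_, hD, _⟩)
    · exact absurd hv hvA
    · exact hD
  -- the potential function for acyclicity
  let μ : T → ℕ := fun x =>
    if x ∈ A then 0 else 1 + (Finset.univ.filter fun y => y ∉ A ∧ y < x).card
  have μdec : ∀ {a b : T}, D a b → μ b < μ a := by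
    intro a b hab
    have ha : a ∉ A := hnA hab
    have hμa : μ a = 1 + (Finset.univ.filter fun y => y ∉ A ∧ y < a).card := if_neg ha
    by_cases hb : b ∈ A
    · rw [show μ b = 0 from if_pos hb, hμa]
      omega
    · have hba : b < a := by
        rcases hdir a ha b hab with h | h
        · exact absurd h hb
        · exact h
      rw [show μ b = 1 + (Finset.univ.filter fun y => y ∉ A ∧ y < b).card from if_neg hb, hμa]
      have hss : (Finset.univ.filter fun y => y ∉ A ∧ y < b) ⊂
          (Finset.univ.filter fun y => y ∉ A ∧ y < a) := by
        refine Finset.ssubset_iff_of_subset ?_ |>.mpr ⟨b, ?_, ?_⟩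
        · intro y hy
          simp only [Finset.mem_filter, Finset.mem_univ, true_and] at hy ⊢
          exact ⟨hy.1, hy.2.trans hba⟩
        · simp only [Finset.mem_filter, Finset.mem_univ, true_and]
          exact ⟨hb, hba⟩
        · simp
      have := Finset.card_lt_card hss
      omega
  -- an F-edge incident to a μ-minimal vertex must be directed into it
  have dir_into : ∀ {a b : T}, F.Adj a b → μ a ≤ μ b → D b a := by
    intro a b hab hle
    rcases (hFAdj a b).mp hab with h | h
    · exact absurd (μdec (hKD h)) (not_lt.mpr hle)
    · exact hKD h
  -- acyclicity
  have hacyc : F.IsAcyclic := by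
    intro v c hc
    have hvmem : v ∈ c.support := Walk.start_mem_support c
    have hne : c.support.toFinset.Nonempty := ⟨v, List.mem_toFinset.mpr hvmem⟩
    obtain ⟨m, hmF, hmin⟩ := Finset.exists_min_image c.support.toFinset μ hne
    have hm : m ∈ c.support := List.mem_toFinset.mp hmF
    set c' := c.rotate m hm with hc'def
    have hc' : c'.IsCycle := hc.rotate hm
    have hmin' : ∀ y ∈ c'.support, μ m ≤ μ y := by
      intro y hy
      rw [Walk.support_eq_cons, List.mem_cons] at hy
      rcases hy with rfl | hy
      · exact le_refl _
      · have hrot := Walk.support_rotate c m hm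
        have : y ∈ c.support.tail := hrot.mem_iff.mp (by exact hy)
        exact hmin y (List.mem_toFinset.mpr (List.mem_of_mem_tail this))
    obtain ⟨u, h1, q, hq⟩ := Walk.not_nil_iff.mp hc'.not_nil
    obtain ⟨x, q', h2, heq⟩ := Walk.exists_cons_eq_concat h1 q
    have hcc : c' = q'.concat h2 := hq.trans heq
    -- the first and last edges of the cycle
    have hxe : s(x, m) ∈ c'.edges := by
      rw [hcc, Walk.edges_concat]
      simp
    have hxsup : x ∈ c'.support := c'.fst_mem_support_of_mem_edges hxe
    have husup : u ∈ c'.support := by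
      rw [hq, Walk.support_cons]
      exact List.mem_cons_of_mem _ q.start_mem_support
    have hDum : D u m := dir_into h1 (hmin' u husup)
    have hDxm : D x m := dir_into h2.symm (hmin' x hxsup)
    -- u ≠ x, using distinctness of the cycle's edges
    have hnodup : c'.edges.Nodup := hc'.isTrail.edges_nodup
    have hlen : 3 ≤ c'.length := hc'.three_le_length
    have hq'len : 2 ≤ q'.length := by
      have : c'.length = q'.length + 1 := by rw [hcc, Walk.length_concat]
      omega
    have hq'ne : q'.edges ≠ [] := by
      intro h
      have := q'.length_edges
      rw [h] at this
      simp at this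
      omega
    obtain ⟨e, es, hes⟩ := List.exists_cons_of_ne_nil hq'ne
    have hE1 : c'.edges = s(m, u) :: q.edges := by rw [hq, Walk.edges_cons]
    have hE2 : c'.edges = e :: (es ++ [s(x, m)]) := by
      rw [hcc, Walk.edges_concat, hes]
      simp
    have hqedges : q.edges = es ++ [s(x, m)] := by
      have := hE1.symm.trans hE2
      exact (List.cons.injEq _ _ _ _ ▸ this).2
    have hxmem : s(x, m) ∈ q.edges := by rw [hqedges]; simp
    have hmu_not : s(m, u) ∉ q.edges := by
      rw [hE1] at hnodup
      exact (List.nodup_cons.mp hnodup).1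
    have hux : u ≠ x := by
      intro h
      apply hmu_not
      have : s(x, m) = s(m, u) := by rw [h, Sym2.eq_swap]
      rw [← this]
      exact hxmem
    exact hux (huniq hDum hDxm)
  -- assemble the conclusion
  refine ⟨F, ?_, hacyc, ?_, ?_, ?_, ?_, ?_⟩
  · -- edges come from D
    intro x y hxy
    refine ⟨F.ne_of_adj hxy, ?_⟩
    rcases (hFAdj x y).mp hxy with h | h
    · exact Or.inl (hKD h)
    · exact Or.inr (hKD h)
  · -- max degree ≤ 2
    intro v
    by_cases hv : v ∈ A
    · exact le_trans (nbA v hv) (by omega)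
    · exact le_of_eq (deg2 v hv)
  · -- Aᶜ ⊆ support
    intro v hv
    have := deg2 v hv
    have hne : (F.neighborSet v).Nonempty := by
      rw [← Set.ncard_pos (Set.toFinite _)] at *
      omega
    obtain ⟨w, hw⟩ := hne
    exact (SimpleGraph.mem_support F).mpr ⟨w, hw⟩
  · -- endpoints in A
    intro v _ hle
    by_contra hv
    have := deg2 v hv
    omega
  · -- internal vertices outside A
    intro v h2
    intro hv
    have := nbA v hv
    omega
  · -- at most 2|Aᶜ| vertices of A used
    have hpar : ∀ a : T, ∃ p : T, (∃ q, D q a) → D p a := by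
      intro a
      by_cases h : ∃ q, D q a
      · obtain ⟨q, hq⟩ := h
        exact ⟨q, fun _ => hq⟩
      · exact ⟨a, fun hh => absurd hh h⟩
    choose f hf using hpar
    set S : Set T := F.support ∩ A with hS
    have hparent : ∀ a ∈ S, D (f a) a ∧ (a = l (f a) ∨ a = r (f a)) := by
      rintro a ⟨hsup, hAa⟩
      obtain ⟨w, hw⟩ := (SimpleGraph.mem_support F).mp hsup
      have hDwa : D w a := by
        rcases (hFAdj a w).mp hw with ⟨haA, _, _⟩ | ⟨_, hD, _⟩
        · exact absurd hAa haA
        · exact hD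
      have hfa : D (f a) a := hf a ⟨w, hDwa⟩
      exact ⟨hfa, (hmem (hnA hfa)).mp hfa⟩
    set S1 : Set T := {a ∈ S | a = l (f a)} with hS1
    set S2 : Set T := {a ∈ S | a = r (f a)} with hS2
    have hsub : S ⊆ S1 ∪ S2 := by
      intro a ha
      rcases (hparent a ha).2 with h | h
      · exact Or.inl ⟨ha, h⟩
      · exact Or.inr ⟨ha, h⟩
    have hinj1 : Set.InjOn f S1 := by
      rintro a ⟨haS, hal⟩ b ⟨hbS, hbl⟩ hab
      rw [hal, hbl, hab]
    have hinj2 : Set.InjOn f S2 := by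
      rintro a ⟨haS, hal⟩ b ⟨hbS, hbl⟩ hab
      rw [hal, hbl, hab]
    have hmaps1 : Set.MapsTo f S1 Aᶜ := by
      rintro a ⟨haS, _⟩
      exact hnA (hparent a haS).1
    have hmaps2 : Set.MapsTo f S2 Aᶜ := by
      rintro a ⟨haS, _⟩
      exact hnA (hparent a haS).1
    have h1 : S1.ncard ≤ (Aᶜ : Set T).ncard :=
      Set.ncard_le_ncard_of_injOn f hmaps1 hinj1 (Set.toFinite _)
    have h2 : S2.ncard ≤ (Aᶜ : Set T).ncard :=
      Set.ncard_le_ncard_of_injOn f hmaps2 hinj2 (Set.toFinite _)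
    calc S.ncard ≤ (S1 ∪ S2).ncard := Set.ncard_le_ncard hsub (Set.toFinite _)
      _ ≤ S1.ncard + S2.ncard := Set.ncard_union_le _ _
      _ ≤ 2 * (Aᶜ : Set T).ncard := by omega
end

section
/- Let H be a graph with a matching M on V(H), and suppose H is an M-respecting 2-expander. Let P be a longest M-respecting path in H + M with endpoint v, and let U be the set of endpoints obtainable from P by sequences of M-respecting rotations with v fixed. Then N_H(U) ⊆ V(P), and moreover |N_H(U)| ≤ 2|U| − 1 + |V(M) ∩ N_H(U)|. -/
open SimpleGraph

/-- `q` is obtained from `p` by a single `M`-respecting rotation with the initial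
vertex `v` fixed: writing `p = x₁ … x_i x_{i+1} … x_k`, we break an edge
`x_i x_{i+1} ∉ M` with `x_i x_k ∈ E(H)` to obtain
`q = x₁ … x_i x_k x_{k-1} … x_{i+1}`. -/
def IsRotationFrom {V : Type*} (H M : SimpleGraph V) {v w u : V}
    (p : (H ⊔ M).Walk v w) (q : (H ⊔ M).Walk v u) : Prop :=
  ∃ (x : V) (p₁ : (H ⊔ M).Walk v x) (h₁ : (H ⊔ M).Adj x u)
    (p₂ : (H ⊔ M).Walk u w) (h₂ : (H ⊔ M).Adj x w),
    H.Adj x w ∧ s(x, u) ∉ M.edgeSet ∧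
    p = p₁.append (SimpleGraph.Walk.cons h₁ p₂) ∧
    q = p₁.append (SimpleGraph.Walk.cons h₂ p₂.reverse)

/-- One rotation step between `M`-respecting paths from `v` (bundled with their
final endpoints). -/
def RotStep {V : Type*} (H M : SimpleGraph V) (v : V)
    (a b : Σ u : V, (H ⊔ M).Walk v u) : Prop :=
  a.2.IsPath ∧ b.2.IsPath ∧ MRespecting M a.2 ∧ MRespecting M b.2 ∧
    IsRotationFrom H M a.2 b.2


section AuxLemmas
variable {V : Type*} {H M : SimpleGraph V}

lemma exists_cons_of_ne' {G : SimpleGraph V} {a b : V} (r : G.Walk a b) (h : a ≠ b) :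
    ∃ (c : V) (hc : G.Adj a c) (r' : G.Walk c b), r = Walk.cons hc r' := by
  cases r with
  | nil => exact (h rfl).elim
  | cons hc r' => exact ⟨_, hc, r', rfl⟩

lemma path_eq_nil_edges {G : SimpleGraph V} {t t' : V} (r : G.Walk t t') (h : t = t')
    (hr : r.IsPath) : r.edges = [] := by
  subst h
  rw [Walk.isPath_iff_eq_nil] at hr
  subst hr
  rfl

/-- support of rotated walk is a permutation of the original -/
lemma rot_support_perm {G : SimpleGraph V} {v x b u : V} (p₁ : G.Walk v x) (h₁ : G.Adj x b)
    (p₂ : G.Walk b u) (h₂ : G.Adj x u) :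
    (p₁.append (Walk.cons h₂ p₂.reverse)).support.Perm
      ((p₁.append (Walk.cons h₁ p₂)).support) := by
  rw [Walk.support_append, Walk.support_append, Walk.support_cons, Walk.support_cons,
    List.tail_cons, List.tail_cons, Walk.support_reverse]
  exact List.Perm.append_left _ (List.reverse_perm _)

lemma rot_isPath {G : SimpleGraph V} {v x b u : V} {p₁ : G.Walk v x} {h₁ : G.Adj x b}
    {p₂ : G.Walk b u} (h₂ : G.Adj x u) (hp : (p₁.append (Walk.cons h₁ p₂)).IsPath) :
    (p₁.append (Walk.cons h₂ p₂.reverse)).IsPath := by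
  rw [Walk.isPath_def] at hp ⊢
  exact ((rot_support_perm p₁ h₁ p₂ h₂).symm.nodup hp)

lemma rot_mresp {v x b u : V} {p₁ : (H ⊔ M).Walk v x} {h₁ : (H ⊔ M).Adj x b}
    {p₂ : (H ⊔ M).Walk b u} (h₂ : (H ⊔ M).Adj x u) (hnm : s(x, b) ∉ M.edgeSet)
    (hresp : MRespecting M (p₁.append (Walk.cons h₁ p₂))) :
    MRespecting M (p₁.append (Walk.cons h₂ p₂.reverse)) := by
  intro e he
  rcases hresp e he with h | h
  · left
    rw [Walk.edges_append, Walk.edges_cons] at h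
    rw [Walk.edges_append, Walk.edges_cons, Walk.edges_reverse]
    simp only [List.mem_append, List.mem_cons, List.mem_reverse] at h ⊢
    rcases h with h | h | h
    · exact Or.inl h
    · exact absurd (h ▸ he) hnm
    · exact Or.inr (Or.inr h)
  · right
    intro z hz
    have := h z hz
    intro hmem
    exact this (((rot_support_perm p₁ h₁ p₂ h₂).mem_iff).mp hmem)

end AuxLemmas

lemma reach_inv {V : Type*} {H M : SimpleGraph V} {v w : V} {p : (H ⊔ M).Walk v w}
    (hp : p.IsPath) (hpr : MRespecting M p) :
    ∀ a : Σ u : V, (H ⊔ M).Walk v u, Relation.ReflTransGen (RotStep H M v) ⟨w, p⟩ a →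
      a.2.IsPath ∧ MRespecting M a.2 ∧ a.2.length = p.length ∧
        (∀ x, x ∈ a.2.support ↔ x ∈ p.support) := by
  intro a ha
  induction ha with
  | refl => exact ⟨hp, hpr, rfl, fun _ => Iff.rfl⟩
  | @tail b c hb hstep ih =>
    obtain ⟨hbp, hcp, hbr, hcr, x, p₁, h₁, p₂, h₂, hHxw, hnm, hbeq, hceq⟩ := hstep
    refine ⟨hcp, hcr, ?_, ?_⟩
    · have h1 := ih.2.2.1
      rw [hbeq] at h1
      rw [hceq]
      simp only [Walk.length_append, Walk.length_cons, Walk.length_reverse] at h1 ⊢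
      omega
    · intro t
      have h2 := ih.2.2.2 t
      rw [hbeq] at h2
      rw [hceq]
      simp only [Walk.support_append, Walk.support_cons, List.tail_cons, List.mem_append,
        Walk.support_reverse, List.mem_reverse] at h2 ⊢
      exact h2

lemma rotate_at {V : Type*} [DecidableEq V] {H M : SimpleGraph V} {v u y : V}
    (q : (H ⊔ M).Walk v u) (hq : q.IsPath) (hqr : MRespecting M q)
    (hy : y ∈ q.support) (hyu : y ≠ u) (hadj : H.Adj y u)
    (hnm : ∀ z, s(y, z) ∉ M.edgeSet) :
    ∃ (b : V) (q' : (H ⊔ M).Walk v b),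
      RotStep H M v ⟨u, q⟩ ⟨b, q'⟩ ∧ s(y, b) ∈ q.edges := by
  have hspec := q.take_spec hy
  obtain ⟨b, hc, r', hr⟩ := exists_cons_of_ne' (q.dropUntil y hy) hyu
  rw [hr] at hspec
  have h₂ : (H ⊔ M).Adj y u := (sup_adj H M y u).mpr (Or.inl hadj)
  have hqeq : q = (q.takeUntil y hy).append (Walk.cons hc r') := hspec.symm
  have hq' : ((q.takeUntil y hy).append (Walk.cons hc r')).IsPath := hqeq ▸ hq
  have hqr' : MRespecting M ((q.takeUntil y hy).append (Walk.cons hc r')) := hqeq ▸ hqr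
  refine ⟨b, (q.takeUntil y hy).append (Walk.cons h₂ r'.reverse),
    ⟨hq, rot_isPath h₂ hq', hqr, rot_mresp h₂ (hnm b) hqr',
      y, q.takeUntil y hy, hc, r', h₂, hadj, hnm b, hqeq, rfl⟩, ?_⟩
  rw [hqeq, Walk.edges_append, Walk.edges_cons]
  simp

lemma path_nbrs {V : Type*} {G : SimpleGraph V} {a c : V} (q : G.Walk a c) (hq : q.IsPath)
    (x : V) :
    (∃ z₁ z₂ : V, ∀ z, s(x, z) ∈ q.edges → z = z₁ ∨ z = z₂) ∧
    (x = a → ∃ z₁ : V, ∀ z, s(x, z) ∈ q.edges → z = z₁) ∧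
    (x = c → ∃ z₁ : V, ∀ z, s(x, z) ∈ q.edges → z = z₁) := by
  induction q with
  | nil => exact ⟨⟨x, x, by simp⟩, fun _ => ⟨x, by simp⟩, fun _ => ⟨x, by simp⟩⟩
  | @cons u u' c h r ih =>
    rw [Walk.cons_isPath_iff] at hq
    obtain ⟨hr, hus⟩ := hq
    obtain ⟨ihA, ihS, ihE⟩ := ih hr
    -- helper: the case x = u
    have hcase_u : x = u → ∀ z, s(x, z) ∈ (Walk.cons h r).edges → z = u' := by
      rintro rfl z hz
      rw [Walk.edges_cons, List.mem_cons] at hz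
      rcases hz with hz | hz
      · rcases Sym2.eq_iff.mp hz with ⟨-, rfl⟩ | ⟨h1, rfl⟩
        · rfl
        · exact absurd h1 h.ne
      · exact absurd (Walk.fst_mem_support_of_mem_edges r hz) hus
    refine ⟨?_, fun hx => ⟨u', hcase_u hx⟩, ?_⟩
    · by_cases hxu : x = u
      · exact ⟨u', u', fun z hz => Or.inl (hcase_u hxu z hz)⟩
      · by_cases hxu' : x = u'
        · obtain ⟨z₁, hz₁⟩ := ihS hxu'
          refine ⟨u, z₁, fun z hz => ?_⟩
          rw [Walk.edges_cons, List.mem_cons] at hz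
          rcases hz with hz | hz
          · rcases Sym2.eq_iff.mp hz with ⟨h1, -⟩ | ⟨-, rfl⟩
            · exact absurd h1 hxu
            · exact Or.inl rfl
          · exact Or.inr (hz₁ z hz)
        · obtain ⟨z₁, z₂, hz⟩ := ihA
          refine ⟨z₁, z₂, fun z hmem => ?_⟩
          rw [Walk.edges_cons, List.mem_cons] at hmem
          rcases hmem with hmem | hmem
          · rcases Sym2.eq_iff.mp hmem with ⟨h1, -⟩ | ⟨h1, -⟩
            · exact absurd h1 hxu
            · exact absurd h1 hxu'
          · exact hz z hmem
    · intro hxc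
      by_cases hxu : x = u
      · exact ⟨u', hcase_u hxu⟩
      · by_cases hxu' : x = u'
        · have hre : r.edges = [] := path_eq_nil_edges r (hxu' ▸ hxc) hr
          refine ⟨u, fun z hz => ?_⟩
          rw [Walk.edges_cons, List.mem_cons, hre] at hz
          rcases hz with hz | hz
          · rcases Sym2.eq_iff.mp hz with ⟨h1, -⟩ | ⟨-, rfl⟩
            · exact absurd h1 hxu
            · rfl
          · simp at hz
        · obtain ⟨z₁, hz₁⟩ := ihE hxc
          refine ⟨z₁, fun z hz => ?_⟩
          rw [Walk.edges_cons, List.mem_cons] at hz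
          rcases hz with hz | hz
          · rcases Sym2.eq_iff.mp hz with ⟨h1, -⟩ | ⟨h1, -⟩
            · exact absurd h1 hxu
            · exact absurd h1 hxu'
          · exact hz₁ z hz

/-- Let `H` be an `M`-respecting 2-expander, `P` a longest `M`-respecting path in
`H + M` with endpoint `v`, and `U` the set of endpoints obtainable from `P` by
sequences of `M`-respecting rotations with `v` fixed.  Then `N_H(U) ⊆ V(P)` and
`|N_H(U)| ≤ 2|U| − 1 + |V(M) ∩ N_H(U)|`. -/
theorem stmt_19 {V : Type*} [Fintype V] [DecidableEq V] (H M : SimpleGraph V)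
    (hM : ∀ x : V, (M.neighborSet x).Subsingleton)
    (hexp : MRespExpander H M)
    (v w : V) (p : (H ⊔ M).Walk v w) (hp : p.IsPath) (hpr : MRespecting M p)
    (hlong : ∀ (a b : V) (q : (H ⊔ M).Walk a b),
      q.IsPath → MRespecting M q → q.length ≤ p.length)
    (U : Set V)
    (hU : U = {u | ∃ q : (H ⊔ M).Walk v u,
      Relation.ReflTransGen (RotStep H M v) ⟨w, p⟩ ⟨u, q⟩}) :
    ((⋃ x ∈ U, H.neighborSet x) \ U) ⊆ {x | x ∈ p.support} ∧
    (((⋃ x ∈ U, H.neighborSet x) \ U).ncard + 1 ≤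
      2 * U.ncard + (M.support ∩ ((⋃ x ∈ U, H.neighborSet x) \ U)).ncard) := by
  classical
  have hM' : ∀ {y c z : V}, M.Adj y c → M.Adj y z → c = z := fun h1 h2 => hM _ h1 h2
  have hMy : ∀ {e : Sym2 V} {y : V}, e ∈ M.edgeSet → y ∈ e → ∃ c, M.Adj y c ∧ e = s(y, c) := by
    intro e y he hy
    induction e using Sym2.ind with
    | _ u₁ u₂ =>
      rw [Sym2.mem_iff] at hy
      rw [mem_edgeSet] at he
      rcases hy with rfl | rfl
      · exact ⟨u₂, he, rfl⟩
      · exact ⟨u₁, he.symm, Sym2.eq_swap.symm⟩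
  have hmemU : ∀ {u : V}, u ∈ U ↔ ∃ q : (H ⊔ M).Walk v u,
      Relation.ReflTransGen (RotStep H M v) ⟨w, p⟩ ⟨u, q⟩ := by
    intro u; rw [hU]; rfl
  have hwU : w ∈ U := hmemU.mpr ⟨p, Relation.ReflTransGen.refl⟩
  set W := (⋃ x ∈ U, H.neighborSet x) \ U with hWdef
  -- Part 1 : W ⊆ support p
  have part1 : W ⊆ {x | x ∈ p.support} := by
    rintro y ⟨hy1, hy2⟩
    simp only [Set.mem_iUnion, mem_neighborSet] at hy1
    obtain ⟨x, hxU, hxy⟩ := hy1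
    obtain ⟨q, hqreach⟩ := hmemU.mp hxU
    obtain ⟨hqp, hqr, hqlen, hqsup⟩ := reach_inv hp hpr _ hqreach
    have hqlen' : q.length = p.length := hqlen
    by_contra hyp
    have hyq : y ∉ q.support := fun hh => hyp ((hqsup y).mp hh)
    have hxyM : (H ⊔ M).Adj x y := (sup_adj H M x y).mpr (Or.inl hxy)
    by_cases hyM : y ∈ M.support
    · obtain ⟨z, hz⟩ := (M.mem_support).mp hyM
      by_cases hzq : z ∈ q.support
      · rcases hqr s(y, z) ((M.mem_edgeSet).mpr hz) with hh | hh
        · exact hyq (Walk.fst_mem_support_of_mem_edges q hh)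
        · exact hh z (by simp) hzq
      · have hyz : (H ⊔ M).Adj y z := (sup_adj H M y z).mpr (Or.inr hz)
        have hq2p : (q.append (Walk.cons hxyM (Walk.cons hyz Walk.nil))).IsPath := by
          rw [Walk.isPath_def, Walk.support_append]
          simp only [Walk.support_cons, Walk.support_nil, List.tail_cons]
          rw [List.nodup_append]
          refine ⟨(Walk.isPath_def q).mp hqp, ?_, ?_⟩
          · simp [hz.ne]
          · intro t htq t' htl heq
            subst heq
            simp only [List.mem_cons, List.not_mem_nil, or_false, List.mem_singleton] at htl
            rcases htl with rfl | rfl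
            · exact hyq htq
            · exact hzq htq
        have hq2r : MRespecting M (q.append (Walk.cons hxyM (Walk.cons hyz Walk.nil))) := by
          intro e he
          by_cases hez : e = s(y, z)
          · left
            rw [Walk.edges_append]
            subst hez
            simp [Walk.edges_cons]
          · rcases hqr e he with hh | hh
            · left
              rw [Walk.edges_append]
              exact List.mem_append_left _ hh
            · right
              intro t ht
              rw [Walk.support_append]
              simp only [Walk.support_cons, Walk.support_nil, List.tail_cons, List.mem_append,
                List.mem_cons, List.mem_singleton, List.not_mem_nil, or_false]
              rintro (htq | rfl | rfl)
              · exact hh t ht htq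
              · obtain ⟨cc, hcc, rfl⟩ := hMy he ht
                exact hez (by rw [hM' hcc hz])
              · obtain ⟨cc, hcc, hce⟩ := hMy he ht
                have hccy : cc = y := hM' hcc hz.symm
                subst hccy
                exact hez (hce.trans Sym2.eq_swap)
        have hle := hlong v z _ hq2p hq2r
        rw [Walk.length_append] at hle
        simp only [Walk.length_cons, Walk.length_nil] at hle
        omega
    · have hq1p : (q.append (Walk.cons hxyM Walk.nil)).IsPath := by
        rw [Walk.isPath_def, Walk.support_append]
        simp only [Walk.support_cons, Walk.support_nil, List.tail_cons]
        rw [List.nodup_append]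
        refine ⟨(Walk.isPath_def q).mp hqp, by simp, ?_⟩
        intro t htq t' htl heq
        subst heq
        simp only [List.mem_singleton] at htl
        subst htl
        exact hyq htq
      have hq1r : MRespecting M (q.append (Walk.cons hxyM Walk.nil)) := by
        intro e he
        rcases hqr e he with hh | hh
        · left
          rw [Walk.edges_append]
          exact List.mem_append_left _ hh
        · right
          intro t ht
          rw [Walk.support_append]
          simp only [Walk.support_cons, Walk.support_nil, List.tail_cons, List.mem_append,
            List.mem_singleton]
          rintro (htq | rfl)
          · exact hh t ht htq
          · obtain ⟨cc, hcc, rfl⟩ := hMy he ht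
            exact hyM ((M.mem_support).mpr ⟨cc, hcc⟩)
      have hle := hlong v y _ hq1p hq1r
      rw [Walk.length_append] at hle
      simp only [Walk.length_cons, Walk.length_nil] at hle
      omega
  -- Claim C : unmatched neighbours are p-adjacent to U
  have claimC : ∀ y, y ∈ W → y ∉ M.support → ∃ x ∈ U, s(x, y) ∈ p.edges := by
    intro y hyW hyM
    obtain ⟨hy1, hy2⟩ := hyW
    by_contra H0'
    push_neg at H0'
    have H0 : ∀ z ∈ U, s(y, z) ∉ p.edges := fun z hz hmem => H0' z hz (Sym2.eq_swap ▸ hmem)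
    have key : ∀ a : Σ u : V, (H ⊔ M).Walk v u,
        Relation.ReflTransGen (RotStep H M v) ⟨w, p⟩ a →
        ∀ z, s(y, z) ∈ a.2.edges → s(y, z) ∈ p.edges := by
      intro a ha
      induction ha with
      | refl => exact fun z hz => hz
      | @tail b c hb hstep ih =>
        intro z hz
        have hcreach : Relation.ReflTransGen (RotStep H M v) ⟨w, p⟩ c := hb.tail hstep
        obtain ⟨hbp, hcp, hbr, hcr, x, p₁, h₁, p₂, h₂, hHxw, hnm, hbeq, hceq⟩ := hstep
        have hbU : b.1 ∈ U := hmemU.mpr ⟨b.2, hb⟩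
        have hcU : c.1 ∈ U := hmemU.mpr ⟨c.2, hcreach⟩
        rw [hceq, Walk.edges_append, Walk.edges_cons] at hz
        rw [List.mem_append, List.mem_cons] at hz
        rcases hz with hz | hz | hz
        · apply ih
          rw [hbeq, Walk.edges_append]
          exact List.mem_append_left _ hz
        · rcases Sym2.eq_iff.mp hz with ⟨rfl, rfl⟩ | ⟨hyb, rfl⟩
          · have hed : s(y, c.1) ∈ b.2.edges := by
              rw [hbeq, Walk.edges_append, Walk.edges_cons]
              exact List.mem_append_right _ List.mem_cons_self
            exact absurd (ih c.1 hed) (H0 c.1 hcU)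
          · exact absurd hbU (hyb ▸ hy2)
        · apply ih
          rw [hbeq, Walk.edges_append, Walk.edges_cons]
          rw [Walk.edges_reverse, List.mem_reverse] at hz
          exact List.mem_append_right _ (List.mem_cons_of_mem _ hz)
    simp only [Set.mem_iUnion, mem_neighborSet] at hy1
    obtain ⟨x, hxU, hxy⟩ := hy1
    obtain ⟨q, hqreach⟩ := hmemU.mp hxU
    obtain ⟨hqp, hqr, hqlen, hqsup⟩ := reach_inv hp hpr _ hqreach
    have hyP : y ∈ p.support := part1 ⟨by
      simp only [Set.mem_iUnion, mem_neighborSet]; exact ⟨x, hxU, hxy⟩, hy2⟩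
    have hyq : y ∈ q.support := (hqsup y).mpr hyP
    have hyx : y ≠ x := fun hh => hy2 (hh ▸ hxU)
    have hnm : ∀ z, s(y, z) ∉ M.edgeSet := fun z hz =>
      hyM ((M.mem_support).mpr ⟨z, (M.mem_edgeSet).mp hz⟩)
    obtain ⟨b, q', hstep, hedge⟩ := rotate_at q hqp hqr hyq hyx hxy.symm hnm
    have hbU : b ∈ U := hmemU.mpr ⟨q', hqreach.tail hstep⟩
    exact H0 b hbU (key ⟨x, q⟩ hqreach b hedge)
  -- Counting
  refine ⟨part1, ?_⟩
  set A : V → Finset V := fun x => Finset.univ.filter (fun z => s(x, z) ∈ p.edges) with hA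
  have hAcard : ∀ x, (A x).card ≤ 2 := by
    intro x
    obtain ⟨z₁, z₂, hz⟩ := (path_nbrs p hp x).1
    have hsub : A x ⊆ {z₁, z₂} := by
      intro z hzz
      simp only [hA, Finset.mem_filter, Finset.mem_univ, true_and] at hzz
      rcases hz z hzz with rfl | rfl <;> simp
    calc (A x).card ≤ ({z₁, z₂} : Finset V).card := Finset.card_le_card hsub
      _ ≤ 2 := (Finset.card_insert_le _ _).trans (by simp)
  have hAw : (A w).card ≤ 1 := by
    obtain ⟨z₁, hz⟩ := (path_nbrs p hp w).2.2 rfl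
    have hsub : A w ⊆ {z₁} := by
      intro z hzz
      simp only [hA, Finset.mem_filter, Finset.mem_univ, true_and] at hzz
      simp [hz z hzz]
    calc (A w).card ≤ ({z₁} : Finset V).card := Finset.card_le_card hsub
      _ = 1 := Finset.card_singleton _
  have hUfin : U.Finite := Set.toFinite U
  set F := hUfin.toFinset with hF
  have hwF : w ∈ F := by rw [hF, Set.Finite.mem_toFinset]; exact hwU
  have hsubW : W \ M.support ⊆ ↑(F.biUnion A) := by
    intro y hy
    obtain ⟨x, hxU, hedge⟩ := claimC y hy.1 hy.2
    simp only [Finset.coe_biUnion, Set.mem_iUnion, Finset.mem_coe]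
    refine ⟨x, ?_, ?_⟩
    · rw [hF, Set.Finite.mem_toFinset]; exact hxU
    · simp [hA, hedge]
  have h1 : (W \ M.support).ncard ≤ (F.biUnion A).card := by
    rw [← Set.ncard_coe_finset]
    exact Set.ncard_le_ncard hsubW (Set.toFinite _)
  have h2 : (F.biUnion A).card ≤ ∑ x ∈ F, (A x).card := Finset.card_biUnion_le
  have h3 : ∑ x ∈ F, (A x).card ≤ 2 * (F.card - 1) + 1 := by
    rw [← Finset.sum_erase_add F _ hwF]
    have hbd := Finset.sum_le_card_nsmul (F.erase w) (fun x => (A x).card) 2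
      (fun x _ => hAcard x)
    rw [Finset.card_erase_of_mem hwF, smul_eq_mul] at hbd
    omega
  have hFcard : F.card = U.ncard := (Set.ncard_eq_toFinset_card U hUfin).symm
  have hUpos : 0 < U.ncard := (Set.ncard_pos hUfin).mpr ⟨w, hwU⟩
  have hdisj : Disjoint (W \ M.support) (W ∩ M.support) :=
    Set.disjoint_left.mpr fun t ht hti => ht.2 hti.2
  have hsplit : W.ncard = (W \ M.support).ncard + (W ∩ M.support).ncard := by
    rw [← Set.ncard_union_eq hdisj (Set.toFinite _) (Set.toFinite _), Set.diff_union_inter]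
  rw [Set.inter_comm]
  omega
end
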